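/- arXiv:2112.13886 — 5 statements merged into one kernel-verified Lean document; each statement's English description precedes it below -/
import Mathlib

section
/- If d = 5 divides p-1, then (4p+1)²/125 ≤ V_4(p) ≤ (52p² + 48p^{3/2} + 24p + 1)/125. -/
open Finset

lemma pow_eq_pow_of_mod_eq' {M : Type*} [Monoid M] {z : M} {N : ℕ} (h1 : z ^ N = 1)
    {a b : ℕ} (h : a % N = b % N) : z ^ a = z ^ b := by
  conv_lhs => rw [← Nat.div_add_mod a N]
  conv_rhs => rw [← Nat.div_add_mod b N]
  rw [pow_add, pow_add, pow_mul, pow_mul, h1, one_pow, one_pow, h]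

lemma sum_zmod' {N : ℕ} [NeZero N] (f : ZMod N → ℂ) :
    ∑ x : ZMod N, f x = ∑ i ∈ range N, f (i : ZMod N) := by
  rw [Finset.sum_nbij' (i := fun (x : ZMod N) => x.val) (j := fun i => (i : ZMod N))]
  · intro x _; simp [ZMod.val_lt]
  · intro i hi; simp
  · intro x _; simp [ZMod.natCast_val, ZMod.cast_id]
  · intro i hi; simp [ZMod.val_cast_of_lt (Finset.mem_range.mp hi)]
  · intro x _; simp [ZMod.natCast_val, ZMod.cast_id]

lemma omega_orth' {ω : ℂ} (hω : IsPrimitiveRoot ω 5) (r : ℕ) :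
    ∑ a ∈ range 5, (ω ^ r) ^ a = if r % 5 = 0 then 5 else 0 := by
  split_ifs with h
  · have h1 : ω ^ r = 1 := by
      have := pow_eq_pow_of_mod_eq' (z := ω) (N := 5) hω.pow_eq_one (a := r) (b := 0) (by simpa using h)
      simpa using this
    simp [h1]
  · have hne : ω ^ r ≠ 1 := by
      intro hc
      exact h (Nat.mod_eq_zero_of_dvd ((hω.pow_eq_one_iff_dvd r).mp hc))
    rw [geom_sum_eq hne]
    have : (ω ^ r) ^ 5 = 1 := by
      rw [← pow_mul, mul_comm, pow_mul, hω.pow_eq_one, one_pow]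
    simp [this]

set_option maxHeartbeats 1000000 in
lemma quad_eval'' (q : ℝ) :
    ∑ m ∈ range 5, ∑ m' ∈ range 5, ∑ n ∈ range 5, ∑ n' ∈ range 5,
      (if (4 * m + 16 * n + (4 * m' + 16 * n')) % 5 = 0 then (5 : ℝ) else 0) *
        ((if m = 0 then 1 else q) * (if n = 0 then 1 else q) *
         ((if m' = 0 then 1 else q) * (if n' = 0 then 1 else q)))
    = 5 * (52 * q ^ 4 + 48 * q ^ 3 + 24 * q ^ 2 + 1) := by
  simp only [Finset.sum_range_succ, Finset.sum_range_zero]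
  norm_num
  ring

set_option maxHeartbeats 4000000 in
/-- If `d = 5` divides `p-1`, then
`(4p+1)²/125 ≤ V₄(p) ≤ (52p² + 48p^{3/2} + 24p + 1)/125`. -/
theorem gaussian_periods_V4_d5_bounds (p k : ℕ) (hp : p.Prime) (hodd : Odd p)
    (hk : p - 1 = 5 * k)
    (g : (ZMod p)ˣ) (hg : ∀ x : (ZMod p)ˣ, x ∈ Subgroup.zpowers g)
    (η : ℕ → ℂ)
    (hη : ∀ a : ℕ, η a = ∑ j ∈ Finset.range k,
      Complex.exp (2 * (Real.pi : ℂ) * Complex.I *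
        (((g ^ (5 * j + a) : (ZMod p)ˣ) : ZMod p).val : ℂ) / (p : ℂ))) :
    (4 * (p : ℝ) + 1) ^ 2 / 125
      ≤ ∑ s ∈ Finset.range 5, ‖η s‖ ^ 4 ∧
    ∑ s ∈ Finset.range 5, ‖η s‖ ^ 4
      ≤ (52 * (p : ℝ) ^ 2 + 48 * (p : ℝ) ^ ((3 : ℝ) / 2) + 24 * p + 1) / 125 := by
  classical
  haveI hfact : Fact p.Prime := ⟨hp⟩
  have hp2 : 2 ≤ p := hp.two_le
  have hp3 : 3 ≤ p := by rcases hodd with ⟨t, ht⟩; omega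
  set n := p - 1 with hn
  have hn5 : n = 5 * k := hk
  have hpn : p = n + 1 := by omega
  have hk1 : 1 ≤ k := by omega
  -- roots of unity
  set ζ : ℂ := Complex.exp (2 * Real.pi * Complex.I / p) with hζdef
  set ω : ℂ := Complex.exp (2 * Real.pi * Complex.I / 5) with hωdef
  have hζprim : IsPrimitiveRoot ζ p := Complex.isPrimitiveRoot_exp p (by omega)
  have hωprim : IsPrimitiveRoot ω 5 := Complex.isPrimitiveRoot_exp 5 (by norm_num)
  have hζp : ζ ^ p = 1 := hζprim.pow_eq_one
  have hω5 : ω ^ 5 = 1 := hωprim.pow_eq_one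
  -- additive character e
  set e : ZMod p → ℂ := fun x => ζ ^ x.val with hedef
  have he_add : ∀ x y : ZMod p, e (x + y) = e x * e y := by
    intro x y
    show ζ ^ (x + y).val = ζ ^ x.val * ζ ^ y.val
    rw [← pow_add]
    exact pow_eq_pow_of_mod_eq' hζp (by rw [ZMod.val_add]; simp [Nat.mod_mod])
  have he0 : e 0 = 1 := by show ζ ^ (0 : ZMod p).val = 1; simp
  have habsζ : ‖ζ‖ = 1 := by
    rw [hζdef]
    have : 2 * (Real.pi : ℂ) * Complex.I / p = ((2 * Real.pi / p : ℝ) : ℂ) * Complex.I := by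
      push_cast; ring
    rw [this, Complex.norm_exp_ofReal_mul_I]
  have habs_e : ∀ x : ZMod p, ‖e x‖ = 1 := by
    intro x; show ‖ζ ^ x.val‖ = 1
    rw [norm_pow, habsζ, one_pow]
  have hconj_e : ∀ x : ZMod p, (starRingEnd ℂ) (e x) = e (-x) := by
    intro x
    have h2 : (e x)⁻¹ = (starRingEnd ℂ) (e x) :=
      Complex.inv_eq_conj (by rw [habs_e])
    have h3 : e (-x) = (e x)⁻¹ :=
      eq_inv_of_mul_eq_one_left (by rw [← he_add]; simp [he0])
    rw [← h2, h3]
  have hsum_e : ∑ x : ZMod p, e x = 0 := by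
    rw [sum_zmod']
    have hc : ∀ i ∈ range p, e (i : ZMod p) = ζ ^ i := by
      intro i hi
      show ζ ^ ((i : ZMod p)).val = ζ ^ i
      exact pow_eq_pow_of_mod_eq' hζp (by rw [ZMod.val_natCast]; simp [Nat.mod_mod])
    rw [Finset.sum_congr rfl hc, geom_sum_eq (hζprim.ne_one (by omega)), hζp]
    simp

  -- order of g
  have horder : orderOf g = n := by
    rw [orderOf_eq_card_of_forall_mem_zpowers hg, Nat.card_eq_fintype_card, ZMod.card_units]
  have hgunit_n : g ^ n = 1 := by rw [← horder]; exact pow_orderOf_eq_one g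
  have hgn : ((g : ZMod p)) ^ n = 1 := by
    rw [← Units.val_pow_eq_pow_val, hgunit_n, Units.val_one]
  have hgpow_ne : ∀ t : ℕ, ((g : ZMod p)) ^ t ≠ 0 := by
    intro t
    rw [← Units.val_pow_eq_pow_val]
    exact Units.ne_zero _
  -- key shifted sum
  have hsum_shift : ∀ c : ZMod p, c ≠ 0 →
      ∑ t ∈ range n, e ((g : ZMod p) ^ t * c) = -1 := by
    intro c hc
    have hbij : ∑ t ∈ range n, e ((g : ZMod p) ^ t * c)
        = ∑ x ∈ (univ : Finset (ZMod p)) \ {0}, e x := by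
      apply Finset.sum_nbij (i := fun t => (g : ZMod p) ^ t * c)
      · intro t _
        simp only [Finset.mem_sdiff, Finset.mem_univ, true_and, Finset.mem_singleton]
        exact mul_ne_zero (hgpow_ne t) hc
      · intro t1 h1 t2 h2 hEq
        simp only [Finset.coe_range, Set.mem_Iio] at h1 h2
        have : (g : ZMod p) ^ t1 = (g : ZMod p) ^ t2 := mul_right_cancel₀ hc hEq
        have hu : g ^ t1 = g ^ t2 := by
          apply Units.ext
          rwa [Units.val_pow_eq_pow_val, Units.val_pow_eq_pow_val]
        exact pow_injOn_Iio_orderOf (by simpa [horder] using h1) (by simpa [horder] using h2) hu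
      · intro x hx
        simp only [Finset.coe_sdiff, Set.mem_diff, Finset.coe_univ, Set.mem_univ, true_and,
          Finset.coe_singleton, Set.mem_singleton_iff] at hx
        have hxc : x * c⁻¹ ≠ 0 := by
          apply mul_ne_zero hx
          exact inv_ne_zero hc
        set u : (ZMod p)ˣ := Units.mk0 (x * c⁻¹) hxc with hu
        obtain ⟨m, hm⟩ := (mem_powers_iff_mem_zpowers (x := g) (y := u)).mpr (hg u)
        refine ⟨m % n, ?_, ?_⟩
        · simp only [Finset.coe_range, Set.mem_Iio]
          exact Nat.mod_lt _ (by omega)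
        · have h1 : g ^ (m % n) = g ^ m := pow_eq_pow_of_mod_eq' hgunit_n (by simp [Nat.mod_mod])
          have hm' : g ^ m = u := hm
          have h2 : ((g : ZMod p)) ^ (m % n) = x * c⁻¹ := by
            rw [← Units.val_pow_eq_pow_val, h1, hm', hu, Units.val_mk0]
          show (g : ZMod p) ^ (m % n) * c = x
          rw [h2]
          field_simp
      · intro t _; rfl
    rw [hbij, Finset.sum_sdiff_eq_sub (by simp), hsum_e]
    simp [he0]

  -- Gauss sums
  set A : ℕ → ℂ := fun m => ∑ t ∈ range n, ω ^ (m * t) * e ((g : ZMod p) ^ t) with hAdef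
  have hA0 : A 0 = -1 := by
    show ∑ t ∈ range n, ω ^ (0 * t) * e ((g : ZMod p) ^ t) = -1
    have := hsum_shift 1 one_ne_zero
    simp only [zero_mul, pow_zero, one_mul]
    simpa using this
  have hgs_ne_one : ∀ s : ℕ, 0 < s → s < n → ((g : ZMod p)) ^ s - 1 ≠ 0 := by
    intro s hs1 hs2 hcon
    have h1 : ((g : ZMod p)) ^ s = 1 := by
      have := sub_eq_zero.mp hcon; simpa using this
    have h2 : g ^ s = 1 := by
      apply Units.ext; rw [Units.val_pow_eq_pow_val, h1, Units.val_one]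
    have h3 : orderOf g ∣ s := orderOf_dvd_of_pow_eq_one h2
    rw [horder] at h3
    have := Nat.le_of_dvd hs1 h3
    omega
  have hAA : ∀ m : ℕ, 1 ≤ m → m ≤ 4 → A m * (starRingEnd ℂ) (A m) = (p : ℂ) := by
    intro m hm1 hm4
    set β : ℂ := ω ^ m with hβdef
    have hβ1 : β ≠ 1 := hωprim.pow_ne_one_of_pos_of_lt (by omega) (by omega)
    have hβn : β ^ n = 1 := by
      rw [hβdef, ← pow_mul, show m * n = 5 * (m * k) by rw [hn5]; ring, pow_mul, hω5, one_pow]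
    have habsβ : ‖β‖ = 1 := by
      rw [hβdef, norm_pow]
      have : ‖ω‖ = 1 := by
        rw [hωdef]
        have h5 : 2 * (Real.pi : ℂ) * Complex.I / 5 = ((2 * Real.pi / 5 : ℝ) : ℂ) * Complex.I := by
          push_cast; ring
        rw [h5, Complex.norm_exp_ofReal_mul_I]
      rw [this, one_pow]
    set γ : ℂ := (starRingEnd ℂ) β with hγdef
    have hβγ : β * γ = 1 := by
      rw [hγdef, Complex.mul_conj]
      norm_cast
      rw [← Complex.sq_norm, habsβ, one_pow]
    have hAm : A m = ∑ t ∈ range n, β ^ t * e ((g : ZMod p) ^ t) := by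
      apply Finset.sum_congr rfl
      intro t _
      rw [hβdef, ← pow_mul]
    have hconjAm : (starRingEnd ℂ) (A m) = ∑ t' ∈ range n, γ ^ t' * e (-((g : ZMod p) ^ t')) := by
      rw [hAm, map_sum]
      apply Finset.sum_congr rfl
      intro t _
      rw [map_mul, map_pow, hconj_e]
    rw [hconjAm, hAm, Finset.sum_mul_sum, Finset.sum_comm]
    -- now : ∑ t' ∑ t (β^t e(g^t)) * (γ^t' e(-g^t')) ; reindex t = (t'+s)%n
    have hres : ∀ t' ∈ range n,
        ∑ s ∈ range n, β ^ s * e ((g : ZMod p) ^ t' * ((g : ZMod p) ^ s - 1))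
        = ∑ t ∈ range n, (β ^ t * e ((g : ZMod p) ^ t)) * (γ ^ t' * e (-((g : ZMod p) ^ t'))) := by
      intro t' ht'
      rw [Finset.mem_range] at ht'
      apply Finset.sum_nbij' (i := fun s => (t' + s) % n) (j := fun t => (t + (n - t')) % n)
      · intro s hs; rw [Finset.mem_range] at hs ⊢; exact Nat.mod_lt _ (by omega)
      · intro t ht; rw [Finset.mem_range] at ht ⊢; exact Nat.mod_lt _ (by omega)
      · intro s hs; rw [Finset.mem_range] at hs
        show ((t' + s) % n + (n - t')) % n = s
        rw [Nat.mod_add_mod, show t' + s + (n - t') = s + n by omega, Nat.add_mod_right]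
        exact Nat.mod_eq_of_lt hs
      · intro t ht; rw [Finset.mem_range] at ht
        show (t' + (t + (n - t')) % n) % n = t
        rw [Nat.add_mod_mod, show t' + (t + (n - t')) = t + n by omega, Nat.add_mod_right]
        exact Nat.mod_eq_of_lt ht
      · intro s hs; rw [Finset.mem_range] at hs
        have hb : β ^ ((t' + s) % n) = β ^ (t' + s) :=
          pow_eq_pow_of_mod_eq' hβn (by simp [Nat.mod_mod_of_dvd, Nat.mod_mod])
        have hgp : ((g : ZMod p)) ^ ((t' + s) % n) = ((g : ZMod p)) ^ (t' + s) :=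
          pow_eq_pow_of_mod_eq' hgn (by simp [Nat.mod_mod])
        show β ^ s * e ((g : ZMod p) ^ t' * ((g : ZMod p) ^ s - 1))
            = β ^ ((t' + s) % n) * e ((g : ZMod p) ^ ((t' + s) % n))
              * (γ ^ t' * e (-((g : ZMod p) ^ t')))
        rw [hb, hgp]
        have h2 : β ^ t' * γ ^ t' = 1 := by rw [← mul_pow, hβγ, one_pow]
        have h1 : (g : ZMod p) ^ (t' + s) + -((g : ZMod p) ^ t')
            = (g : ZMod p) ^ t' * ((g : ZMod p) ^ s - 1) := by rw [pow_add]; ring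
        calc β ^ s * e ((g : ZMod p) ^ t' * ((g : ZMod p) ^ s - 1))
            = β ^ s * e ((g : ZMod p) ^ (t' + s) + -((g : ZMod p) ^ t')) := by rw [h1]
          _ = (β ^ t' * γ ^ t') * (β ^ s * (e ((g : ZMod p) ^ (t' + s)) * e (-((g : ZMod p) ^ t')))) := by
              rw [h2, he_add]; ring
          _ = β ^ (t' + s) * e ((g : ZMod p) ^ (t' + s)) * (γ ^ t' * e (-((g : ZMod p) ^ t'))) := by
              rw [pow_add]; ring
    rw [← Finset.sum_congr rfl hres]
    -- swap and evaluate inner sums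
    rw [Finset.sum_comm]
    have hinner : ∀ s ∈ range n,
        ∑ t' ∈ range n, β ^ s * e ((g : ZMod p) ^ t' * ((g : ZMod p) ^ s - 1))
        = β ^ s * (if s = 0 then (n : ℂ) else -1) := by
      intro s hs
      rw [Finset.mem_range] at hs
      rw [← Finset.mul_sum]
      congr 1
      split_ifs with h0
      · subst h0; simp [he0]
      · exact hsum_shift _ (hgs_ne_one s (by omega) hs)
    rw [Finset.sum_congr rfl hinner]
    have h0mem : (0 : ℕ) ∈ range n := by rw [Finset.mem_range]; omega
    rw [Finset.sum_eq_add_sum_sdiff_singleton_of_mem h0mem]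
    have hrest : ∑ s ∈ range n \ {0}, β ^ s * (if s = 0 then (n : ℂ) else -1)
        = -(∑ s ∈ range n, β ^ s) + 1 := by
      have : ∀ s ∈ range n \ {0}, β ^ s * (if s = 0 then (n : ℂ) else -1) = -(β ^ s) := by
        intro s hs
        rw [Finset.mem_sdiff, Finset.mem_singleton] at hs
        rw [if_neg hs.2]; ring
      rw [Finset.sum_congr rfl this, ← Finset.sum_neg_distrib]
      rw [Finset.sum_sdiff_eq_sub (by simpa using h0mem)]
      simp
    rw [hrest]
    rw [geom_sum_eq hβ1, hβn]
    simp only [if_pos rfl, pow_zero, one_mul]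
    rw [hpn]
    push_cast
    ring
  have habsω : ‖ω‖ = 1 := by
    rw [hωdef]
    have h5 : 2 * (Real.pi : ℂ) * Complex.I / 5 = ((2 * Real.pi / 5 : ℝ) : ℂ) * Complex.I := by
      push_cast; ring
    rw [h5, Complex.norm_exp_ofReal_mul_I]
  have hconjω : ∀ b : ℕ, (starRingEnd ℂ) (ω ^ b) = ω ^ (4 * b) := by
    intro b
    have h1 : (starRingEnd ℂ) ω = ω ^ 4 := by
      have hi : ω⁻¹ = (starRingEnd ℂ) ω :=
        Complex.inv_eq_conj (by rw [habsω])
      rw [← hi]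
      apply inv_eq_of_mul_eq_one_left
      rw [← pow_succ]
      exact hω5
    rw [map_pow, h1, ← pow_mul]
  have hη' : ∀ a : ℕ, η a = ∑ j ∈ range k, e ((g : ZMod p) ^ (5 * j + a)) := by
    intro a
    rw [hη a]
    apply Finset.sum_congr rfl
    intro j _
    show _ = ζ ^ (((g : ZMod p) ^ (5 * j + a)).val)
    rw [← Units.val_pow_eq_pow_val, hζdef, ← Complex.exp_nat_mul]
    congr 1
    ring
  have hηA : ∀ a : ℕ, a < 5 → (5 : ℂ) * η a = ∑ m ∈ range 5, ω ^ (4 * a * m) * A m := by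
    intro a ha
    have hR : ∑ m ∈ range 5, ω ^ (4 * a * m) * A m
        = ∑ t ∈ range n, (if (4 * a + t) % 5 = 0 then (5 : ℂ) else 0) * e ((g : ZMod p) ^ t) := by
      show ∑ m ∈ range 5, ω ^ (4 * a * m) * (∑ t ∈ range n, ω ^ (m * t) * e ((g : ZMod p) ^ t)) = _
      have h1 : ∀ m ∈ range 5, ω ^ (4 * a * m) * (∑ t ∈ range n, ω ^ (m * t) * e ((g : ZMod p) ^ t))
          = ∑ t ∈ range n, (ω ^ (4 * a + t)) ^ m * e ((g : ZMod p) ^ t) := by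
        intro m _
        rw [Finset.mul_sum]
        apply Finset.sum_congr rfl
        intro t _
        rw [← mul_assoc, ← pow_add, show 4 * a * m + m * t = (4 * a + t) * m from by ring, pow_mul]
      rw [Finset.sum_congr rfl h1, Finset.sum_comm]
      apply Finset.sum_congr rfl
      intro t _
      rw [← Finset.sum_mul, omega_orth' hωprim (4 * a + t)]
    rw [hR, hη', Finset.mul_sum]
    have h2 : ∑ t ∈ range n, (if (4 * a + t) % 5 = 0 then (5 : ℂ) else 0) * e ((g : ZMod p) ^ t)
        = ∑ t ∈ (range n).filter (fun t => (4 * a + t) % 5 = 0), (5 : ℂ) * e ((g : ZMod p) ^ t) := by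
      rw [Finset.sum_filter]
      apply Finset.sum_congr rfl
      intro t _
      split_ifs <;> simp
    rw [h2]
    apply Finset.sum_nbij' (i := fun j => 5 * j + a) (j := fun t => t / 5)
    · intro j hj
      rw [Finset.mem_range] at hj
      rw [Finset.mem_filter, Finset.mem_range]
      constructor
      · omega
      · omega
    · intro t ht
      rw [Finset.mem_filter, Finset.mem_range] at ht
      rw [Finset.mem_range]
      omega
    · intro j hj; omega
    · intro t ht
      rw [Finset.mem_filter, Finset.mem_range] at ht
      omega
    · intro j _; rfl
  -- D a = |η a|²  (as a complex number)
  set D : ℕ → ℂ := fun a => η a * (starRingEnd ℂ) (η a) with hDdef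
  have hconjηA : ∀ a : ℕ, a < 5 →
      (5 : ℂ) * (starRingEnd ℂ) (η a) = ∑ m ∈ range 5, ω ^ (16 * a * m) * (starRingEnd ℂ) (A m) := by
    intro a ha
    have := congrArg (starRingEnd ℂ) (hηA a ha)
    rw [map_mul, map_sum] at this
    simp only [map_ofNat] at this
    rw [this]
    apply Finset.sum_congr rfl
    intro m _
    rw [map_mul, hconjω, show 4 * (4 * a * m) = 16 * a * m from by ring]
  have hD25 : ∀ a : ℕ, a < 5 → (25 : ℂ) * D a
      = ∑ m ∈ range 5, ∑ nn ∈ range 5,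
          (ω ^ (4 * m + 16 * nn)) ^ a * (A m * (starRingEnd ℂ) (A nn)) := by
    intro a ha
    have h1 : (25 : ℂ) * D a = ((5 : ℂ) * η a) * ((5 : ℂ) * (starRingEnd ℂ) (η a)) := by
      rw [hDdef]; ring
    rw [h1, hηA a ha, hconjηA a ha, Finset.sum_mul_sum]
    apply Finset.sum_congr rfl
    intro m _
    apply Finset.sum_congr rfl
    intro nn _
    rw [show ω ^ (4 * a * m) * A m * (ω ^ (16 * a * nn) * (starRingEnd ℂ) (A nn))
        = (ω ^ (4 * a * m) * ω ^ (16 * a * nn)) * (A m * (starRingEnd ℂ) (A nn)) from by ring,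
      ← pow_add, show 4 * a * m + 16 * a * nn = (4 * m + 16 * nn) * a from by ring, pow_mul]
  have hAAdiag : ∑ m ∈ range 5, A m * (starRingEnd ℂ) (A m) = 1 + 4 * (p : ℂ) := by
    rw [Finset.sum_range_succ, Finset.sum_range_succ, Finset.sum_range_succ,
      Finset.sum_range_succ, Finset.sum_range_succ, Finset.sum_range_zero,
      hA0, hAA 1 (by norm_num) (by norm_num), hAA 2 (by norm_num) (by norm_num),
      hAA 3 (by norm_num) (by norm_num), hAA 4 (by norm_num) (by norm_num)]
    simp only [map_neg, map_one]
    ring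
  have hsumD : ∑ a ∈ range 5, D a = (1 + 4 * (p : ℂ)) / 5 := by
    have h1 : (25 : ℂ) * ∑ a ∈ range 5, D a
        = ∑ a ∈ range 5, ∑ m ∈ range 5, ∑ nn ∈ range 5,
            (ω ^ (4 * m + 16 * nn)) ^ a * (A m * (starRingEnd ℂ) (A nn)) := by
      rw [Finset.mul_sum]
      apply Finset.sum_congr rfl
      intro a ha
      exact hD25 a (Finset.mem_range.mp ha)
    rw [Finset.sum_comm] at h1
    have h2 : ∀ m ∈ range 5,
        ∑ a ∈ range 5, ∑ nn ∈ range 5, (ω ^ (4 * m + 16 * nn)) ^ a * (A m * (starRingEnd ℂ) (A nn))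
        = 5 * (A m * (starRingEnd ℂ) (A m)) := by
      intro m hm
      rw [Finset.mem_range] at hm
      rw [Finset.sum_comm]
      have h3 : ∀ nn ∈ range 5,
          ∑ a ∈ range 5, (ω ^ (4 * m + 16 * nn)) ^ a * (A m * (starRingEnd ℂ) (A nn))
          = if nn = m then 5 * (A m * (starRingEnd ℂ) (A nn)) else 0 := by
        intro nn hnn
        rw [Finset.mem_range] at hnn
        rw [← Finset.sum_mul, omega_orth' hωprim]
        by_cases hm' : nn = m
        · rw [if_pos (by omega), if_pos hm']
        · rw [if_neg (by omega), if_neg hm', zero_mul]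
      rw [Finset.sum_congr rfl h3, Finset.sum_ite_eq' (range 5) m
        (fun nn => 5 * (A m * (starRingEnd ℂ) (A nn))), if_pos (Finset.mem_range.mpr hm)]
    rw [Finset.sum_congr rfl h2, ← Finset.mul_sum, hAAdiag] at h1
    linear_combination h1 / 25
  have hDx : ∀ s : ℕ, D s = ((‖η s‖ ^ 2 : ℝ) : ℂ) := by
    intro s
    rw [hDdef]
    show η s * (starRingEnd ℂ) (η s) = _
    rw [Complex.mul_conj, Complex.sq_norm]
  have hsum2real : ∑ s ∈ range 5, ‖η s‖ ^ 2 = (1 + 4 * (p : ℝ)) / 5 := by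
    apply Complex.ofReal_inj.mp
    have hc : ((∑ s ∈ range 5, ‖η s‖ ^ 2 : ℝ) : ℂ) = ∑ s ∈ range 5, D s := by
      push_cast
      apply Finset.sum_congr rfl
      intro s _
      have h6 := hDx s
      push_cast at h6
      exact h6.symm
    rw [hc, hsumD]
    push_cast
    ring
  -- lower bound
  have hlow : (4 * (p : ℝ) + 1) ^ 2 / 125 ≤ ∑ s ∈ range 5, ‖η s‖ ^ 4 := by
    have key := Finset.sum_mul_sq_le_sq_mul_sq (range 5)
      (fun s => ‖η s‖ ^ 2) (fun _ => (1 : ℝ))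
    simp only [mul_one, one_pow] at key
    rw [hsum2real] at key
    have h4 : ∑ i ∈ range 5, (‖η i‖ ^ 2) ^ 2 = ∑ s ∈ range 5, ‖η s‖ ^ 4 := by
      apply Finset.sum_congr rfl
      intro s _
      ring
    rw [h4] at key
    have h5 : (∑ x ∈ range 5, (1 : ℝ)) = 5 := by simp
    rw [h5] at key
    nlinarith [key]
  -- upper bound
  have habsA : ∀ m : ℕ, m < 5 → ‖A m‖ = if m = 0 then 1 else Real.sqrt p := by
    intro m hm
    by_cases h0 : m = 0
    · rw [if_pos h0, h0, hA0]; simp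
    · rw [if_neg h0]
      have h1 := hAA m (by omega) (by omega)
      rw [Complex.mul_conj] at h1
      have h2 : Complex.normSq (A m) = p := by exact_mod_cast h1
      rw [Complex.norm_def, h2]
  have hconjabsA : ∀ m : ℕ, m < 5 →
      ‖(starRingEnd ℂ) (A m)‖ = if m = 0 then 1 else Real.sqrt p := by
    intro m hm
    rw [Complex.norm_conj]
    exact habsA m hm
  have h625 : ∀ a : ℕ, a < 5 → (625 : ℂ) * (D a) ^ 2
      = ∑ m ∈ range 5, ∑ m' ∈ range 5, ∑ nn ∈ range 5, ∑ nn' ∈ range 5,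
          (ω ^ (4 * m + 16 * nn + (4 * m' + 16 * nn'))) ^ a *
            ((A m * (starRingEnd ℂ) (A nn)) * (A m' * (starRingEnd ℂ) (A nn'))) := by
    intro a ha
    have h1 : (625 : ℂ) * (D a) ^ 2 = ((25 : ℂ) * D a) * ((25 : ℂ) * D a) := by ring
    rw [h1, hD25 a ha, Finset.sum_mul_sum]
    apply Finset.sum_congr rfl
    intro m _
    apply Finset.sum_congr rfl
    intro m' _
    rw [Finset.sum_mul_sum]
    apply Finset.sum_congr rfl
    intro nn _
    apply Finset.sum_congr rfl
    intro nn' _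
    rw [show (ω ^ (4 * m + 16 * nn)) ^ a * (A m * (starRingEnd ℂ) (A nn)) *
        ((ω ^ (4 * m' + 16 * nn')) ^ a * (A m' * (starRingEnd ℂ) (A nn')))
        = ((ω ^ (4 * m + 16 * nn)) ^ a * (ω ^ (4 * m' + 16 * nn')) ^ a) *
          ((A m * (starRingEnd ℂ) (A nn)) * (A m' * (starRingEnd ℂ) (A nn'))) from by ring,
      ← mul_pow, ← pow_add]
  have hbig : (625 : ℂ) * ∑ a ∈ range 5, (D a) ^ 2
      = ∑ m ∈ range 5, ∑ m' ∈ range 5, ∑ nn ∈ range 5, ∑ nn' ∈ range 5,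
          (if (4 * m + 16 * nn + (4 * m' + 16 * nn')) % 5 = 0 then (5 : ℂ) else 0) *
            ((A m * (starRingEnd ℂ) (A nn)) * (A m' * (starRingEnd ℂ) (A nn'))) := by
    rw [Finset.mul_sum]
    rw [Finset.sum_congr rfl (fun a ha => h625 a (Finset.mem_range.mp ha))]
    rw [Finset.sum_comm]
    apply Finset.sum_congr rfl
    intro m _
    rw [Finset.sum_comm]
    apply Finset.sum_congr rfl
    intro m' _
    rw [Finset.sum_comm]
    apply Finset.sum_congr rfl
    intro nn _
    rw [Finset.sum_comm]
    apply Finset.sum_congr rfl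
    intro nn' _
    rw [← Finset.sum_mul, omega_orth' hωprim]
  have hV4c : ((∑ s ∈ range 5, ‖η s‖ ^ 4 : ℝ) : ℂ) = ∑ a ∈ range 5, (D a) ^ 2 := by
    push_cast
    apply Finset.sum_congr rfl
    intro s _
    have h6 : (D s) ^ 2 = ((‖η s‖ : ℂ)) ^ 4 := by
      rw [hDx s]; push_cast; ring
    exact h6.symm
  have hV4nonneg : (0 : ℝ) ≤ ∑ s ∈ range 5, ‖η s‖ ^ 4 := by positivity
  have habs625 : (625 : ℝ) * ∑ s ∈ range 5, ‖η s‖ ^ 4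
      = ‖(625 : ℂ) * ∑ a ∈ range 5, (D a) ^ 2‖ := by
    rw [← hV4c, show (625 : ℂ) * ((∑ s ∈ range 5, ‖η s‖ ^ 4 : ℝ) : ℂ)
      = (((625 : ℝ) * ∑ s ∈ range 5, ‖η s‖ ^ 4 : ℝ) : ℂ) from by push_cast; ring,
      Complex.norm_real, Real.norm_eq_abs, abs_of_nonneg (by positivity)]
  have hb1 : ‖(625 : ℂ) * ∑ a ∈ range 5, (D a) ^ 2‖
      ≤ ∑ m ∈ range 5, ∑ m' ∈ range 5, ∑ nn ∈ range 5, ∑ nn' ∈ range 5,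
          (if (4 * m + 16 * nn + (4 * m' + 16 * nn')) % 5 = 0 then (5 : ℝ) else 0) *
            ((if m = 0 then 1 else Real.sqrt p) * (if nn = 0 then 1 else Real.sqrt p) *
             ((if m' = 0 then 1 else Real.sqrt p) * (if nn' = 0 then 1 else Real.sqrt p))) := by
    rw [hbig]
    refine (norm_sum_le _ _).trans (Finset.sum_le_sum ?_)
    intro m hm
    refine (norm_sum_le _ _).trans (Finset.sum_le_sum ?_)
    intro m' hm'
    refine (norm_sum_le _ _).trans (Finset.sum_le_sum ?_)
    intro nn hnn
    refine (norm_sum_le _ _).trans (Finset.sum_le_sum ?_)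
    intro nn' hnn'
    rw [Finset.mem_range] at hm hm' hnn hnn'
    apply le_of_eq
    rw [norm_mul, norm_mul, norm_mul, norm_mul]
    rw [habsA m hm, habsA m' hm', hconjabsA nn hnn, hconjabsA nn' hnn']
    congr 1
    split_ifs <;> simp
  have hq0 : (0 : ℝ) ≤ (p : ℝ) := by positivity
  have hq2 : Real.sqrt p ^ 2 = (p : ℝ) := Real.sq_sqrt hq0
  have hq4 : Real.sqrt p ^ 4 = (p : ℝ) ^ 2 := by
    rw [show (4 : ℕ) = 2 * 2 from rfl, pow_mul, hq2]
  have hq3 : Real.sqrt p ^ 3 = (p : ℝ) ^ ((3 : ℝ) / 2) := by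
    rw [Real.sqrt_eq_rpow, ← Real.rpow_natCast ((p : ℝ) ^ ((1 : ℝ) / 2)) 3,
      ← Real.rpow_mul hq0]
    norm_num
  have heval := quad_eval'' (Real.sqrt p)
  rw [hq2, hq3, hq4] at heval
  have hupper : ∑ s ∈ range 5, ‖η s‖ ^ 4
      ≤ (52 * (p : ℝ) ^ 2 + 48 * (p : ℝ) ^ ((3 : ℝ) / 2) + 24 * p + 1) / 125 := by
    have h7 := habs625.le.trans (hb1.trans heval.le)
    linarith
  exact ⟨hlow, hupper⟩
end

section
/- If d divides p-1, then V_4(p) = p·(p-1)/d + p·Σ_{l=0}^{d-1} c_{0,l,0}² − ((p-1)/d)³, where c_{0,l,0} is the number of pairs (a,b) ∈ Γ × g^l Γ with a + b = 1. -/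
set_option linter.unusedSectionVars false
set_option maxHeartbeats 1000000

open Finset Subgroup


namespace GPV4

variable {G : Type*} [CommGroup G] [Fintype G] [DecidableEq G]

/-- a discrete logarithm w.r.t. a generator -/
noncomputable def dlog (g : G) (hg : ∀ x : G, x ∈ Subgroup.zpowers g) (x : G) : ℕ :=
  Classical.choose (((isOfFinOrder_of_finite g).mem_powers_iff_mem_zpowers).2 (hg x))

lemma pow_dlog (g : G) (hg : ∀ x : G, x ∈ Subgroup.zpowers g) (x : G) :
    g ^ dlog g hg x = x :=
  Classical.choose_spec (((isOfFinOrder_of_finite g).mem_powers_iff_mem_zpowers).2 (hg x))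

/-- index of the coset of `x` w.r.t. `⟨g^d⟩` -/
noncomputable def ind (g : G) (hg : ∀ x : G, x ∈ Subgroup.zpowers g) (d : ℕ) (x : G) : ℕ :=
  dlog g hg x % d

/-- the `⟨g^d⟩`-component of `x` -/
noncomputable def cofac (g : G) (hg : ∀ x : G, x ∈ Subgroup.zpowers g) (d : ℕ) (x : G) : G :=
  (g ^ d) ^ (dlog g hg x / d)

lemma ind_lt (g : G) (hg : ∀ x : G, x ∈ Subgroup.zpowers g) {d : ℕ} (hd : 0 < d) (x : G) :
    ind g hg d x < d := Nat.mod_lt _ hd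

lemma cofac_mem (g : G) (hg : ∀ x : G, x ∈ Subgroup.zpowers g) (d : ℕ) (x : G) :
    cofac g hg d x ∈ Subgroup.zpowers (g ^ d) := npow_mem_zpowers _ _

lemma ind_cofac_spec (g : G) (hg : ∀ x : G, x ∈ Subgroup.zpowers g) (d : ℕ) (x : G) :
    g ^ (ind g hg d x) * cofac g hg d x = x := by
  rw [ind, cofac, ← pow_mul, ← pow_add, Nat.mod_add_div, pow_dlog]

lemma mem_zpowers_pow_iff_exists {g : G} {d : ℕ} {y : G} :
    y ∈ Subgroup.zpowers (g ^ d) ↔ ∃ n : ℕ, ((g ^ d) ^ n = y) := by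
  rw [← (isOfFinOrder_of_finite (g^d)).mem_powers_iff_mem_zpowers]
  exact ⟨fun ⟨n, hn⟩ => ⟨n, hn⟩, fun ⟨n, hn⟩ => ⟨n, hn⟩⟩

/-- uniqueness of the coset decomposition -/
lemma decomp_unique (g : G) {d k : ℕ} (hd : 0 < d)
    (horder : orderOf g = d * k)
    {l₁ l₂ : ℕ} (h₁ : l₁ < d) (h₂ : l₂ < d) {y₁ y₂ : G}
    (hy₁ : y₁ ∈ Subgroup.zpowers (g ^ d)) (hy₂ : y₂ ∈ Subgroup.zpowers (g ^ d))
    (heq : g ^ l₁ * y₁ = g ^ l₂ * y₂) : l₁ = l₂ ∧ y₁ = y₂ := by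
  obtain ⟨m₁, rfl⟩ := mem_zpowers_pow_iff_exists.1 hy₁
  obtain ⟨m₂, rfl⟩ := mem_zpowers_pow_iff_exists.1 hy₂
  rw [← pow_mul, ← pow_add, ← pow_mul, ← pow_add] at heq
  have hmod : l₁ + d * m₁ ≡ l₂ + d * m₂ [MOD d * k] := by
    rw [← horder]; exact pow_eq_pow_iff_modEq.1 heq
  have hmodd : l₁ ≡ l₂ [MOD d] := by
    have := hmod.of_dvd (Dvd.intro k rfl)
    calc l₁ ≡ l₁ + d * m₁ [MOD d] := (Nat.modEq_iff_dvd' (Nat.le_add_right _ _)).2 ⟨m₁, by omega⟩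
    _ ≡ l₂ + d * m₂ [MOD d] := this
    _ ≡ l₂ [MOD d] := ((Nat.modEq_iff_dvd' (Nat.le_add_right _ _)).2 ⟨m₂, by omega⟩).symm
  have hl : l₁ = l₂ := by
    have := hmodd
    rwa [Nat.ModEq, Nat.mod_eq_of_lt h₁, Nat.mod_eq_of_lt h₂] at this
  subst hl
  refine ⟨rfl, ?_⟩
  have heq' : g ^ l₁ * (g ^ d) ^ m₁ = g ^ l₁ * (g ^ d) ^ m₂ := by
    rw [← pow_mul, ← pow_add, ← pow_mul, ← pow_add]; exact heq
  exact mul_left_cancel heq'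

lemma ind_eq (g : G) (hg : ∀ x : G, x ∈ Subgroup.zpowers g) {d k : ℕ} (hd : 0 < d)
    (horder : orderOf g = d * k) {l : ℕ} (hl : l < d) {y : G}
    (hy : y ∈ Subgroup.zpowers (g ^ d)) :
    ind g hg d (g ^ l * y) = l := by
  refine (decomp_unique g hd horder (ind_lt g hg hd _) hl
    (cofac_mem g hg d _) hy (by rw [ind_cofac_spec])).1

/-- the unit `1 - u`, when it exists -/
noncomputable def mkb {p : ℕ} [Fact p.Prime] (u : (ZMod p)ˣ) : (ZMod p)ˣ :=
  if h : (1 - (u : ZMod p)) = 0 then 1 else Units.mk0 _ h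

lemma mkb_coe {p : ℕ} [Fact p.Prime] {u : (ZMod p)ˣ} (h : (u : ZMod p) ≠ 1) :
    ((mkb u : (ZMod p)ˣ) : ZMod p) = 1 - (u : ZMod p) := by
  rw [mkb, dif_neg (by rw [sub_eq_zero]; exact fun hh => h hh.symm), Units.val_mk0]

lemma coe_ne_one_of_sum {p : ℕ} [Fact p.Prime] {a b : (ZMod p)ˣ}
    (hs : (a : ZMod p) + (b : ZMod p) = 1) : (a : ZMod p) ≠ 1 := by
  intro h
  exact b.ne_zero (by linear_combination hs - h)

lemma mkb_eq {p : ℕ} [Fact p.Prime] {a b : (ZMod p)ˣ}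
    (hs : (a : ZMod p) + (b : ZMod p) = 1) : mkb a = b := by
  have ha := coe_ne_one_of_sum hs
  ext
  rw [mkb_coe ha]
  linear_combination -hs

lemma inv_coe_ne_one {p : ℕ} [Fact p.Prime] {v : (ZMod p)ˣ} (h : (v : ZMod p) ≠ 1) :
    ((v⁻¹ : (ZMod p)ˣ) : ZMod p) ≠ 1 := by
  intro hh
  have : v⁻¹ = 1 := Units.val_eq_one.1 hh
  exact h (Units.val_eq_one.2 (inv_eq_one.1 this))

end GPV4


open GPV4

/-- If `d ∣ p-1`, then `V₄(p) = p(p-1)/d + p ∑_{l=0}^{d-1} c_{0,l,0}² − ((p-1)/d)³`,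
where `c_{0,l,0}` is the number of pairs `(a,b) ∈ Γ × g^l Γ` with `a + b = 1`. -/
theorem gaussian_periods_V4_general (p d k : ℕ) (hp : p.Prime) (hodd : Odd p)
    (hd : 0 < d) (hdk : p - 1 = d * k)
    (g : (ZMod p)ˣ) (hg : ∀ x : (ZMod p)ˣ, x ∈ Subgroup.zpowers g)
    (η : ℕ → ℂ)
    (hη : ∀ a : ℕ, η a = ∑ j ∈ Finset.range k,
      Complex.exp (2 * (Real.pi : ℂ) * Complex.I *
        (((g ^ (d * j + a) : (ZMod p)ˣ) : ZMod p).val : ℂ) / (p : ℂ)))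
    (c : ℕ → ℕ)
    (hc : ∀ l : ℕ, c l = Nat.card {ab : (ZMod p)ˣ × (ZMod p)ˣ //
      ab.1 ∈ Subgroup.zpowers (g ^ d) ∧
      (∃ b ∈ Subgroup.zpowers (g ^ d), ab.2 = g ^ l * b) ∧
      (ab.1 : ZMod p) + (ab.2 : ZMod p) = 1}) :
    ∑ s ∈ Finset.range d, ‖η s‖ ^ 4
      = (p : ℝ) * k + (p : ℝ) * ∑ l ∈ Finset.range d, (c l : ℝ) ^ 2 - (k : ℝ) ^ 3 := by
  classical
  haveI : Fact p.Prime := ⟨hp⟩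
  haveI : NeZero p := ⟨hp.pos.ne'⟩
  set E : AddChar (ZMod p) ℂ := ZMod.stdAddChar with hE
  set Gf : Finset (ZMod p)ˣ := univ.filter (· ∈ Subgroup.zpowers (g ^ d)) with hGfdef
  have hGf : ∀ x : (ZMod p)ˣ, x ∈ Gf ↔ x ∈ Subgroup.zpowers (g ^ d) := by
    intro x; simp [hGfdef]
  have horder : orderOf g = d * k := by
    rw [orderOf_eq_card_of_forall_mem_zpowers hg, Nat.card_eq_fintype_card,
      ZMod.card_units p, hdk]
  have hk0 : 0 < k := by
    rcases Nat.eq_zero_or_pos k with h | h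
    · exfalso; rw [h, Nat.mul_zero] at hdk; have := hp.two_le; omega
    · exact h
  have hordΓ : orderOf (g ^ d) = k := by
    rw [orderOf_pow g, horder, Nat.gcd_eq_right ⟨k, rfl⟩, Nat.mul_div_cancel_left _ hd]
  have hcardG : Gf.card = k := by
    rw [hGfdef, ← Fintype.card_subtype, ← hordΓ, ← Fintype.card_zpowers]
  -- the character and its basic properties
  have hee : ∀ x : (ZMod p)ˣ,
      Complex.exp (2 * (Real.pi:ℂ) * Complex.I * (((x : ZMod p).val : ℕ) : ℂ) / (p:ℂ))
        = E ((x : ZMod p)) := by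
    intro x; rw [hE, ZMod.stdAddChar_apply, ZMod.toCircle_apply]
  have hconjE : ∀ x : ZMod p, (starRingEnd ℂ) (E x) = E (-x) := by
    intro x
    have h := AddChar.starComp_eq_inv (R := ZMod p)
      (by rw [ZMod.ringChar_zmod_n]; exact hp.pos) (φ := ZMod.stdAddChar)
    have := DFunLike.congr_fun h x
    simpa [hE, AddChar.inv_apply] using this
  -- η as a sum over the subgroup
  have hηΓ : ∀ a : ℕ, η a = ∑ y ∈ Gf, E ((g ^ a * y : (ZMod p)ˣ) : ZMod p) := by
    intro a
    rw [hη a]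
    refine Finset.sum_bij (fun j _ => (g ^ d) ^ j) ?_ ?_ ?_ ?_
    · intro j _; rw [hGf]; exact npow_mem_zpowers _ _
    · intro j₁ h₁ j₂ h₂ hj
      exact pow_injOn_Iio_orderOf (by simpa [hordΓ] using mem_range.1 h₁)
        (by simpa [hordΓ] using mem_range.1 h₂) hj
    · intro y hy
      obtain ⟨n, hn⟩ := mem_zpowers_pow_iff_exists.1 ((hGf y).1 hy)
      refine ⟨n % k, mem_range.2 (Nat.mod_lt _ hk0), ?_⟩
      show (g ^ d) ^ (n % k) = y
      rw [← hn, ← hordΓ]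
      exact pow_mod_orderOf _ _
    · intro j _
      rw [hee]
      congr 2
      rw [pow_add, pow_mul, mul_comm]
  have hconjη : ∀ a : ℕ, (starRingEnd ℂ) (η a)
      = ∑ y ∈ Gf, E (-((g ^ a * y : (ZMod p)ˣ) : ZMod p)) := by
    intro a
    rw [hηΓ a, map_sum]
    exact Finset.sum_congr rfl fun y _ => hconjE _
  -- the quadruple sum
  set Df : (ZMod p)ˣ × (ZMod p)ˣ × (ZMod p)ˣ → ZMod p :=
    fun r => (r.1 : ZMod p) - 1 + (r.2.2 : ZMod p) * ((r.2.1 : ZMod p) - 1) with hDf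
  have key4 : ∀ s : ℕ, η s * (starRingEnd ℂ) (η s) * (η s * (starRingEnd ℂ) (η s))
      = ∑ r ∈ (Gf ×ˢ Gf ×ˢ Gf) ×ˢ Gf,
          E (((g ^ s : (ZMod p)ˣ) : ZMod p) * ((r.2 : (ZMod p)ˣ) : ZMod p) * Df r.1) := by
    intro s
    have h2 : η s * (starRingEnd ℂ) (η s)
        = ∑ q ∈ Gf ×ˢ Gf, E (((g ^ s : (ZMod p)ˣ) : ZMod p) * ((q.1 : ZMod p) - (q.2 : ZMod p))) := by
      rw [hconjη s, hηΓ s, Finset.sum_mul_sum, ← Finset.sum_product']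
      refine Finset.sum_congr rfl fun q _ => ?_
      rw [← AddChar.map_add_eq_mul]
      congr 1
      push_cast [Units.val_mul]
      ring
    have h4 : η s * (starRingEnd ℂ) (η s) * (η s * (starRingEnd ℂ) (η s))
        = ∑ q ∈ (Gf ×ˢ Gf) ×ˢ (Gf ×ˢ Gf),
            E (((g ^ s : (ZMod p)ˣ) : ZMod p)
              * (((q.1.1 : ZMod p) - (q.1.2 : ZMod p)) + ((q.2.1 : ZMod p) - (q.2.2 : ZMod p)))) := by
      rw [h2, Finset.sum_mul_sum, ← Finset.sum_product']
      refine Finset.sum_congr rfl fun q _ => ?_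
      rw [← AddChar.map_add_eq_mul]
      congr 1
      ring
    rw [h4]
    refine Finset.sum_nbij'
      (fun q => ((q.1.1 * q.1.2⁻¹, (q.2.1 * q.2.2⁻¹, q.2.2 * q.1.2⁻¹)), q.1.2))
      (fun r => ((r.1.1 * r.2, r.2), (r.1.2.1 * r.1.2.2 * r.2, r.1.2.2 * r.2)))
      ?_ ?_ ?_ ?_ ?_
    · rintro ⟨⟨x, y⟩, z, w⟩ hq
      simp only [Finset.mem_product] at hq ⊢
      obtain ⟨⟨hx, hy⟩, hz, hw⟩ := hq
      exact ⟨⟨(hGf _).2 (mul_mem ((hGf x).1 hx) (inv_mem ((hGf y).1 hy))),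
        (hGf _).2 (mul_mem ((hGf z).1 hz) (inv_mem ((hGf w).1 hw))),
        (hGf _).2 (mul_mem ((hGf w).1 hw) (inv_mem ((hGf y).1 hy)))⟩, hy⟩
    · rintro ⟨⟨u, v, t⟩, y⟩ hr
      simp only [Finset.mem_product] at hr ⊢
      obtain ⟨⟨hu, hv, ht⟩, hy⟩ := hr
      exact ⟨⟨(hGf _).2 (mul_mem ((hGf u).1 hu) ((hGf y).1 hy)), hy⟩,
        (hGf _).2 (mul_mem (mul_mem ((hGf v).1 hv) ((hGf t).1 ht)) ((hGf y).1 hy)),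
        (hGf _).2 (mul_mem ((hGf t).1 ht) ((hGf y).1 hy))⟩
    · rintro ⟨⟨x, y⟩, z, w⟩ _
      simp only [Prod.mk.injEq]
      refine ⟨⟨?_, trivial⟩, ?_, ?_⟩ <;> group
    · rintro ⟨⟨u, v, t⟩, y⟩ _
      simp only [Prod.mk.injEq]
      refine ⟨⟨?_, ?_, ?_⟩, trivial⟩ <;> group
    · rintro ⟨⟨x, y⟩, z, w⟩ _
      congr 1
      simp only [hDf]
      push_cast [Units.val_mul, Units.val_inv_eq_inv_val]
      have hy0 : (y : ZMod p) ≠ 0 := y.ne_zero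
      have hw0 : (w : ZMod p) ≠ 0 := w.ne_zero
      field_simp
  -- summing over s and the y-variable: full character sum
  have hfull : ∀ z : ZMod p,
      ∑ s ∈ range d, ∑ y ∈ Gf, E (((g ^ s : (ZMod p)ˣ) : ZMod p) * ((y : (ZMod p)ˣ) : ZMod p) * z)
        = (if z = 0 then (p : ℂ) else 0) - 1 := by
    intro z
    rw [← Finset.sum_product']
    have step1 : ∑ q ∈ (range d) ×ˢ Gf,
        E (((g ^ q.1 : (ZMod p)ˣ) : ZMod p) * ((q.2 : (ZMod p)ˣ) : ZMod p) * z)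
        = ∑ x : (ZMod p)ˣ, E ((x : ZMod p) * z) := by
      refine Finset.sum_nbij' (fun q => g ^ q.1 * q.2)
        (fun x => (ind g hg d x, (g ^ (ind g hg d x))⁻¹ * x)) ?_ ?_ ?_ ?_ ?_
      · intro q _; exact Finset.mem_univ _
      · intro x _
        rw [Finset.mem_product]
        refine ⟨Finset.mem_range.2 (ind_lt g hg hd x), (hGf _).2 ?_⟩
        have h2 : cofac g hg d x = (g ^ (ind g hg d x))⁻¹ * x := by
          rw [eq_inv_mul_iff_mul_eq]
          exact ind_cofac_spec g hg d x
        show (g ^ (ind g hg d x))⁻¹ * x ∈ Subgroup.zpowers (g ^ d)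
        rw [← h2]
        exact cofac_mem g hg d x
      · rintro ⟨s, y⟩ hq
        rw [Finset.mem_product] at hq
        have hind : ind g hg d (g ^ s * y) = s :=
          ind_eq g hg hd horder (Finset.mem_range.1 hq.1) ((hGf y).1 hq.2)
        simp only [hind, Prod.mk.injEq, inv_mul_cancel_left, and_self, true_and]
        try exact ⟨trivial, rfl⟩
        try trivial
      · intro x _
        simp
      · intro q _
        rw [Units.val_mul]
    rw [step1]
    have step2 : ∑ x : (ZMod p)ˣ, E ((x : ZMod p) * z)
        = ∑ w ∈ (univ : Finset (ZMod p)).erase 0, E (w * z) := by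
      refine Finset.sum_nbij' (fun x => (x : ZMod p))
        (fun w => if h : w = 0 then 1 else Units.mk0 w h) ?_ ?_ ?_ ?_ ?_
      · intro x _; exact Finset.mem_erase.2 ⟨x.ne_zero, Finset.mem_univ _⟩
      · intro w _; exact Finset.mem_univ _
      · intro x _
        ext
        simp [x.ne_zero]
      · intro w hw
        simp [(Finset.mem_erase.1 hw).1]
      · intro x _; rfl
    rw [step2, Finset.sum_erase_eq_sub (Finset.mem_univ (0 : ZMod p)),
      AddChar.sum_mulShift z (hE ▸ ZMod.isPrimitive_stdAddChar p), zero_mul,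
      AddChar.map_zero_eq_one, ZMod.card]
    split_ifs <;> simp
  -- counting
  set Nfin : Finset ((ZMod p)ˣ × (ZMod p)ˣ × (ZMod p)ˣ) :=
    (Gf ×ˢ Gf ×ˢ Gf).filter (fun r => Df r = 0) with hNfin
  have hcount1 : Nfin.card = k + (Nfin.filter (fun r => r.1 ≠ 1)).card := by
    rw [← Finset.card_filter_add_card_filter_not (s := Nfin) (p := fun r => r.1 = 1)]
    congr 1
    rw [← hcardG]
    refine Finset.card_nbij' (fun r => r.2.2) (fun t => (1, (1, t))) ?_ ?_ ?_ ?_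
    · rintro ⟨u, v, t⟩ hr
      rw [Finset.mem_coe, Finset.mem_filter, hNfin, Finset.mem_filter, Finset.mem_product,
        Finset.mem_product] at hr
      exact hr.1.1.2.2
    · intro t ht
      rw [Finset.mem_coe, Finset.mem_filter, hNfin, Finset.mem_filter, Finset.mem_product, Finset.mem_product]
      refine ⟨⟨⟨(hGf _).2 (one_mem _), (hGf _).2 (one_mem _), ht⟩, ?_⟩, rfl⟩
      simp [hDf]
    · rintro ⟨u, v, t⟩ hr
      rw [Finset.mem_coe, Finset.mem_filter, hNfin, Finset.mem_filter] at hr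
      obtain ⟨⟨_, hD⟩, hu1⟩ := hr
      have hu1' : u = 1 := hu1
      subst hu1'
      have hv1 : v = 1 := by
        simp only [hDf, Units.val_one] at hD
        have h0 : ((t : ZMod p)) * ((v : ZMod p) - 1) = 0 := by
          rw [← hD]; ring
        rcases mul_eq_zero.1 h0 with h | h
        · exact absurd h t.ne_zero
        · have : (v : ZMod p) = 1 := by
            have := sub_eq_zero.1 h; simpa using this
          exact Units.val_eq_one.1 this
      subst hv1
      rfl
    · intro t _; rfl
  have hcount2 : (Nfin.filter (fun r => r.1 ≠ 1)).card = ∑ l ∈ range d, (c l) ^ 2 := by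
    set Q : ℕ → (ZMod p)ˣ × (ZMod p)ˣ → Prop := fun l ab =>
      ab.1 ∈ Subgroup.zpowers (g ^ d) ∧ (∃ b ∈ Subgroup.zpowers (g ^ d), ab.2 = g ^ l * b) ∧
        (ab.1 : ZMod p) + (ab.2 : ZMod p) = 1 with hQ
    have hcQ : ∀ l, c l = (univ.filter (Q l)).card := by
      intro l
      rw [hc l, Nat.card_eq_fintype_card, Fintype.card_subtype]
    have hsum : ∑ l ∈ range d, (c l) ^ 2
        = ((range d).sigma (fun l => (univ.filter (Q l)) ×ˢ (univ.filter (Q l)))).card := by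
      rw [Finset.card_sigma]
      refine Finset.sum_congr rfl fun l _ => ?_
      rw [Finset.card_product, hcQ l, sq]
    rw [hsum]
    have hfacts : ∀ r ∈ Nfin.filter (fun r : (ZMod p)ˣ × (ZMod p)ˣ × (ZMod p)ˣ => r.1 ≠ 1),
        r.1 ∈ Subgroup.zpowers (g ^ d) ∧ r.2.1 ∈ Subgroup.zpowers (g ^ d) ∧
        r.2.2 ∈ Subgroup.zpowers (g ^ d) ∧ (r.1 : ZMod p) ≠ 1 ∧ (r.2.1 : ZMod p) ≠ 1 ∧
        ((r.1 : ZMod p) - 1 + (r.2.2 : ZMod p) * ((r.2.1 : ZMod p) - 1) = 0) := by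
      rintro ⟨u, v, t⟩ hr
      rw [Finset.mem_filter, hNfin, Finset.mem_filter, Finset.mem_product,
        Finset.mem_product] at hr
      obtain ⟨⟨⟨hu, hv, ht⟩, hD⟩, hu1⟩ := hr
      have hD' : (u : ZMod p) - 1 + (t : ZMod p) * ((v : ZMod p) - 1) = 0 := hD
      have hu1' : (u : ZMod p) ≠ 1 := fun h => hu1 (Units.val_eq_one.1 h)
      refine ⟨(hGf u).1 hu, (hGf v).1 hv, (hGf t).1 ht, hu1', ?_, hD'⟩
      intro hv1
      apply hu1'
      rw [hv1] at hD'
      linear_combination hD'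
    have hmk : ∀ r ∈ Nfin.filter (fun r : (ZMod p)ˣ × (ZMod p)ˣ × (ZMod p)ˣ => r.1 ≠ 1),
        mkb (r.2.1⁻¹) = mkb r.1 * (r.2.2 * r.2.1)⁻¹ := by
      intro r hr
      obtain ⟨hu, hv, ht, hu1, hv1, hD⟩ := hfacts r hr
      ext
      rw [Units.val_mul, mkb_coe (inv_coe_ne_one hv1), mkb_coe hu1, Units.val_inv_eq_inv_val,
        Units.val_inv_eq_inv_val, Units.val_mul]
      have hv0 : (r.2.1 : ZMod p) ≠ 0 := r.2.1.ne_zero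
      have ht0 : (r.2.2 : ZMod p) ≠ 0 := r.2.2.ne_zero
      field_simp
      linear_combination hD
    refine Finset.card_nbij'
      (fun r => ⟨ind g hg d (mkb r.1), ((r.1, mkb r.1), (r.2.1⁻¹, mkb (r.2.1⁻¹)))⟩)
      (fun b => (b.2.1.1, (b.2.2.1⁻¹, b.2.2.1 * (b.2.1.2 * b.2.2.2⁻¹)))) ?_ ?_ ?_ ?_
    · intro r hr
      obtain ⟨hu, hv, ht, hu1, hv1, hD⟩ := hfacts r hr
      have hmkr := hmk r hr
      rw [Finset.mem_coe, Finset.mem_sigma]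
      refine ⟨Finset.mem_range.2 (ind_lt g hg hd _), ?_⟩
      rw [Finset.mem_product, Finset.mem_filter, Finset.mem_filter]
      refine ⟨⟨Finset.mem_univ _, hu,
        ⟨cofac g hg d (mkb r.1), cofac_mem g hg d _, (ind_cofac_spec g hg d _).symm⟩, ?_⟩,
        Finset.mem_univ _, inv_mem hv,
        ⟨cofac g hg d (mkb r.1) * (r.2.2 * r.2.1)⁻¹,
          mul_mem (cofac_mem g hg d _) (inv_mem (mul_mem ht hv)), ?_⟩, ?_⟩
      · rw [mkb_coe hu1]; ring
      · show mkb (r.2.1⁻¹)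
            = g ^ (ind g hg d (mkb r.1)) * (cofac g hg d (mkb r.1) * (r.2.2 * r.2.1)⁻¹)
        rw [hmkr, ← mul_assoc, ind_cofac_spec g hg d]
      · rw [mkb_coe (inv_coe_ne_one hv1)]; ring
    · rintro ⟨l, ⟨⟨a₁, b₁⟩, ⟨a₂, b₂⟩⟩⟩ hb
      rw [Finset.mem_coe, Finset.mem_sigma, Finset.mem_product, Finset.mem_filter, Finset.mem_filter] at hb
      obtain ⟨hl, ⟨_, ha₁, ⟨y₁, hy₁, hb₁x⟩, hs₁x⟩, _, ha₂, ⟨y₂, hy₂, hb₂x⟩, hs₂x⟩ := hb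
      have hb₁ : b₁ = g ^ l * y₁ := hb₁x
      have hb₂ : b₂ = g ^ l * y₂ := hb₂x
      have hs₁ : (a₁ : ZMod p) + (b₁ : ZMod p) = 1 := hs₁x
      have hs₂ : (a₂ : ZMod p) + (b₂ : ZMod p) = 1 := hs₂x
      rw [Finset.mem_coe, Finset.mem_filter, hNfin, Finset.mem_filter, Finset.mem_product, Finset.mem_product]
      have hbb : b₁ * b₂⁻¹ = y₁ * y₂⁻¹ := by
        rw [hb₁, hb₂, mul_inv_rev]
        simp [mul_comm, mul_left_comm, mul_assoc]
      refine ⟨⟨⟨(hGf _).2 ha₁, (hGf _).2 (inv_mem ha₂), (hGf _).2 ?_⟩, ?_⟩, ?_⟩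
      · show a₂ * (b₁ * b₂⁻¹) ∈ Subgroup.zpowers (g ^ d)
        rw [hbb]
        exact mul_mem ha₂ (mul_mem hy₁ (inv_mem hy₂))
      · show ((a₁ : ZMod p)) - 1
          + ((a₂ * (b₁ * b₂⁻¹) : (ZMod p)ˣ) : ZMod p) * (((a₂⁻¹ : (ZMod p)ˣ) : ZMod p) - 1) = 0
        rw [Units.val_mul, Units.val_mul, Units.val_inv_eq_inv_val, Units.val_inv_eq_inv_val]
        have ha20 : (a₂ : ZMod p) ≠ 0 := a₂.ne_zero
        have hb20 : (b₂ : ZMod p) ≠ 0 := b₂.ne_zero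
        field_simp
        linear_combination (b₂ : ZMod p) * hs₁ - (b₁ : ZMod p) * hs₂
      · show a₁ ≠ 1
        exact fun h => coe_ne_one_of_sum hs₁ (by rw [h, Units.val_one])
    · intro r hr
      have hmkr := hmk r hr
      obtain ⟨hu, hv, ht, hu1, hv1, hD⟩ := hfacts r hr
      show (r.1, ((r.2.1⁻¹)⁻¹, r.2.1⁻¹ * (mkb r.1 * (mkb (r.2.1⁻¹))⁻¹))) = r
      rw [hmkr, inv_inv]
      have h1 : mkb r.1 * (mkb r.1 * (r.2.2 * r.2.1)⁻¹)⁻¹ = r.2.2 * r.2.1 := by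
        rw [mul_inv_rev, inv_inv, ← mul_assoc]
        simp [mul_comm, mul_left_comm, mul_assoc]
      rw [h1]
      have h2 : r.2.1⁻¹ * (r.2.2 * r.2.1) = r.2.2 := by
        simp [mul_comm, mul_left_comm]
      rw [h2]
    · rintro ⟨l, ⟨⟨a₁, b₁⟩, ⟨a₂, b₂⟩⟩⟩ hb
      rw [Finset.mem_coe, Finset.mem_sigma, Finset.mem_product, Finset.mem_filter, Finset.mem_filter] at hb
      obtain ⟨hl, ⟨_, ha₁, ⟨y₁, hy₁, hb₁x⟩, hs₁x⟩, _, ha₂, ⟨y₂, hy₂, hb₂x⟩, hs₂x⟩ := hb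
      have hb₁ : b₁ = g ^ l * y₁ := hb₁x
      have hb₂ : b₂ = g ^ l * y₂ := hb₂x
      have hs₁ : (a₁ : ZMod p) + (b₁ : ZMod p) = 1 := hs₁x
      have hs₂ : (a₂ : ZMod p) + (b₂ : ZMod p) = 1 := hs₂x
      have h1 : mkb a₁ = b₁ := mkb_eq hs₁
      have h2 : mkb a₂ = b₂ := mkb_eq hs₂
      show (⟨ind g hg d (mkb a₁), ((a₁, mkb a₁), ((a₂⁻¹)⁻¹, mkb ((a₂⁻¹)⁻¹)))⟩
          : Σ _ : ℕ, ((ZMod p)ˣ × (ZMod p)ˣ) × ((ZMod p)ˣ × (ZMod p)ˣ))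
        = ⟨l, ((a₁, b₁), (a₂, b₂))⟩
      rw [inv_inv, h1, h2, hb₁, ind_eq g hg hd horder (Finset.mem_range.1 hl) hy₁]
  -- assembling the complex identity
  have hmain : ∑ s ∈ range d, (η s * (starRingEnd ℂ) (η s)) ^ 2
      = (p : ℂ) * k + (p : ℂ) * ∑ l ∈ range d, ((c l : ℂ)) ^ 2 - (k : ℂ) ^ 3 := by
    have e1 : ∑ s ∈ range d, (η s * (starRingEnd ℂ) (η s)) ^ 2
        = ∑ r1 ∈ Gf ×ˢ Gf ×ˢ Gf, ((if Df r1 = 0 then (p:ℂ) else 0) - 1) := by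
      calc ∑ s ∈ range d, (η s * (starRingEnd ℂ) (η s)) ^ 2
          = ∑ s ∈ range d, ∑ r1 ∈ Gf ×ˢ Gf ×ˢ Gf, ∑ y ∈ Gf,
              E (((g ^ s : (ZMod p)ˣ) : ZMod p) * ((y : (ZMod p)ˣ) : ZMod p) * Df r1) := by
            refine Finset.sum_congr rfl fun s _ => ?_
            rw [sq, key4 s, Finset.sum_product]
        _ = ∑ r1 ∈ Gf ×ˢ Gf ×ˢ Gf, ∑ s ∈ range d, ∑ y ∈ Gf,
              E (((g ^ s : (ZMod p)ˣ) : ZMod p) * ((y : (ZMod p)ˣ) : ZMod p) * Df r1) :=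
            Finset.sum_comm
        _ = _ := Finset.sum_congr rfl fun r1 _ => hfull (Df r1)
    rw [e1, Finset.sum_sub_distrib, ← Finset.sum_filter, ← hNfin, Finset.sum_const,
      Finset.sum_const, Finset.card_product, Finset.card_product, hcardG, hcount1, hcount2]
    simp only [nsmul_eq_mul]
    push_cast
    ring
  -- from ℂ back to ℝ
  have habs : ∀ z : ℂ, ((‖z‖ ^ 4 : ℝ) : ℂ) = (z * (starRingEnd ℂ) z) ^ 2 := by
    intro z
    rw [Complex.mul_conj]
    push_cast
    rw [← Complex.sq_norm]
    push_cast
    ring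
  apply Complex.ofReal_injective
  push_cast
  rw [← hmain]
  push_cast
  refine Finset.sum_congr rfl fun s _ => ?_
  have := habs (η s)
  push_cast at this
  rw [← this]
end

section
/- For d > 2 dividing p-1, Σ_{m=0}^{d-1} Σ_{n=0}^{d-1} c_{0,m,n}² = (p² + (d² - 3d - 2)p + 3d + 1)/d². -/
open Finset

set_option maxHeartbeats 1600000 in
/-- For `d > 2` dividing `p-1`,
`∑_{m=0}^{d-1} ∑_{n=0}^{d-1} c_{0,m,n}² = (p² + (d² - 3d - 2)p + 3d + 1)/d²`. -/
theorem sum_c_sq (p d : ℕ) (hp : p.Prime) (hodd : Odd p)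
    (hd : 2 < d) (hdvd : d ∣ p - 1)
    (g : (ZMod p)ˣ) (hg : ∀ x : (ZMod p)ˣ, x ∈ Subgroup.zpowers g)
    (c : ℕ → ℕ → ℕ)
    (hc : ∀ m n : ℕ, c m n =
      Nat.card {ab : (ZMod p)ˣ × (ZMod p)ˣ //
        ab.1 ∈ Subgroup.zpowers (g ^ d) ∧ ab.2 ∈ Subgroup.zpowers (g ^ d) ∧
        (ab.1 : ZMod p) + ((g ^ m : (ZMod p)ˣ) : ZMod p) * (ab.2 : ZMod p)
          = ((g ^ n : (ZMod p)ˣ) : ZMod p)}) :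
    ∑ m ∈ Finset.range d, ∑ n ∈ Finset.range d, (c m n : ℝ) ^ 2
      = ((p : ℝ) ^ 2 + ((d : ℝ) ^ 2 - 3 * d - 2) * p + 3 * d + 1) / (d : ℝ) ^ 2 := by
  classical
  haveI := Fact.mk hp
  haveI : NeZero p := ⟨hp.pos.ne'⟩
  have hp3 : 3 ≤ p := by
    rcases hp.two_le.lt_or_eq with h | h
    · omega
    · exfalso; rw [← h] at hodd; exact (Nat.not_odd_iff_even.mpr (by norm_num)) hodd
  -- basic cardinalities
  have hcardG : Nat.card (ZMod p)ˣ = p - 1 := by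
    rw [Nat.card_eq_fintype_card, ZMod.card_units_eq_totient, Nat.totient_prime hp]
  have hog : orderOf g = p - 1 := by
    rw [orderOf_eq_card_of_forall_mem_zpowers hg, hcardG]
  set t := (p - 1) / d with ht
  have htd : d * t = p - 1 := Nat.mul_div_cancel' hdvd
  have ht1 : 1 ≤ t := by
    rcases Nat.eq_zero_or_pos t with h | h
    · rw [h, mul_zero] at htd; omega
    · exact h
  set Γ : Subgroup (ZMod p)ˣ := Subgroup.zpowers (g ^ d) with hΓdef
  have hmem : ∀ k : ℕ, g ^ k ∈ Γ ↔ d ∣ k := by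
    intro k
    constructor
    · rintro ⟨j, hj⟩
      have h1 : g ^ ((d : ℤ) * j) = g ^ (k : ℤ) := by
        rw [zpow_mul, zpow_natCast, zpow_natCast]; exact_mod_cast hj
      have h2 : g ^ ((d : ℤ) * j - (k : ℤ)) = 1 := by
        rw [zpow_sub, h1, mul_inv_cancel]
      have h3 : ((p - 1 : ℕ) : ℤ) ∣ (d : ℤ) * j - (k : ℤ) := by
        rw [← hog]; exact_mod_cast orderOf_dvd_iff_zpow_eq_one.mpr h2
      have h4 : (d : ℤ) ∣ (k : ℤ) := by
        have hd1 : (d : ℤ) ∣ ((p - 1 : ℕ) : ℤ) := Int.natCast_dvd_natCast.mpr hdvd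
        have := dvd_sub (Dvd.intro j rfl) (hd1.trans h3)
        simpa using this
      exact_mod_cast h4
    · rintro ⟨k', rfl⟩
      rw [pow_mul]
      exact pow_mem (Subgroup.mem_zpowers _) k'
  set ΓF : Finset (ZMod p)ˣ := univ.filter (· ∈ Γ) with hΓF
  have hcardΓ : ΓF.card = t := by
    have h1 : Nat.card Γ = t := by
      rw [hΓdef, Nat.card_zpowers, orderOf_pow g, hog, Nat.gcd_eq_right hdvd, ht]
    rw [← h1, Nat.card_eq_fintype_card]
    rw [hΓF]
    exact (Fintype.card_subtype _).symm
  have h1Γ : (1 : (ZMod p)ˣ) ∈ ΓF := by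
    simp [hΓF]
  -- the counting function
  set S : (ZMod p)ˣ → (ZMod p)ˣ → Finset ((ZMod p)ˣ × (ZMod p)ˣ) := fun u v =>
    univ.filter (fun ab => ab.1 ∈ Γ ∧ ab.2 ∈ Γ ∧
      (ab.1 : ZMod p) + (u : ZMod p) * (ab.2 : ZMod p) = (v : ZMod p)) with hS
  have hc' : ∀ m n : ℕ, c m n = (S (g ^ m) (g ^ n)).card := by
    intro m n
    rw [hc m n, Nat.card_eq_fintype_card, hS]
    exact Fintype.card_subtype _
  -- invariance under multiplication by Γ elements
  have hinv : ∀ u v γ δ : (ZMod p)ˣ, γ ∈ Γ → δ ∈ Γ →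
      (S (u * γ) (v * δ)).card = (S u v).card := by
    intro u v γ δ hγ hδ
    apply Finset.card_bij' (fun ab _ => (ab.1 * δ⁻¹, γ * ab.2 * δ⁻¹))
      (fun ab _ => (ab.1 * δ, γ⁻¹ * ab.2 * δ))
    · rintro ⟨a, b⟩ hab
      simp only [hS, mem_filter, mem_univ, true_and] at hab ⊢
      obtain ⟨ha, hb, heq⟩ := hab
      refine ⟨mul_mem ha (inv_mem hδ), mul_mem (mul_mem hγ hb) (inv_mem hδ), ?_⟩
      have hδ1 : (δ : ZMod p) * ((δ⁻¹ : (ZMod p)ˣ) : ZMod p) = 1 := by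
        rw [← Units.val_mul, mul_inv_cancel, Units.val_one]
      simp only [Units.val_mul] at heq ⊢
      linear_combination ((δ⁻¹ : (ZMod p)ˣ) : ZMod p) * heq + (v : ZMod p) * hδ1
    · rintro ⟨a, b⟩ hab
      simp only [hS, mem_filter, mem_univ, true_and] at hab ⊢
      obtain ⟨ha, hb, heq⟩ := hab
      refine ⟨mul_mem ha hδ, mul_mem (mul_mem (inv_mem hγ) hb) hδ, ?_⟩
      have hγ1 : (γ : ZMod p) * ((γ⁻¹ : (ZMod p)ˣ) : ZMod p) = 1 := by
        rw [← Units.val_mul, mul_inv_cancel, Units.val_one]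
      simp only [Units.val_mul] at heq ⊢
      linear_combination ((δ : (ZMod p)ˣ) : ZMod p) * heq
        + (u : ZMod p) * (b : ZMod p) * ((δ : (ZMod p)ˣ) : ZMod p) * hγ1
    · rintro ⟨a, b⟩ _; simp [mul_assoc]
    · rintro ⟨a, b⟩ _; simp [mul_assoc]
  -- sum over the group equals t times sum over coset representatives
  have hsum_univ : ∀ F : (ZMod p)ˣ → ℕ, (∀ u γ, γ ∈ Γ → F (u * γ) = F u) →
      ∑ u : (ZMod p)ˣ, F u = t * ∑ m ∈ range d, F (g ^ m) := by
    intro F hF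
    have hstep : ∑ x ∈ (range d) ×ˢ ΓF, F (g ^ x.1 * x.2) = ∑ u : (ZMod p)ˣ, F u := by
      apply Finset.sum_nbij (fun x => g ^ x.1 * x.2)
      · intro x _; exact mem_univ _
      · rintro ⟨m, γ⟩ hx ⟨m', γ'⟩ hx' hEq
        simp only [coe_product, Set.mem_prod, coe_range, Set.mem_Iio, mem_coe, hΓF,
          mem_filter, mem_univ, true_and] at hx hx'
        obtain ⟨hm, hγ⟩ := hx
        obtain ⟨hm', hγ'⟩ := hx'
        have key : ∀ m1 m2 : ℕ, ∀ γ1 γ2 : (ZMod p)ˣ, m1 ≤ m2 → m1 < d → m2 < d →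
            γ1 ∈ Γ → γ2 ∈ Γ → g ^ m1 * γ1 = g ^ m2 * γ2 → m1 = m2 ∧ γ1 = γ2 := by
          intro m1 m2 γ1 γ2 hle h1 h2 hγ1 hγ2 he
          have hpow : g ^ (m2 - m1) = γ1 * γ2⁻¹ := by
            have hsplit : g ^ m2 = g ^ m1 * g ^ (m2 - m1) := by
              rw [← pow_add, Nat.add_sub_cancel' hle]
            rw [hsplit, mul_assoc] at he
            have h2 := mul_left_cancel he
            rw [h2, mul_assoc, mul_inv_cancel, mul_one]
          have hdv : d ∣ m2 - m1 := by
            rw [← hmem]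
            rw [hpow]
            exact mul_mem hγ1 (inv_mem hγ2)
          have hm12 : m1 = m2 := by
            rcases Nat.eq_zero_of_dvd_of_lt hdv (by omega) |>.symm with h
            · omega
          refine ⟨hm12, ?_⟩
          subst hm12
          exact mul_left_cancel he
        rcases le_total m m' with hle | hle
        · obtain ⟨h1, h2⟩ := key m m' γ γ' hle hm hm' hγ hγ' hEq
          simp [h1, h2]
        · obtain ⟨h1, h2⟩ := key m' m γ' γ hle hm' hm hγ' hγ hEq.symm
          simp [h1, h2]
      · intro x _
        obtain ⟨k, hk⟩ : ∃ k : ℕ, g ^ k = x := by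
          have := hg x
          rw [← mem_powers_iff_mem_zpowers] at this
          exact this
        refine ⟨(k % d, g ^ (d * (k / d))), ?_, ?_⟩
        · simp only [coe_product, Set.mem_prod, coe_range, Set.mem_Iio, mem_coe, hΓF,
            mem_filter, mem_univ, true_and]
          exact ⟨Nat.mod_lt _ (by omega), (hmem _).mpr ⟨k / d, rfl⟩⟩
        · show g ^ (k % d) * g ^ (d * (k / d)) = x
          rw [← pow_add]
          rw [Nat.mod_add_div k d]
          exact hk
      · intro x _; rfl
    rw [← hstep, Finset.sum_product]
    rw [Finset.mul_sum]
    apply Finset.sum_congr rfl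
    intro m _
    have : ∀ γ ∈ ΓF, F (g ^ m * γ) = F (g ^ m) := by
      intro γ hγ
      simp only [hΓF, mem_filter, mem_univ, true_and] at hγ
      exact hF _ _ hγ
    rw [Finset.sum_congr rfl this, Finset.sum_const, hcardΓ, smul_eq_mul]
  -- apply it twice
  have hC : ∑ u : (ZMod p)ˣ, ∑ v : (ZMod p)ˣ, (S u v).card ^ 2
      = t * t * ∑ m ∈ range d, ∑ n ∈ range d, (S (g ^ m) (g ^ n)).card ^ 2 := by
    have h1 : ∀ u : (ZMod p)ˣ, ∑ v : (ZMod p)ˣ, (S u v).card ^ 2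
        = t * ∑ n ∈ range d, (S u (g ^ n)).card ^ 2 := by
      intro u
      apply hsum_univ (fun v => (S u v).card ^ 2)
      intro v δ hδ
      have := hinv u v 1 δ (one_mem Γ) hδ
      rw [mul_one] at this
      rw [this]
    have h2 : ∑ u : (ZMod p)ˣ, ∑ n ∈ range d, (S u (g ^ n)).card ^ 2
        = t * ∑ m ∈ range d, ∑ n ∈ range d, (S (g ^ m) (g ^ n)).card ^ 2 := by
      apply hsum_univ (fun u => ∑ n ∈ range d, (S u (g ^ n)).card ^ 2)
      intro u γ hγ
      apply Finset.sum_congr rfl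
      intro n _
      have := hinv u (g ^ n) γ 1 hγ (one_mem Γ)
      rw [mul_one] at this
      rw [this]
    calc ∑ u : (ZMod p)ˣ, ∑ v : (ZMod p)ˣ, (S u v).card ^ 2
        = ∑ u : (ZMod p)ˣ, t * ∑ n ∈ range d, (S u (g ^ n)).card ^ 2 := by
          exact Finset.sum_congr rfl fun u _ => h1 u
      _ = t * ∑ u : (ZMod p)ˣ, ∑ n ∈ range d, (S u (g ^ n)).card ^ 2 := by
          rw [Finset.mul_sum]
      _ = t * (t * ∑ m ∈ range d, ∑ n ∈ range d, (S (g ^ m) (g ^ n)).card ^ 2) := by rw [h2]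
      _ = t * t * ∑ m ∈ range d, ∑ n ∈ range d, (S (g ^ m) (g ^ n)).card ^ 2 := by ring
  -- quadruples
  set Q : Finset (((ZMod p)ˣ × (ZMod p)ˣ) × ((ZMod p)ˣ × (ZMod p)ˣ)) :=
    univ.filter (fun q => q.1.1 ∈ Γ ∧ q.1.2 ∈ Γ ∧ q.2.1 ∈ Γ ∧ q.2.2 ∈ Γ) with hQ
  set T : (((ZMod p)ˣ × (ZMod p)ˣ) × ((ZMod p)ˣ × (ZMod p)ˣ)) → ℕ := fun q =>
    (univ.filter (fun uv : (ZMod p)ˣ × (ZMod p)ˣ =>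
      ((q.1.1 : ZMod p) + (uv.1 : ZMod p) * (q.1.2 : ZMod p) = (uv.2 : ZMod p)) ∧
      ((q.2.1 : ZMod p) + (uv.1 : ZMod p) * (q.2.2 : ZMod p) = (uv.2 : ZMod p)))).card with hT
  have hD1 : ∑ u : (ZMod p)ˣ, ∑ v : (ZMod p)ˣ, (S u v).card ^ 2 = ∑ q ∈ Q, T q := by
    have hsq : ∀ u v : (ZMod p)ˣ,
        (S u v).card ^ 2 = ∑ q : ((ZMod p)ˣ × (ZMod p)ˣ) × ((ZMod p)ˣ × (ZMod p)ˣ),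
          (if q.1 ∈ S u v ∧ q.2 ∈ S u v then 1 else 0) := by
      intro u v
      rw [sq, ← Finset.card_product]
      have : ∀ q : ((ZMod p)ˣ × (ZMod p)ˣ) × ((ZMod p)ˣ × (ZMod p)ˣ),
          (q.1 ∈ S u v ∧ q.2 ∈ S u v) ↔ q ∈ S u v ×ˢ S u v := by
        intro q; exact Finset.mem_product.symm
      simp only [this]
      rw [Finset.sum_ite_mem, Finset.univ_inter, Finset.sum_const, smul_eq_mul, mul_one]
    calc ∑ u : (ZMod p)ˣ, ∑ v : (ZMod p)ˣ, (S u v).card ^ 2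
        = ∑ uv : (ZMod p)ˣ × (ZMod p)ˣ, (S uv.1 uv.2).card ^ 2 := by
          rw [Fintype.sum_prod_type]
      _ = ∑ uv : (ZMod p)ˣ × (ZMod p)ˣ,
            ∑ q : ((ZMod p)ˣ × (ZMod p)ˣ) × ((ZMod p)ˣ × (ZMod p)ˣ),
            (if q.1 ∈ S uv.1 uv.2 ∧ q.2 ∈ S uv.1 uv.2 then 1 else 0) := by
          exact Finset.sum_congr rfl fun uv _ => hsq uv.1 uv.2
      _ = ∑ q : ((ZMod p)ˣ × (ZMod p)ˣ) × ((ZMod p)ˣ × (ZMod p)ˣ),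
            ∑ uv : (ZMod p)ˣ × (ZMod p)ˣ,
            (if q.1 ∈ S uv.1 uv.2 ∧ q.2 ∈ S uv.1 uv.2 then 1 else 0) := Finset.sum_comm
      _ = ∑ q ∈ Q, T q := by
          rw [hQ, Finset.sum_filter]
          apply Finset.sum_congr rfl
          intro q _
          by_cases hq : q.1.1 ∈ Γ ∧ q.1.2 ∈ Γ ∧ q.2.1 ∈ Γ ∧ q.2.2 ∈ Γ
          · rw [if_pos hq]
            simp only [hT, Finset.card_filter]
            apply Finset.sum_congr rfl
            intro uv _
            refine if_congr ?_ rfl rfl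
            simp only [hS, Finset.mem_filter, Finset.mem_univ, true_and]
            constructor
            · rintro ⟨⟨_, _, h1⟩, ⟨_, _, h2⟩⟩; exact ⟨h1, h2⟩
            · rintro ⟨h1, h2⟩; exact ⟨⟨hq.1, hq.2.1, h1⟩, ⟨hq.2.2.1, hq.2.2.2, h2⟩⟩
          · rw [if_neg hq]
            apply Finset.sum_eq_zero
            intro uv _
            rw [if_neg]
            simp only [hS, Finset.mem_filter, Finset.mem_univ, true_and]
            rintro ⟨⟨h1, h2, _⟩, ⟨h3, h4, _⟩⟩
            exact hq ⟨h1, h2, h3, h4⟩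
  -- the value of T on quadruples
  have hD2 : ∀ q : ((ZMod p)ˣ × (ZMod p)ˣ) × ((ZMod p)ˣ × (ZMod p)ˣ), T q =
      if q.1.1 = q.2.1 ∧ q.1.2 = q.2.2 then p - 2
      else if q.1.1 ≠ q.2.1 ∧ q.1.2 ≠ q.2.2 ∧
          (q.2.1 : ZMod p) * (q.1.2 : ZMod p) ≠ (q.1.1 : ZMod p) * (q.2.2 : ZMod p)
        then 1 else 0 := by
    rintro ⟨⟨a, b⟩, ⟨a', b'⟩⟩
    have hTU : T ((a, b), (a', b')) = (univ.filter (fun u : (ZMod p)ˣ =>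
        (a : ZMod p) + (u : ZMod p) * (b : ZMod p) = (a' : ZMod p) + (u : ZMod p) * (b' : ZMod p) ∧
        (a : ZMod p) + (u : ZMod p) * (b : ZMod p) ≠ 0)).card := by
      rw [hT]
      apply Finset.card_nbij (fun uv => uv.1)
      · intro uv h
        simp only [mem_coe, mem_filter, mem_univ, true_and] at h ⊢
        obtain ⟨h1, h2⟩ := h
        refine ⟨by rw [h1, h2], ?_⟩
        rw [h1]; exact uv.2.ne_zero
      · rintro ⟨u, v⟩ h ⟨u', v'⟩ h' hEq
        simp only [Set.mem_setOf_eq, coe_filter, mem_univ, true_and] at h h'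
        simp only at hEq
        subst hEq
        have hv : (v : ZMod p) = (v' : ZMod p) := by rw [← h.1, ← h'.1]
        exact Prod.ext rfl (Units.ext hv)
      · intro u hu
        simp only [Set.mem_setOf_eq, coe_filter, mem_univ, true_and] at hu
        obtain ⟨h1, h2⟩ := hu
        refine ⟨(u, Units.mk0 _ h2), ?_, rfl⟩
        simp only [Set.mem_setOf_eq, coe_filter, mem_univ, true_and]
        exact ⟨rfl, by rw [← h1]; rfl⟩
    rw [hTU]
    simp only []
    by_cases hbb : b = b'
    · by_cases haa : a = a'
      · -- diagonal case : p - 2 solutions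
        subst hbb; subst haa
        rw [if_pos ⟨rfl, rfl⟩]
        have hu0 : ∀ u : (ZMod p)ˣ, ((a : ZMod p) + (u : ZMod p) * (b : ZMod p) = 0) ↔
            u = -(a * b⁻¹) := by
          intro u
          rw [Units.ext_iff]
          push_cast [Units.val_neg, Units.val_mul, Units.val_inv_eq_inv_val]
          constructor
          · intro h
            field_simp
            linear_combination h
          · intro h
            rw [h]
            field_simp
            ring
        have : (univ.filter (fun u : (ZMod p)ˣ =>
            (a : ZMod p) + (u : ZMod p) * (b : ZMod p) = (a : ZMod p) + (u : ZMod p) * (b : ZMod p) ∧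
            (a : ZMod p) + (u : ZMod p) * (b : ZMod p) ≠ 0)) = univ.erase (-(a * b⁻¹)) := by
          rw [← Finset.filter_ne']
          apply Finset.filter_congr
          intro u _
          simp only [true_and]
          exact not_congr (hu0 u)
        rw [this, Finset.card_erase_of_mem (mem_univ _)]
        have : Fintype.card (ZMod p)ˣ = p - 1 := by rw [← Nat.card_eq_fintype_card, hcardG]
        rw [Finset.card_univ, this]
        omega
      · -- b = b', a ≠ a' : no solutions
        subst hbb
        rw [if_neg (by tauto), if_neg (by tauto)]
        rw [Finset.card_eq_zero]
        apply Finset.filter_false_of_mem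
        intro u _
        rintro ⟨h1, -⟩
        exact haa (Units.ext (by linear_combination h1))
    · have hBB : (b : ZMod p) - (b' : ZMod p) ≠ 0 :=
        sub_ne_zero.mpr (fun h => hbb (Units.ext h))
      by_cases haa : a = a'
      · -- a = a', b ≠ b' : no solutions
        subst haa
        rw [if_neg (by tauto), if_neg (by tauto)]
        rw [Finset.card_eq_zero]
        apply Finset.filter_false_of_mem
        intro u _
        rintro ⟨h1, -⟩
        apply hBB
        have h2 : (u : ZMod p) * ((b : ZMod p) - (b' : ZMod p)) = 0 := by linear_combination h1
        rcases mul_eq_zero.mp h2 with h | h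
        · exact absurd h u.ne_zero
        · exact h
      · -- a ≠ a', b ≠ b' : unique candidate
        have hAA : (a' : ZMod p) - (a : ZMod p) ≠ 0 :=
          sub_ne_zero.mpr (fun h => haa (Units.ext h.symm))
        set w : ZMod p := ((a' : ZMod p) - (a : ZMod p)) / ((b : ZMod p) - (b' : ZMod p)) with hw
        have hw0 : w ≠ 0 := div_ne_zero hAA hBB
        set u₁ : (ZMod p)ˣ := Units.mk0 w hw0 with hu₁
        have huniq : ∀ u : (ZMod p)ˣ,
            ((a : ZMod p) + (u : ZMod p) * (b : ZMod p)
              = (a' : ZMod p) + (u : ZMod p) * (b' : ZMod p)) ↔ u = u₁ := by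
          intro u
          rw [Units.ext_iff]
          show _ ↔ (u : ZMod p) = w
          rw [hw, eq_div_iff hBB]
          constructor
          · intro h; linear_combination h
          · intro h; linear_combination h
        have hval : (a : ZMod p) + (u₁ : ZMod p) * (b : ZMod p)
            = ((a' : ZMod p) * (b : ZMod p) - (a : ZMod p) * (b' : ZMod p))
              / ((b : ZMod p) - (b' : ZMod p)) := by
          show (a : ZMod p) + w * (b : ZMod p) = _
          rw [hw]
          field_simp
          ring
        by_cases hdet : (a' : ZMod p) * (b : ZMod p) ≠ (a : ZMod p) * (b' : ZMod p)
        · rw [if_neg (by tauto), if_pos ⟨haa, hbb, hdet⟩]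
          have hne : (a : ZMod p) + (u₁ : ZMod p) * (b : ZMod p) ≠ 0 := by
            rw [hval]
            exact div_ne_zero (sub_ne_zero.mpr hdet) hBB
          have : (univ.filter (fun u : (ZMod p)ˣ =>
              (a : ZMod p) + (u : ZMod p) * (b : ZMod p)
                = (a' : ZMod p) + (u : ZMod p) * (b' : ZMod p) ∧
              (a : ZMod p) + (u : ZMod p) * (b : ZMod p) ≠ 0)) = {u₁} := by
            ext u
            simp only [mem_filter, mem_univ, true_and, mem_singleton]
            constructor
            · rintro ⟨h1, -⟩; exact (huniq u).mp h1
            · rintro rfl; exact ⟨(huniq u₁).mpr rfl, hne⟩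
          rw [this, Finset.card_singleton]
        · push_neg at hdet
          rw [if_neg (by tauto), if_neg (by tauto)]
          rw [Finset.card_eq_zero]
          apply Finset.filter_false_of_mem
          intro u _
          rintro ⟨h1, h2⟩
          apply h2
          have hu := (huniq u).mp h1
          rw [hu, hval, hdet, sub_self, zero_div]
  -- the two cardinalities of quadruple classes
  have hcard1 : (Q.filter (fun q => q.1.1 = q.2.1 ∧ q.1.2 = q.2.2)).card = t * t := by
    rw [← hcardΓ, ← Finset.card_product]
    apply Finset.card_nbij' (fun q => q.1) (fun ab => (ab, ab))
    · intro q hq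
      simp only [mem_coe, hQ, mem_filter, mem_univ, true_and] at hq
      obtain ⟨⟨h1, h2, _, _⟩, _⟩ := hq
      simp only [mem_coe, mem_product, hΓF, mem_filter, mem_univ, true_and]
      exact ⟨h1, h2⟩
    · intro ab hab
      simp only [mem_coe, mem_product, hΓF, mem_filter, mem_univ, true_and] at hab
      simp only [mem_coe, hQ, mem_filter, mem_univ, true_and, and_true, and_self]
      exact ⟨hab.1, hab.2, hab.1, hab.2⟩
    · intro q hq
      simp only [mem_coe, mem_filter] at hq
      obtain ⟨-, h1, h2⟩ := hq
      have h3 : q.1 = q.2 := Prod.ext_iff.mpr ⟨h1, h2⟩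
      exact Prod.ext_iff.mpr ⟨rfl, h3⟩
    · intro ab _
      rfl
  have hcard2 : (Q.filter (fun q => q.1.1 ≠ q.2.1 ∧ q.1.2 ≠ q.2.2 ∧
      (q.2.1 : ZMod p) * (q.1.2 : ZMod p) ≠ (q.1.1 : ZMod p) * (q.2.2 : ZMod p))).card
      = (t * t) * ((t - 1) * (t - 2)) := by
    set R : Finset ((ZMod p)ˣ × (ZMod p)ˣ) :=
      (ΓF ×ˢ ΓF).filter (fun xy => xy.1 ≠ 1 ∧ xy.2 ≠ 1 ∧ xy.1 ≠ xy.2) with hR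
    have hRcard : R.card = (t - 1) * (t - 2) := by
      rw [hR, Finset.card_filter, Finset.sum_product]
      have hinner : ∀ x ∈ ΓF, (∑ y ∈ ΓF, if x ≠ 1 ∧ y ≠ 1 ∧ x ≠ y then 1 else 0)
          = if x = 1 then 0 else t - 2 := by
        intro x hx
        by_cases hx1 : x = 1
        · simp [hx1]
        · rw [if_neg hx1]
          rw [← Finset.card_filter]
          have : ΓF.filter (fun y => x ≠ 1 ∧ y ≠ 1 ∧ x ≠ y) = (ΓF.erase 1).erase x := by
            ext y
            simp only [mem_filter, mem_erase]
            constructor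
            · rintro ⟨hy, -, hy1, hxy⟩
              exact ⟨fun h => hxy h.symm, hy1, hy⟩
            · rintro ⟨hyx, hy1, hy⟩
              exact ⟨hy, hx1, hy1, fun h => hyx h.symm⟩
          rw [this, Finset.card_erase_of_mem (Finset.mem_erase.mpr ⟨hx1, hx⟩),
            Finset.card_erase_of_mem h1Γ, hcardΓ]
          omega
      rw [Finset.sum_congr rfl hinner]
      rw [Finset.sum_ite, Finset.sum_const, Finset.sum_const, smul_eq_mul, mul_zero, zero_add,
        smul_eq_mul]
      congr 1
      have : ΓF.filter (fun x => ¬x = 1) = ΓF.erase 1 := Finset.filter_ne' ΓF 1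
      rw [this, Finset.card_erase_of_mem h1Γ, hcardΓ]
    have hW : ((ΓF ×ˢ ΓF) ×ˢ R).card = (t * t) * ((t - 1) * (t - 2)) := by
      rw [Finset.card_product, Finset.card_product, hcardΓ, hRcard]
    rw [← hW]
    apply Finset.card_nbij' (fun q => (q.1, (q.2.1 / q.1.1, q.2.2 / q.1.2)))
      (fun w => (w.1, (w.2.1 * w.1.1, w.2.2 * w.1.2)))
    · rintro ⟨⟨a, b⟩, ⟨a', b'⟩⟩ hq
      simp only [mem_coe, hQ, mem_filter, mem_univ, true_and] at hq
      obtain ⟨⟨h1, h2, h3, h4⟩, hne1, hne2, hdet⟩ := hq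
      simp only [mem_coe, mem_product, hR, hΓF, mem_filter, mem_univ, true_and]
      refine ⟨⟨h1, h2⟩, ⟨div_mem h3 h1, div_mem h4 h2⟩, ?_, ?_, ?_⟩
      · rw [Ne, div_eq_one]
        exact fun h => hne1 h.symm
      · rw [Ne, div_eq_one]
        exact fun h => hne2 h.symm
      · intro h
        rw [div_eq_div_iff_mul_eq_mul] at h
        apply hdet
        have := congrArg Units.val h
        simp only [Units.val_mul] at this
        linear_combination this
    · rintro ⟨⟨a, b⟩, ⟨x, y⟩⟩ hw
      simp only [mem_coe, mem_product, hR, hΓF, mem_filter, mem_univ, true_and] at hw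
      obtain ⟨⟨h1, h2⟩, ⟨h3, h4⟩, hx1, hy1, hxy⟩ := hw
      simp only [mem_coe, hQ, mem_filter, mem_univ, true_and]
      refine ⟨⟨h1, h2, mul_mem h3 h1, mul_mem h4 h2⟩, ?_, ?_, ?_⟩
      · intro h
        exact hx1 (right_eq_mul.mp h)
      · intro h
        exact hy1 (right_eq_mul.mp h)
      · intro h
        simp only [Units.val_mul] at h
        apply hxy
        apply Units.ext
        have hb0 : (b : ZMod p) ≠ 0 := b.ne_zero
        have ha0 : (a : ZMod p) ≠ 0 := a.ne_zero
        have : (x : ZMod p) * ((a : ZMod p) * (b : ZMod p))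
            = (y : ZMod p) * ((a : ZMod p) * (b : ZMod p)) := by linear_combination h
        exact mul_right_cancel₀ (mul_ne_zero ha0 hb0) this
    · rintro ⟨⟨a, b⟩, ⟨a', b'⟩⟩ _
      simp [Prod.mk.injEq, div_mul_cancel]
    · rintro ⟨⟨a, b⟩, ⟨x, y⟩⟩ _
      simp [Prod.mk.injEq, mul_div_cancel_right]
  -- summation over Q
  have hD3 : ∑ q ∈ Q, T q = t * t * (p - 2) + (t * t) * ((t - 1) * (t - 2)) := by
    rw [Finset.sum_congr rfl (fun q _ => hD2 q), Finset.sum_ite]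
    congr 1
    · rw [Finset.sum_const, smul_eq_mul, hcard1]
    · rw [← hcard2, Finset.card_filter, Finset.sum_filter]
      apply Finset.sum_congr rfl
      intro q _
      by_cases h1 : q.1.1 = q.2.1 ∧ q.1.2 = q.2.2 <;>
        by_cases h2 : q.1.1 ≠ q.2.1 ∧ q.1.2 ≠ q.2.2 ∧
          (q.2.1 : ZMod p) * (q.1.2 : ZMod p) ≠ (q.1.1 : ZMod p) * (q.2.2 : ZMod p)
      · exact absurd h1.1 h2.1
      · simp [h1, h2]
      · simp [h1, h2]
      · simp [h1, h2]
  -- combine everything (in ℕ)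
  have hkey : ∑ m ∈ range d, ∑ n ∈ range d, (c m n) ^ 2 = (p - 2) + (t - 1) * (t - 2) := by
    have h1 : t * t * ∑ m ∈ range d, ∑ n ∈ range d, (S (g ^ m) (g ^ n)).card ^ 2
        = t * t * ((p - 2) + (t - 1) * (t - 2)) := by
      rw [← hC, hD1, hD3]; ring
    have h2 := Nat.eq_of_mul_eq_mul_left (show 0 < t * t by positivity) h1
    calc ∑ m ∈ range d, ∑ n ∈ range d, (c m n) ^ 2
        = ∑ m ∈ range d, ∑ n ∈ range d, (S (g ^ m) (g ^ n)).card ^ 2 := by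
          exact Finset.sum_congr rfl fun m _ => Finset.sum_congr rfl fun n _ => by rw [hc']
      _ = (p - 2) + (t - 1) * (t - 2) := h2
  -- cast to ℝ
  have hpr : (p : ℝ) = (d : ℝ) * (t : ℝ) + 1 := by
    have h := congrArg (Nat.cast : ℕ → ℝ) htd
    rw [Nat.cast_sub (by omega : 1 ≤ p)] at h
    push_cast at h
    linear_combination -h
  have hcast1 : ((p - 2 : ℕ) : ℝ) = (p : ℝ) - 2 := by
    rw [Nat.cast_sub (by omega : 2 ≤ p)]; norm_num
  have hcast2 : (((t - 1) * (t - 2) : ℕ) : ℝ) = ((t : ℝ) - 1) * ((t : ℝ) - 2) := by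
    rcases Nat.lt_or_ge t 2 with h | h
    · have ht1' : t = 1 := by omega
      rw [ht1']
      norm_num
    · rw [Nat.cast_mul, Nat.cast_sub (by omega : 1 ≤ t), Nat.cast_sub h]
      push_cast
      ring
  have hrw : (((∑ m ∈ range d, ∑ n ∈ range d, (c m n) ^ 2 : ℕ)) : ℝ)
      = ∑ m ∈ range d, ∑ n ∈ range d, (c m n : ℝ) ^ 2 := by
    push_cast
    rfl
  rw [← hrw, hkey, Nat.cast_add, hcast1, hcast2, hpr]
  have hd0 : (d : ℝ) ≠ 0 := Nat.cast_ne_zero.mpr (by omega)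
  field_simp
  ring
end

section
/- If d divides p-1, then ((d-1)p + 1)²/d³ ≤ V_4(p), and moreover V_4(p) ≤ ((d-1)(d² - 3d + 3)p² + 4(d-1)(d-2)p^{3/2} + 6(d-1)p + 1)/d³. -/
open Complex Finset

noncomputable def Ek (N : ℕ) : ℤ → ℂ := fun t => Complex.exp (2 * Real.pi * Complex.I / N) ^ t

lemma Ek_base_ne_zero (N : ℕ) : Complex.exp (2 * Real.pi * Complex.I / N) ≠ 0 :=
  Complex.exp_ne_zero _

lemma Ek_ne_zero (N : ℕ) (t : ℤ) : Ek N t ≠ 0 := zpow_ne_zero _ (Ek_base_ne_zero N)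

lemma Ek_add (N : ℕ) (a b : ℤ) : Ek N (a + b) = Ek N a * Ek N b :=
  zpow_add₀ (Ek_base_ne_zero N) a b

lemma Ek_zero (N : ℕ) : Ek N 0 = 1 := zpow_zero _

lemma Ek_eq_exp (N : ℕ) (t : ℤ) : Ek N t = Complex.exp (t * (2 * Real.pi * Complex.I / N)) := by
  rw [Ek, ← Complex.exp_int_mul]

lemma Ek_eq_one_iff {N : ℕ} (hN : 0 < N) (t : ℤ) : Ek N t = 1 ↔ (N : ℤ) ∣ t := by
  have hN' : (N : ℂ) ≠ 0 := Nat.cast_ne_zero.mpr hN.ne'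
  rw [Ek_eq_exp, Complex.exp_eq_one_iff]
  constructor
  · rintro ⟨m, hm⟩
    refine ⟨m, ?_⟩
    have h2 : (2 * Real.pi * Complex.I : ℂ) ≠ 0 := by
      simp [Real.pi_ne_zero, Complex.I_ne_zero]
    have h3 : (2 * Real.pi * Complex.I / N : ℂ) ≠ 0 := div_ne_zero h2 hN'
    have h4 : ((t : ℂ) - N * m) * (2 * Real.pi * Complex.I / N) = 0 := by
      rw [sub_mul, hm]
      field_simp
      ring
    have h5 := (mul_eq_zero.mp h4).resolve_right h3
    exact_mod_cast sub_eq_zero.mp h5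
  · rintro ⟨m, rfl⟩
    exact ⟨m, by field_simp; simp⟩

lemma Ek_congr {N : ℕ} (hN : 0 < N) {a b : ℤ} (h : a ≡ b [ZMOD N]) : Ek N a = Ek N b := by
  have : Ek N (a - b) = 1 := (Ek_eq_one_iff hN _).mpr (Int.ModEq.dvd h.symm)
  have h2 := Ek_add N (a - b) b
  rw [sub_add_cancel] at h2
  rw [h2, this, one_mul]

lemma Ek_conj (N : ℕ) (t : ℤ) : (starRingEnd ℂ) (Ek N t) = Ek N (-t) := by
  rw [Ek, Ek, map_zpow₀, ← Complex.exp_conj, zpow_neg, ← inv_zpow, ← Complex.exp_neg]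
  congr 2
  simp [map_div₀, Complex.conj_I, map_ofNat]
  ring

lemma Ek_geom {d : ℕ} (hd : 0 < d) {N : ℕ} (hdN : d ∣ N) (t : ℤ) :
    ∑ l ∈ Finset.range N, Ek d (t * l) = if (d : ℤ) ∣ t then (N : ℂ) else 0 := by
  by_cases h : (d : ℤ) ∣ t
  · simp only [h, if_true]
    have : ∀ l ∈ Finset.range N, Ek d (t * l) = 1 := by
      intro l _
      exact (Ek_eq_one_iff hd _).mpr (h.mul_right _)
    rw [Finset.sum_congr rfl this]
    simp
  · simp only [h, if_false]
    have hb : Ek d t ≠ 1 := fun hh => h ((Ek_eq_one_iff hd t).mp hh)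
    have hrw : ∀ l ∈ Finset.range N, Ek d (t * l) = (Ek d t) ^ l := by
      intro l _
      rw [Ek, Ek, ← zpow_natCast _ l, ← zpow_mul]
    rw [Finset.sum_congr rfl hrw, geom_sum_eq hb N]
    obtain ⟨c, rfl⟩ := hdN
    have h1 : Ek d t ^ (d * c) = 1 := by
      have he : Ek d t ^ (d * c) = Ek d (t * ((d * c : ℕ) : ℤ)) := by
        rw [Ek, ← zpow_natCast, ← zpow_mul]
        rfl
      rw [he]
      exact (Ek_eq_one_iff hd _).mpr ⟨t * c, by push_cast; ring⟩
    rw [h1, sub_self, zero_div]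

open Finset

section Counting

variable {d : ℕ}

lemma t0_lt (hd : 0 < d) (c : ℤ) : (c % d).toNat < d := by
  have hd' : (d : ℤ) ≠ 0 := by exact_mod_cast hd.ne'
  have h1 : 0 ≤ c % d := Int.emod_nonneg c hd'
  have h2 : c % d < d := Int.emod_lt_of_pos c (by exact_mod_cast hd)
  omega

lemma t0_dvd (hd : 0 < d) (c : ℤ) : (d : ℤ) ∣ (c - ((c % d).toNat : ℤ)) := by
  have hd' : (d : ℤ) ≠ 0 := by exact_mod_cast hd.ne'
  have h1 : 0 ≤ c % d := Int.emod_nonneg c hd'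
  rw [Int.toNat_of_nonneg h1]
  exact ⟨c / d, by rw [Int.emod_def]; ring⟩

lemma t0_ne_zero (hd : 0 < d) {c : ℤ} (hc : ¬ (d : ℤ) ∣ c) : (c % d).toNat ≠ 0 := by
  intro h
  apply hc
  have := t0_dvd hd c
  rw [h] at this
  simpa using this

lemma dvd_unique (hd : 0 < d) (c : ℤ) {t : ℕ} (ht : t < d) :
    (d : ℤ) ∣ (c - t) ↔ t = (c % d).toNat := by
  constructor
  · intro h
    have h2 := t0_dvd hd c
    have h3 : (d : ℤ) ∣ ((t : ℤ) - ((c % d).toNat : ℤ)) := by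
      have h4 := dvd_sub h2 h
      have h5 : (c - ((c % d).toNat : ℤ)) - (c - t) = (t : ℤ) - ((c % d).toNat : ℤ) := by ring
      rwa [h5] at h4
    obtain ⟨m, hm⟩ := h3
    have hlt := t0_lt hd c
    have hb1 : (t : ℤ) - ((c % d).toNat : ℤ) < d := by omega
    have hb2 : -(d : ℤ) < (t : ℤ) - ((c % d).toNat : ℤ) := by omega
    have hm0 : m = 0 := by
      rcases lt_trichotomy m 0 with h | h | h
      · nlinarith [hm, hb2]
      · exact h
      · nlinarith [hm, hb1]
    rw [hm0, mul_zero] at hm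
    omega
  · rintro rfl
    exact t0_dvd hd c

lemma collapse_sum {M : Type*} [AddCommMonoid M] (hd : 0 < d) (c : ℤ) (f : ℕ → M) :
    ∑ t ∈ Finset.range d, (if (d : ℤ) ∣ (c - t) then f t else 0) = f ((c % d).toNat) := by
  have : ∀ t ∈ Finset.range d, (if (d : ℤ) ∣ (c - t) then f t else 0)
      = if t = (c % d).toNat then f t else 0 := by
    intro t ht
    exact if_congr (dvd_unique hd c (Finset.mem_range.mp ht)) rfl rfl
  rw [Finset.sum_congr rfl this, Finset.sum_ite_eq' (Finset.range d)]
  simp [Finset.mem_range, t0_lt hd c]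

lemma sum_range_split2 {M : Type*} [AddCommMonoid M] (hd : 0 < d) (f : ℕ → M) :
    ∑ t ∈ Finset.range d, f t = f 0 + ∑ t ∈ (Finset.range d).erase 0, f t :=
  (Finset.add_sum_erase _ f (Finset.mem_range.mpr hd)).symm

lemma sum_range_split3 {M : Type*} [AddCommMonoid M] (t₀ : ℕ) (h0 : t₀ ≠ 0) (ht : t₀ < d)
    (f : ℕ → M) :
    ∑ t ∈ Finset.range d, f t
      = f 0 + (f t₀ + ∑ t ∈ ((Finset.range d).erase 0).erase t₀, f t) := by
  rw [sum_range_split2 (by omega) f]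
  congr 1
  exact (Finset.add_sum_erase _ f (by simp [Finset.mem_erase, h0, Finset.mem_range, ht])).symm

/-- `q` function -/
noncomputable def qd (d : ℕ) (r : ℝ) (t : ℤ) : ℝ := if (d : ℤ) ∣ t then 1 else r

lemma qd_congr (c t : ℤ) (h : (d : ℤ) ∣ (c - t)) (r : ℝ) : qd d r t = qd d r c := by
  unfold qd
  congr 1
  simp only [eq_iff_iff]
  constructor
  · intro h2; have := dvd_add h h2; simpa using this
  · intro h2; have := dvd_sub h2 h; simpa using this

lemma qd_zero_nat (r : ℝ) : qd d r ((0 : ℕ) : ℤ) = 1 := by simp [qd]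

lemma qd_small {t : ℕ} (h0 : t ≠ 0) (ht : t < d) (r : ℝ) : qd d r t = r := by
  unfold qd
  rw [if_neg]
  intro hdvd
  have := Int.le_of_dvd (by exact_mod_cast Nat.pos_of_ne_zero h0) hdvd
  omega

lemma sum_erase0_const (hd : 1 ≤ d) (c : ℝ) :
    ∑ _t ∈ (Finset.range d).erase 0, c = ((d : ℝ) - 1) * c := by
  rw [Finset.sum_const, Finset.card_erase_of_mem (Finset.mem_range.mpr (by omega)),
    Finset.card_range, nsmul_eq_mul]
  have : ((d - 1 : ℕ) : ℝ) = (d : ℝ) - 1 := by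
    push_cast [Nat.cast_sub hd]; ring
  rw [this]

lemma sum_erase01_const {t₀ : ℕ} (hd : 2 ≤ d) (h0 : t₀ ≠ 0) (ht : t₀ < d) (c : ℝ) :
    ∑ _t ∈ ((Finset.range d).erase 0).erase t₀, c = ((d : ℝ) - 2) * c := by
  rw [Finset.sum_const, Finset.card_erase_of_mem
    (by simp [Finset.mem_erase, h0, Finset.mem_range, ht]),
    Finset.card_erase_of_mem (Finset.mem_range.mpr (by omega)), Finset.card_range, nsmul_eq_mul]
  have : ((d - 1 - 1 : ℕ) : ℝ) = (d : ℝ) - 2 := by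
    have : 2 ≤ d := hd
    push_cast [Nat.cast_sub (by omega : 1 ≤ d - 1), Nat.cast_sub (by omega : 1 ≤ d)]
    ring
  rw [this]

lemma not_dvd_small {t : ℕ} (h0 : t ≠ 0) (ht : t < d) : ¬ (d : ℤ) ∣ (t : ℤ) := by
  intro hdvd
  have := Int.le_of_dvd (by exact_mod_cast Nat.pos_of_ne_zero h0) hdvd
  omega

lemma counting_L1 (hd : 2 < d) (r : ℝ) (c : ℤ) :
    ∑ t ∈ Finset.range d, qd d r t * qd d r (c - t)
      = if (d : ℤ) ∣ c then 1 + ((d : ℝ) - 1) * (r * r) else 2 * r + ((d : ℝ) - 2) * (r * r) := by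
  by_cases hc : (d : ℤ) ∣ c
  · rw [if_pos hc, sum_range_split2 (by omega : 0 < d)]
    have h0 : qd d r ((0 : ℕ) : ℤ) * qd d r (c - ((0 : ℕ) : ℤ)) = 1 := by
      rw [qd_zero_nat]
      have : qd d r (c - ((0 : ℕ) : ℤ)) = 1 := by
        rw [show ((0 : ℕ) : ℤ) = 0 from rfl, sub_zero]
        simp [qd, hc]
      rw [this, one_mul]
    rw [h0]
    have hrest : ∀ t ∈ (Finset.range d).erase 0, qd d r t * qd d r (c - t) = r * r := by
      intro t htm
      obtain ⟨ht0, htr⟩ := Finset.mem_erase.mp htm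
      have htd := Finset.mem_range.mp htr
      have hnd : ¬ (d : ℤ) ∣ (c - t) := by
        intro h
        have h2 := dvd_sub hc h
        have h3 : c - (c - t) = (t : ℤ) := by ring
        rw [h3] at h2
        exact not_dvd_small ht0 htd h2
      rw [qd_small ht0 htd, qd, if_neg hnd]
    rw [Finset.sum_congr rfl hrest, sum_erase0_const (by omega : 1 ≤ d)]
  · rw [if_neg hc]
    set t₀ := (c % d).toNat with ht₀
    have h0 : t₀ ≠ 0 := t0_ne_zero (by omega) hc
    have hlt : t₀ < d := t0_lt (by omega) c
    rw [sum_range_split3 t₀ h0 hlt]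
    have hz : qd d r ((0 : ℕ) : ℤ) * qd d r (c - ((0 : ℕ) : ℤ)) = r := by
      rw [qd_zero_nat, show ((0 : ℕ) : ℤ) = 0 from rfl, sub_zero, qd, if_neg hc, one_mul]
    have ht0v : qd d r (t₀ : ℤ) * qd d r (c - t₀) = r := by
      rw [qd_small h0 hlt, qd, if_pos (t0_dvd (by omega) c), mul_one]
    have hrest : ∀ t ∈ ((Finset.range d).erase 0).erase t₀,
        qd d r t * qd d r (c - t) = r * r := by
      intro t htm
      obtain ⟨htt0, htm2⟩ := Finset.mem_erase.mp htm
      obtain ⟨ht0, htr⟩ := Finset.mem_erase.mp htm2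
      have htd := Finset.mem_range.mp htr
      have hnd : ¬ (d : ℤ) ∣ (c - t) := by
        intro h
        exact htt0 ((dvd_unique (by omega) c htd).mp h)
      rw [qd_small ht0 htd, qd, if_neg hnd]
    rw [hz, ht0v, Finset.sum_congr rfl hrest,
      sum_erase01_const (by omega : 2 ≤ d) h0 hlt]
    ring

lemma counting_L2 (hd : 2 < d) (r : ℝ) (c : ℤ) (A C : ℝ) :
    ∑ t ∈ Finset.range d, qd d r t * (if (d : ℤ) ∣ (c + t) then A else C)
      = if (d : ℤ) ∣ c then A + ((d : ℝ) - 1) * (r * C)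
        else C + r * A + ((d : ℝ) - 2) * (r * C) := by
  by_cases hc : (d : ℤ) ∣ c
  · rw [if_pos hc, sum_range_split2 (by omega : 0 < d)]
    have h0 : qd d r ((0 : ℕ) : ℤ) * (if (d : ℤ) ∣ (c + ((0 : ℕ) : ℤ)) then A else C) = A := by
      rw [qd_zero_nat, show ((0 : ℕ) : ℤ) = 0 from rfl, add_zero, if_pos hc, one_mul]
    rw [h0]
    have hrest : ∀ t ∈ (Finset.range d).erase 0,
        qd d r t * (if (d : ℤ) ∣ (c + t) then A else C) = r * C := by
      intro t htm
      obtain ⟨ht0, htr⟩ := Finset.mem_erase.mp htm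
      have htd := Finset.mem_range.mp htr
      have hnd : ¬ (d : ℤ) ∣ (c + t) := by
        intro h
        have h2 := dvd_sub h hc
        have h3 : c + t - c = (t : ℤ) := by ring
        rw [h3] at h2
        exact not_dvd_small ht0 htd h2
      rw [qd_small ht0 htd, if_neg hnd]
    rw [Finset.sum_congr rfl hrest, sum_erase0_const (by omega : 1 ≤ d)]
  · rw [if_neg hc]
    have hc' : ¬ (d : ℤ) ∣ (-c) := fun h => hc (by simpa using h.neg_right)
    set t₀ := ((-c) % d).toNat with ht₀
    have h0 : t₀ ≠ 0 := t0_ne_zero (by omega) hc'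
    have hlt : t₀ < d := t0_lt (by omega) (-c)
    have hkey : ∀ t : ℕ, t < d → ((d : ℤ) ∣ (c + t) ↔ t = t₀) := by
      intro t htd
      rw [← dvd_unique (by omega : 0 < d) (-c) htd]
      constructor
      · intro h
        have h2 := h.neg_right
        have h3 : -(c + t) = -c - (t : ℤ) := by ring
        rwa [h3] at h2
      · intro h
        have h2 := h.neg_right
        have h3 : -(-c - t) = c + (t : ℤ) := by ring
        rwa [h3] at h2
    rw [sum_range_split3 t₀ h0 hlt]
    have hz : qd d r ((0 : ℕ) : ℤ) * (if (d : ℤ) ∣ (c + ((0 : ℕ) : ℤ)) then A else C) = C := by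
      rw [qd_zero_nat, show ((0 : ℕ) : ℤ) = 0 from rfl, add_zero, if_neg hc, one_mul]
    have ht0v : qd d r (t₀ : ℤ) * (if (d : ℤ) ∣ (c + (t₀ : ℤ)) then A else C) = r * A := by
      rw [qd_small h0 hlt, if_pos ((hkey t₀ hlt).mpr rfl)]
    have hrest : ∀ t ∈ ((Finset.range d).erase 0).erase t₀,
        qd d r t * (if (d : ℤ) ∣ (c + t) then A else C) = r * C := by
      intro t htm
      obtain ⟨htt0, htm2⟩ := Finset.mem_erase.mp htm
      obtain ⟨ht0, htr⟩ := Finset.mem_erase.mp htm2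
      have htd := Finset.mem_range.mp htr
      rw [qd_small ht0 htd, if_neg (fun h => htt0 ((hkey t htd).mp h))]
    rw [hz, ht0v, Finset.sum_congr rfl hrest,
      sum_erase01_const (by omega : 2 ≤ d) h0 hlt]
    ring

lemma counting_L3 (hd : 2 < d) (r : ℝ) :
    ∑ t1 ∈ Finset.range d, ∑ t2 ∈ Finset.range d, ∑ t3 ∈ Finset.range d,
        qd d r t1 * qd d r t2 * qd d r t3 * qd d r ((t1 : ℤ) + t2 - t3)
      = 1 + 6 * ((d : ℝ) - 1) * (r * r)
        + 4 * ((d : ℝ) - 1) * ((d : ℝ) - 2) * (r * r * r)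
        + ((d : ℝ) - 1) * ((d : ℝ) ^ 2 - 3 * d + 3) * (r * r * (r * r)) := by
  set A : ℝ := 1 + ((d : ℝ) - 1) * (r * r) with hA
  set C : ℝ := 2 * r + ((d : ℝ) - 2) * (r * r) with hC
  have step3 : ∀ t1 t2 : ℕ, ∑ t3 ∈ Finset.range d,
      qd d r t1 * qd d r t2 * qd d r t3 * qd d r ((t1 : ℤ) + t2 - t3)
      = qd d r t1 * qd d r t2 * (if (d : ℤ) ∣ ((t1 : ℤ) + t2) then A else C) := by
    intro t1 t2
    rw [← counting_L1 hd r ((t1 : ℤ) + t2), Finset.mul_sum]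
    exact Finset.sum_congr rfl fun t3 _ => by ring
  have step2 : ∀ t1 : ℕ, ∑ t2 ∈ Finset.range d,
      qd d r t1 * qd d r t2 * (if (d : ℤ) ∣ ((t1 : ℤ) + t2) then A else C)
      = qd d r t1 * (if (d : ℤ) ∣ (t1 : ℤ) then A + ((d : ℝ) - 1) * (r * C)
          else C + r * A + ((d : ℝ) - 2) * (r * C)) := by
    intro t1
    rw [← counting_L2 hd r (t1 : ℤ) A C, Finset.mul_sum]
    exact Finset.sum_congr rfl fun t2 _ => by ring
  calc ∑ t1 ∈ Finset.range d, ∑ t2 ∈ Finset.range d, ∑ t3 ∈ Finset.range d,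
        qd d r t1 * qd d r t2 * qd d r t3 * qd d r ((t1 : ℤ) + t2 - t3)
      = ∑ t1 ∈ Finset.range d, qd d r t1 *
          (if (d : ℤ) ∣ (t1 : ℤ) then A + ((d : ℝ) - 1) * (r * C)
            else C + r * A + ((d : ℝ) - 2) * (r * C)) := by
        refine Finset.sum_congr rfl fun t1 _ => ?_
        rw [← step2 t1]
        exact Finset.sum_congr rfl fun t2 _ => step3 t1 t2
    _ = (A + ((d : ℝ) - 1) * (r * C))
          + ((d : ℝ) - 1) * (r * (C + r * A + ((d : ℝ) - 2) * (r * C))) := by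
        rw [sum_range_split2 (by omega : 0 < d)]
        have h0 : qd d r ((0 : ℕ) : ℤ) * (if (d : ℤ) ∣ ((0 : ℕ) : ℤ) then
            A + ((d : ℝ) - 1) * (r * C) else C + r * A + ((d : ℝ) - 2) * (r * C))
            = A + ((d : ℝ) - 1) * (r * C) := by
          rw [qd_zero_nat, if_pos (by simp), one_mul]
        rw [h0]
        have hrest : ∀ t ∈ (Finset.range d).erase 0,
            qd d r t * (if (d : ℤ) ∣ (t : ℤ) then A + ((d : ℝ) - 1) * (r * C)
              else C + r * A + ((d : ℝ) - 2) * (r * C))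
            = r * (C + r * A + ((d : ℝ) - 2) * (r * C)) := by
          intro t htm
          obtain ⟨ht0, htr⟩ := Finset.mem_erase.mp htm
          have htd := Finset.mem_range.mp htr
          rw [qd_small ht0 htd, if_neg (not_dvd_small ht0 htd)]
        rw [Finset.sum_congr rfl hrest, sum_erase0_const (by omega : 1 ≤ d)]
    _ = _ := by rw [hA, hC]; ring

end Counting
section Arith

open Complex Finset

/-- additive character -/
noncomputable def ee (p : ℕ) (x : ZMod p) : ℂ := Ek p (x.val : ℤ)

/-- the Gauss sums -/
noncomputable def SS (p d k : ℕ) (g : (ZMod p)ˣ) (t : ℤ) : ℂ :=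
  ∑ m ∈ Finset.range (d * k), Ek d (t * m) * ee p ((g ^ m : (ZMod p)ˣ) : ZMod p)

variable {p d k : ℕ} {g : (ZMod p)ˣ}

lemma ee_add (hp : 1 < p) (x y : ZMod p) : ee p (x + y) = ee p x * ee p y := by
  haveI : NeZero p := ⟨by omega⟩
  rw [ee, ee, ee, ← Ek_add]
  apply Ek_congr (by omega : 0 < p)
  rw [ZMod.val_add]
  have h : (((x.val + y.val) % p : ℕ) : ℤ) = ((x.val + y.val : ℕ) : ℤ) % p := by
    push_cast; rfl
  rw [Int.ModEq, h, Int.emod_emod_of_dvd _ dvd_rfl]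
  push_cast; rfl

lemma ee_zero (hp : 1 < p) : ee p (0 : ZMod p) = 1 := by
  haveI : NeZero p := ⟨by omega⟩
  rw [ee, ZMod.val_zero]
  exact Ek_zero p

lemma ee_ne_zero (x : ZMod p) : ee p x ≠ 0 := Ek_ne_zero _ _

lemma ee_neg (hp : 1 < p) (x : ZMod p) : ee p (-x) = (ee p x)⁻¹ := by
  have h := ee_add hp x (-x)
  rw [add_neg_cancel, ee_zero hp] at h
  field_simp [ee_ne_zero x]
  linear_combination -h

lemma ee_conj (x : ZMod p) : (starRingEnd ℂ) (ee p x) = (ee p x)⁻¹ := by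
  rw [ee, Ek_conj, Ek, Ek, zpow_neg]

lemma sum_ee_all [NeZero p] (hp : 1 < p) : ∑ x : ZMod p, ee p x = 0 := by
  have h1 : ∑ x : ZMod p, ee p x = ∑ v ∈ Finset.range p, Ek p (v : ℤ) := by
    refine Finset.sum_nbij' (fun x => x.val) (fun v => (v : ZMod p)) ?_ ?_ ?_ ?_ ?_
    · intro x _; exact Finset.mem_range.mpr (ZMod.val_lt x)
    · intro v _; exact Finset.mem_univ _
    · intro x _; exact ZMod.natCast_rightInverse x
    · intro v hv; exact ZMod.val_cast_of_lt (Finset.mem_range.mp hv)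
    · intro x _; rfl
  rw [h1]
  have h2 : ∀ v ∈ Finset.range p, Ek p (v : ℤ) = Ek p ((1 : ℤ) * v) := by
    intro v _; rw [one_mul]
  rw [Finset.sum_congr rfl h2, Ek_geom (by omega : 0 < p) dvd_rfl]
  rw [if_neg]
  intro h
  have := Int.le_of_dvd one_pos h
  omega

lemma sum_ee_mul [NeZero p] (hpp : p.Prime) (c : ZMod p) :
    ∑ x : ZMod p, ee p (x * c) = if c = 0 then (p : ℂ) else 0 := by
  haveI : Fact p.Prime := ⟨hpp⟩
  have hp : 1 < p := hpp.one_lt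
  by_cases hc : c = 0
  · subst hc
    simp only [mul_zero, ee_zero hp, Finset.sum_const, Finset.card_univ, ZMod.card, if_true]
    simp
  · rw [if_neg hc, ← sum_ee_all hp]
    exact Fintype.sum_equiv (Equiv.mulRight₀ c hc) _ _ (fun x => rfl)

lemma uu_order (hp : p.Prime) (hg : ∀ x : (ZMod p)ˣ, x ∈ Subgroup.zpowers g)
    (hn : d * k = p - 1) : orderOf g = d * k := by
  haveI : Fact p.Prime := ⟨hp⟩
  rw [orderOf_eq_card_of_forall_mem_zpowers hg, Nat.card_eq_fintype_card, ZMod.card_units p, hn]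

lemma uu_injOn (hp : p.Prime) (hg : ∀ x : (ZMod p)ˣ, x ∈ Subgroup.zpowers g)
    (hn : d * k = p - 1) :
    ∀ m ∈ Finset.range (d * k), ∀ m' ∈ Finset.range (d * k),
      ((g ^ m : (ZMod p)ˣ) : ZMod p) = ((g ^ m' : (ZMod p)ˣ) : ZMod p) → m = m' := by
  intro m hm m' hm' h
  have hmm : g ^ m = g ^ m' := Units.ext h
  have ho := uu_order hp hg hn
  exact pow_injOn_Iio_orderOf (by rw [Set.mem_Iio, ho]; exact Finset.mem_range.mp hm)
    (by rw [Set.mem_Iio, ho]; exact Finset.mem_range.mp hm') hmm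

lemma uu_image [NeZero p] (hp : p.Prime) (hg : ∀ x : (ZMod p)ˣ, x ∈ Subgroup.zpowers g)
    (hn : d * k = p - 1) :
    (Finset.range (d * k)).image (fun m => ((g ^ m : (ZMod p)ˣ) : ZMod p))
      = Finset.univ.erase (0 : ZMod p) := by
  haveI : Fact p.Prime := ⟨hp⟩
  apply Finset.eq_of_subset_of_card_le
  · intro x hx
    obtain ⟨m, _, rfl⟩ := Finset.mem_image.mp hx
    exact Finset.mem_erase.mpr ⟨Units.ne_zero _, Finset.mem_univ _⟩
  · rw [Finset.card_erase_of_mem (Finset.mem_univ _), Finset.card_univ, ZMod.card,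
      Finset.card_image_of_injOn (fun m hm m' hm' h => uu_injOn hp hg hn m hm m' hm' h),
      Finset.card_range, hn]

lemma sum_uu [NeZero p] (hp : p.Prime) (hg : ∀ x : (ZMod p)ˣ, x ∈ Subgroup.zpowers g)
    (hn : d * k = p - 1) (f : ZMod p → ℂ) :
    ∑ m ∈ Finset.range (d * k), f ((g ^ m : (ZMod p)ˣ) : ZMod p)
      = ∑ x ∈ Finset.univ.erase (0 : ZMod p), f x := by
  haveI : Fact p.Prime := ⟨hp⟩
  rw [← uu_image hp hg hn,
    Finset.sum_image (fun m hm m' hm' h => uu_injOn hp hg hn m hm m' hm' h)]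

lemma sum_uu_mul [NeZero p] (hp : p.Prime) (hg : ∀ x : (ZMod p)ˣ, x ∈ Subgroup.zpowers g)
    (hn : d * k = p - 1) (c : ZMod p) :
    ∑ m ∈ Finset.range (d * k), ee p (((g ^ m : (ZMod p)ˣ) : ZMod p) * c)
      = (if c = 0 then (p : ℂ) else 0) - 1 := by
  haveI : Fact p.Prime := ⟨hp⟩
  have hp1 : 1 < p := hp.one_lt
  rw [sum_uu hp hg hn (fun x => ee p (x * c))]
  have h := Finset.add_sum_erase Finset.univ (fun x : ZMod p => ee p (x * c))
    (Finset.mem_univ (0 : ZMod p))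
  have h0 : ee p ((0 : ZMod p) * c) = 1 := by rw [zero_mul, ee_zero hp1]
  rw [h0] at h
  have h2 := sum_ee_mul hp c
  linear_combination h + h2

end Arith
section Layer4

open Complex Finset

lemma sum_range_mul_add {M : Type*} [AddCommMonoid M] (d k : ℕ) (f : ℕ → M) :
    ∑ m ∈ Finset.range (d * k), f m
      = ∑ a ∈ Finset.range d, ∑ j ∈ Finset.range k, f (d * j + a) := by
  induction k with
  | zero => simp
  | succ k ih =>
    rw [Nat.mul_succ, Finset.sum_range_add, ih]
    have : ∀ a ∈ Finset.range d, ∑ j ∈ Finset.range (k + 1), f (d * j + a)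
        = (∑ j ∈ Finset.range k, f (d * j + a)) + f (d * k + a) := by
      intro a _
      rw [Finset.sum_range_succ]
    rw [Finset.sum_congr rfl this, Finset.sum_add_distrib]

variable {p d k : ℕ} {g : (ZMod p)ˣ}

lemma SS_shift (hp : p.Prime) (hg : ∀ x : (ZMod p)ˣ, x ∈ Subgroup.zpowers g)
    (hn : d * k = p - 1) (hd : 0 < d) (hk : 0 < k) (t : ℤ) {s : ℕ} (hs : s < d * k) :
    SS p d k g t = ∑ l ∈ Finset.range (d * k),
      Ek d (t * (l + s)) * ee p ((g ^ (l + s) : (ZMod p)ˣ) : ZMod p) := by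
  set n := d * k with hnn
  have hn0 : 0 < n := by positivity
  rw [SS]
  refine Finset.sum_nbij' (fun m => (m + (n - s)) % n) (fun l => (l + s) % n) ?_ ?_ ?_ ?_ ?_
  · intro m _; exact Finset.mem_range.mpr (Nat.mod_lt _ hn0)
  · intro l _; exact Finset.mem_range.mpr (Nat.mod_lt _ hn0)
  · intro m hm
    have hm' := Finset.mem_range.mp hm
    rw [Nat.mod_add_mod]
    have : m + (n - s) + s = m + n := by omega
    rw [this, Nat.add_mod_right, Nat.mod_eq_of_lt hm']
  · intro l hl
    have hl' := Finset.mem_range.mp hl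
    rw [Nat.mod_add_mod]
    have : l + s + (n - s) = l + n := by omega
    rw [this, Nat.add_mod_right, Nat.mod_eq_of_lt hl']
  · intro m hm
    -- f m = g' (i m) : Ek d (t*m) * ee (g^m) = Ek d (t*((i m)+s)) * ee (g^((i m)+s))
    have key : ∀ a b : ℕ, a % n = b % n →
        Ek d (t * a) * ee p ((g ^ a : (ZMod p)ˣ) : ZMod p)
          = Ek d (t * b) * ee p ((g ^ b : (ZMod p)ˣ) : ZMod p) := by
      intro a b hab
      have h1 : g ^ a = g ^ b := by
        rw [← pow_mod_orderOf g a, ← pow_mod_orderOf g b, uu_order hp hg hn, ← hnn, hab]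
      have h2 : Ek d (t * a) = Ek d (t * b) := by
        apply Ek_congr hd
        have hd1 : (d : ℤ) ∣ ((a : ℤ) - b) := by
          have : (n : ℤ) ∣ ((a : ℤ) - b) := by
            exact Nat.ModEq.dvd (Nat.ModEq.symm (show a ≡ b [MOD n] from hab))
          obtain ⟨c, hc⟩ := this
          exact ⟨k * c, by rw [hc, hnn]; push_cast; ring⟩
        obtain ⟨c, hc⟩ := hd1
        exact Int.ModEq.symm (Int.modEq_iff_dvd.mpr ⟨t * c, by linear_combination t * hc⟩)
      rw [h1, h2]
    have hmod : m % n = ((m + (n - s)) % n + s) % n := by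
      rw [Nat.mod_add_mod]
      have : m + (n - s) + s = m + n := by omega
      rw [this, Nat.add_mod_right]
    exact key m ((m + (n - s)) % n + s) hmod

end Layer4
section Layer5

open Complex Finset

variable {p d k : ℕ} {g : (ZMod p)ˣ}

lemma SS_conj (t : ℤ) :
    (starRingEnd ℂ) (SS p d k g t)
      = ∑ m ∈ Finset.range (d * k), Ek d (-(t * m)) * (ee p ((g ^ m : (ZMod p)ˣ) : ZMod p))⁻¹ := by
  rw [SS, map_sum]
  refine Finset.sum_congr rfl fun m _ => ?_
  rw [map_mul, Ek_conj, ee_conj]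

lemma SS_mul_conj [NeZero p] (hp : p.Prime) (hg : ∀ x : (ZMod p)ˣ, x ∈ Subgroup.zpowers g)
    (hn : d * k = p - 1) (hd : 0 < d) (hk : 0 < k) (t : ℤ) :
    SS p d k g t * (starRingEnd ℂ) (SS p d k g t)
      = (p : ℂ) - (if (d : ℤ) ∣ t then ((d * k : ℕ) : ℂ) else 0) := by
  have hp1 : 1 < p := hp.one_lt
  have hn0 : 0 < d * k := by positivity
  rw [mul_comm, SS_conj, Finset.sum_mul]
  have step1 : ∀ s ∈ Finset.range (d * k),
      (Ek d (-(t * s)) * (ee p ((g ^ s : (ZMod p)ˣ) : ZMod p))⁻¹) * SS p d k g t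
        = ∑ l ∈ Finset.range (d * k),
            Ek d (t * l) * ee p (((g ^ s : (ZMod p)ˣ) : ZMod p)
              * (((g ^ l : (ZMod p)ˣ) : ZMod p) - 1)) := by
    intro s hs
    rw [SS_shift hp hg hn hd hk t (Finset.mem_range.mp hs), Finset.mul_sum]
    refine Finset.sum_congr rfl fun l _ => ?_
    have hEk : Ek d (-(t * s)) * Ek d (t * ((l + s : ℕ) : ℤ)) = Ek d (t * l) := by
      rw [← Ek_add]
      congr 1
      push_cast
      ring
    have hx : ((g ^ (l + s) : (ZMod p)ˣ) : ZMod p)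
        = ((g ^ s : (ZMod p)ˣ) : ZMod p) * ((g ^ l : (ZMod p)ˣ) : ZMod p) := by
      rw [pow_add, Units.val_mul, mul_comm]
    have hee : ee p ((g ^ (l + s) : (ZMod p)ˣ) : ZMod p)
        * (ee p ((g ^ s : (ZMod p)ˣ) : ZMod p))⁻¹
        = ee p (((g ^ s : (ZMod p)ˣ) : ZMod p) * (((g ^ l : (ZMod p)ˣ) : ZMod p) - 1)) := by
      have hsplit : ((g ^ s : (ZMod p)ˣ) : ZMod p) * (((g ^ l : (ZMod p)ˣ) : ZMod p) - 1)
          + ((g ^ s : (ZMod p)ˣ) : ZMod p) = ((g ^ (l + s) : (ZMod p)ˣ) : ZMod p) := by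
        rw [hx]; ring
      rw [← hsplit, ee_add hp1]
      field_simp [ee_ne_zero]
    calc Ek d (-(t * ↑s)) * (ee p ((g ^ s : (ZMod p)ˣ) : ZMod p))⁻¹
          * (Ek d (t * ((l + s : ℕ) : ℤ)) * ee p ((g ^ (l + s) : (ZMod p)ˣ) : ZMod p))
        = (Ek d (-(t * s)) * Ek d (t * ((l + s : ℕ) : ℤ)))
            * (ee p ((g ^ (l + s) : (ZMod p)ˣ) : ZMod p)
              * (ee p ((g ^ s : (ZMod p)ˣ) : ZMod p))⁻¹) := by ring
      _ = _ := by rw [hEk, hee]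
  rw [Finset.sum_congr rfl step1, Finset.sum_comm]
  have step2 : ∀ l ∈ Finset.range (d * k),
      ∑ s ∈ Finset.range (d * k),
          Ek d (t * l) * ee p (((g ^ s : (ZMod p)ˣ) : ZMod p)
            * (((g ^ l : (ZMod p)ˣ) : ZMod p) - 1))
        = Ek d (t * l) * ((if l = 0 then (p : ℂ) else 0) - 1) := by
    intro l hl
    rw [← Finset.mul_sum, sum_uu_mul hp hg hn]
    have hcond : (((g ^ l : (ZMod p)ˣ) : ZMod p) - 1 = 0) ↔ l = 0 := by
      rw [sub_eq_zero]
      constructor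
      · intro h
        have h1 : g ^ l = 1 := Units.ext (by simpa using h)
        have h2 := orderOf_dvd_of_pow_eq_one h1
        rw [uu_order hp hg hn] at h2
        exact Nat.eq_zero_of_dvd_of_lt h2 (Finset.mem_range.mp hl)
      · rintro rfl
        simp
    have hrw : (if (((g ^ l : (ZMod p)ˣ) : ZMod p) - 1) = 0 then (p : ℂ) else 0)
        = (if l = 0 then (p : ℂ) else 0) := if_congr hcond rfl rfl
    rw [hrw]
  rw [Finset.sum_congr rfl step2]
  have expand : ∀ l ∈ Finset.range (d * k),
      Ek d (t * l) * ((if l = 0 then (p : ℂ) else 0) - 1)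
        = (if l = 0 then (p : ℂ) else 0) - Ek d (t * l) := by
    intro l _
    by_cases h : l = 0
    · subst h
      simp only [if_pos rfl]
      rw [show ((0 : ℕ) : ℤ) = 0 from rfl, mul_zero, Ek_zero]
      ring
    · simp only [if_neg h]
      ring
  rw [Finset.sum_congr rfl expand, Finset.sum_sub_distrib, Ek_geom hd (Dvd.intro k rfl) t,
    Finset.sum_ite_eq' (Finset.range (d * k)) 0 (fun _ => (p : ℂ)),
    if_pos (Finset.mem_range.mpr hn0)]

lemma SS_inversion [NeZero p] (hp : p.Prime) (hg : ∀ x : (ZMod p)ˣ, x ∈ Subgroup.zpowers g)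
    (hn : d * k = p - 1) (hd : 0 < d) {a : ℕ} (ha : a < d) :
    ∑ t ∈ Finset.range d, Ek d (-((t : ℤ) * a)) * SS p d k g (t : ℤ)
      = (d : ℂ) * ∑ j ∈ Finset.range k, ee p ((g ^ (d * j + a) : (ZMod p)ˣ) : ZMod p) := by
  have step1 : ∀ t ∈ Finset.range d, Ek d (-((t : ℤ) * a)) * SS p d k g (t : ℤ)
      = ∑ m ∈ Finset.range (d * k),
          Ek d (((m : ℤ) - a) * t) * ee p ((g ^ m : (ZMod p)ˣ) : ZMod p) := by
    intro t _
    rw [SS, Finset.mul_sum]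
    refine Finset.sum_congr rfl fun m _ => ?_
    rw [← mul_assoc, ← Ek_add]
    congr 2
    ring
  rw [Finset.sum_congr rfl step1, Finset.sum_comm]
  have step2 : ∀ m ∈ Finset.range (d * k),
      ∑ t ∈ Finset.range d, Ek d (((m : ℤ) - a) * t) * ee p ((g ^ m : (ZMod p)ˣ) : ZMod p)
        = (if (d : ℤ) ∣ ((m : ℤ) - a) then (d : ℂ) else 0)
            * ee p ((g ^ m : (ZMod p)ˣ) : ZMod p) := by
    intro m _
    rw [← Finset.sum_mul]
    congr 1
    exact Ek_geom hd dvd_rfl ((m : ℤ) - a)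
  rw [Finset.sum_congr rfl step2, sum_range_mul_add d k
    (fun m => (if (d : ℤ) ∣ ((m : ℤ) - a) then (d : ℂ) else 0)
      * ee p ((g ^ m : (ZMod p)ˣ) : ZMod p)), Finset.sum_comm, Finset.mul_sum]
  refine Finset.sum_congr rfl fun j _ => ?_
  have hcong : ∀ b ∈ Finset.range d,
      (if (d : ℤ) ∣ ((d * j + b : ℕ) : ℤ) - a then (d : ℂ) else 0)
          * ee p ((g ^ (d * j + b) : (ZMod p)ˣ) : ZMod p)
        = if (d : ℤ) ∣ ((a : ℤ) - b) then
            (d : ℂ) * ee p ((g ^ (d * j + b) : (ZMod p)ˣ) : ZMod p) else 0 := by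
    intro b _
    rw [ite_mul, zero_mul]
    refine if_congr ?_ rfl rfl
    constructor
    · intro h
      have h2 : (d : ℤ) ∣ (((d * j + b : ℕ) : ℤ) - a) - d * j := (dvd_sub h ⟨j, rfl⟩)
      have h3 : (((d * j + b : ℕ) : ℤ) - a) - d * j = (b : ℤ) - a := by push_cast; ring
      rw [h3] at h2
      have := h2.neg_right
      rwa [neg_sub] at this
    · intro h
      have h2 := h.neg_right
      rw [neg_sub] at h2
      have h3 : ((b : ℤ) - a) + d * j = ((d * j + b : ℕ) : ℤ) - a := by push_cast; ring
      have := dvd_add h2 (Dvd.intro j rfl : (d : ℤ) ∣ (d : ℤ) * j)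
      rwa [h3] at this
  have hta : (((a : ℤ) % d)).toNat = a := by
    rw [Int.emod_eq_of_lt (by positivity) (by exact_mod_cast ha)]
    exact Int.toNat_natCast a
  rw [Finset.sum_congr rfl hcong, collapse_sum hd (a : ℤ)
    (fun b => (d : ℂ) * ee p ((g ^ (d * j + b) : (ZMod p)ˣ) : ZMod p)), hta]

end Layer5
section Layer6

open Complex Finset

variable {d : ℕ}

lemma quad_swap (hd : 0 < d) (F : ℕ → ℕ → ℕ → ℕ → ℂ) :
    ∑ a ∈ Finset.range d, ∑ t1 ∈ Finset.range d, ∑ t2 ∈ Finset.range d,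
      ∑ t3 ∈ Finset.range d, ∑ t4 ∈ Finset.range d,
        Ek d (((t3 : ℤ) + t4 - t1 - t2) * a) * F t1 t2 t3 t4
    = ∑ t1 ∈ Finset.range d, ∑ t2 ∈ Finset.range d, ∑ t3 ∈ Finset.range d,
        ∑ t4 ∈ Finset.range d,
        (if (d : ℤ) ∣ ((t3 : ℤ) + t4 - t1 - t2) then (d : ℂ) else 0) * F t1 t2 t3 t4 := by
  rw [Finset.sum_comm]
  refine Finset.sum_congr rfl fun t1 _ => ?_
  rw [Finset.sum_comm]
  refine Finset.sum_congr rfl fun t2 _ => ?_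
  rw [Finset.sum_comm]
  refine Finset.sum_congr rfl fun t3 _ => ?_
  rw [Finset.sum_comm]
  refine Finset.sum_congr rfl fun t4 _ => ?_
  rw [← Finset.sum_mul, Ek_geom hd dvd_rfl]

lemma quad_swap' (hd : 0 < d) (F : ℕ → ℕ → ℕ → ℕ → ℂ) :
    ∑ a ∈ Finset.range d, ∑ t1 ∈ Finset.range d, ∑ t2 ∈ Finset.range d,
      ∑ t3 ∈ Finset.range d, ∑ t4 ∈ Finset.range d,
        Ek d (((t1 : ℤ) + t2 - t3 - t4) * a) * F t1 t2 t3 t4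
    = ∑ t1 ∈ Finset.range d, ∑ t2 ∈ Finset.range d, ∑ t3 ∈ Finset.range d,
        ∑ t4 ∈ Finset.range d,
        (if (d : ℤ) ∣ ((t1 : ℤ) + t2 - t3 - t4) then (d : ℂ) else 0) * F t1 t2 t3 t4 := by
  rw [Finset.sum_comm]
  refine Finset.sum_congr rfl fun t1 _ => ?_
  rw [Finset.sum_comm]
  refine Finset.sum_congr rfl fun t2 _ => ?_
  rw [Finset.sum_comm]
  refine Finset.sum_congr rfl fun t3 _ => ?_
  rw [Finset.sum_comm]
  refine Finset.sum_congr rfl fun t4 _ => ?_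
  rw [← Finset.sum_mul, Ek_geom hd dvd_rfl]

lemma pair_swap (hd : 0 < d) (F : ℕ → ℕ → ℂ) :
    ∑ a ∈ Finset.range d, ∑ t1 ∈ Finset.range d, ∑ t2 ∈ Finset.range d,
        Ek d (((t2 : ℤ) - t1) * a) * F t1 t2
    = ∑ t1 ∈ Finset.range d, ∑ t2 ∈ Finset.range d,
        (if (d : ℤ) ∣ ((t2 : ℤ) - t1) then (d : ℂ) else 0) * F t1 t2 := by
  rw [Finset.sum_comm]
  refine Finset.sum_congr rfl fun t1 _ => ?_
  rw [Finset.sum_comm]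
  refine Finset.sum_congr rfl fun t2 _ => ?_
  rw [← Finset.sum_mul, Ek_geom hd dvd_rfl]

lemma pair_collapse (hd : 0 < d) {t1 : ℕ} (h : t1 < d) (F : ℕ → ℂ) :
    ∑ t2 ∈ Finset.range d, (if (d : ℤ) ∣ ((t2 : ℤ) - t1) then (d : ℂ) else 0) * F t2
      = (d : ℂ) * F t1 := by
  have hcong : ∀ t2 ∈ Finset.range d,
      (if (d : ℤ) ∣ ((t2 : ℤ) - t1) then (d : ℂ) else 0) * F t2
        = if (d : ℤ) ∣ ((t1 : ℤ) - t2) then (d : ℂ) * F t2 else 0 := by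
    intro t2 _
    rw [ite_mul, zero_mul]
    refine if_congr ⟨fun h2 => ?_, fun h2 => ?_⟩ rfl rfl
    · have := h2.neg_right; rwa [neg_sub] at this
    · have := h2.neg_right; rwa [neg_sub] at this
  rw [Finset.sum_congr rfl hcong, collapse_sum hd ((t1 : ℤ)) (fun t2 => (d : ℂ) * F t2)]
  have hta : (((t1 : ℤ) % d)).toNat = t1 := by
    rw [Int.emod_eq_of_lt (by positivity) (by exact_mod_cast h)]
    exact Int.toNat_natCast t1
  rw [hta]

lemma quad_collapse_q (hd : 0 < d) (c : ℤ) (r A : ℝ) :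
    ∑ t4 ∈ Finset.range d,
        (if (d : ℤ) ∣ ((t4 : ℤ) - c) then A * qd d r (t4 : ℤ) else 0)
      = A * qd d r c := by
  have hcong : ∀ t4 ∈ Finset.range d,
      (if (d : ℤ) ∣ ((t4 : ℤ) - c) then A * qd d r (t4 : ℤ) else 0)
        = if (d : ℤ) ∣ (c - (t4 : ℤ)) then A * qd d r (t4 : ℤ) else 0 := by
    intro t4 _
    refine if_congr ⟨fun h2 => ?_, fun h2 => ?_⟩ rfl rfl
    · have := h2.neg_right; rwa [neg_sub] at this
    · have := h2.neg_right; rwa [neg_sub] at this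
  rw [Finset.sum_congr rfl hcong, collapse_sum hd c (fun t4 => A * qd d r (t4 : ℤ))]
  rw [qd_congr c (((c % d).toNat : ℤ)) (t0_dvd hd c) r]

end Layer6
open Complex Finset in
/-- If `d ∣ p-1` (with `d > 2`), then
`((d-1)p + 1)²/d³ ≤ V₄(p)` and
`V₄(p) ≤ ((d-1)(d² - 3d + 3)p² + 4(d-1)(d-2)p^{3/2} + 6(d-1)p + 1)/d³`. -/
theorem gaussian_periods_V4_bounds (p d k : ℕ) (hp : p.Prime) (hodd : Odd p)
    (hd : 2 < d) (hdk : p - 1 = d * k)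
    (g : (ZMod p)ˣ) (hg : ∀ x : (ZMod p)ˣ, x ∈ Subgroup.zpowers g)
    (η : ℕ → ℂ)
    (hη : ∀ a : ℕ, η a = ∑ j ∈ Finset.range k,
      Complex.exp (2 * (Real.pi : ℂ) * Complex.I *
        (((g ^ (d * j + a) : (ZMod p)ˣ) : ZMod p).val : ℂ) / (p : ℂ))) :
    (((d : ℝ) - 1) * p + 1) ^ 2 / (d : ℝ) ^ 3
      ≤ ∑ s ∈ Finset.range d, ‖η s‖ ^ 4 ∧
    ∑ s ∈ Finset.range d, ‖η s‖ ^ 4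
      ≤ (((d : ℝ) - 1) * ((d : ℝ) ^ 2 - 3 * d + 3) * (p : ℝ) ^ 2
          + 4 * ((d : ℝ) - 1) * ((d : ℝ) - 2) * (p : ℝ) ^ ((3 : ℝ) / 2)
          + 6 * ((d : ℝ) - 1) * p + 1) / (d : ℝ) ^ 3 := by
  haveI : Fact p.Prime := ⟨hp⟩
  haveI : NeZero p := ⟨hp.pos.ne'⟩
  have hp1 : 1 < p := hp.one_lt
  have hd0 : 0 < d := by omega
  have hn : d * k = p - 1 := hdk.symm
  have hne2 : p ≠ 2 := by
    rintro rfl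
    rw [Nat.odd_iff] at hodd
    norm_num at hodd
  have hp3 : 3 ≤ p := by
    have := hp.two_le
    omega
  have hk : 0 < k := by
    rcases Nat.eq_zero_or_pos k with h | h
    · rw [h, mul_zero] at hn; omega
    · exact h
  have hdR : (0 : ℝ) < (d : ℝ) := by exact_mod_cast hd0
  -- rewrite η in terms of ee
  have hη' : ∀ a : ℕ, η a
      = ∑ j ∈ Finset.range k, ee p ((g ^ (d * j + a) : (ZMod p)ˣ) : ZMod p) := by
    intro a
    rw [hη a]
    refine Finset.sum_congr rfl fun j _ => ?_
    rw [ee, Ek_eq_exp]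
    congr 1
    push_cast
    ring
  have hinv : ∀ a ∈ Finset.range d, (d : ℂ) * η a
      = ∑ t ∈ Finset.range d, Ek d (-((a : ℤ) * t)) * SS p d k g (t : ℤ) := by
    intro a ha
    rw [hη' a, ← SS_inversion hp hg hn hd0 (Finset.mem_range.mp ha)]
    refine Finset.sum_congr rfl fun t _ => ?_
    have : -((t : ℤ) * a) = -((a : ℤ) * t) := by ring
    rw [this]
  have hinvc : ∀ a ∈ Finset.range d, (d : ℂ) * (starRingEnd ℂ) (η a)
      = ∑ t ∈ Finset.range d, Ek d ((a : ℤ) * t)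
          * (starRingEnd ℂ) (SS p d k g (t : ℤ)) := by
    intro a ha
    have h2 : ∀ t ∈ Finset.range d,
        (starRingEnd ℂ) (Ek d (-((a : ℤ) * t)) * SS p d k g (t : ℤ))
          = Ek d ((a : ℤ) * t) * (starRingEnd ℂ) (SS p d k g (t : ℤ)) := by
      intro t _
      rw [map_mul, Ek_conj, neg_neg]
    rw [← Finset.sum_congr rfl h2, ← map_sum, ← hinv a ha, map_mul, Complex.conj_natCast]
  -- norms of the Gauss sums
  have hq : ∀ t : ℤ, ‖SS p d k g t‖ = qd d (Real.sqrt p) t := by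
    intro t
    have h1 := SS_mul_conj hp hg hn hd0 hk t
    rw [Complex.mul_conj] at h1
    by_cases hdt : (d : ℤ) ∣ t
    · rw [if_pos hdt] at h1
      have h2 : ((Complex.normSq (SS p d k g t) : ℝ) : ℂ) = ((1 : ℝ) : ℂ) := by
        rw [h1, hn]
        rw [Nat.cast_sub hp.one_le]
        push_cast
        ring
      have h3 : Complex.normSq (SS p d k g t) = 1 := by exact_mod_cast h2
      rw [Complex.norm_def, h3, Real.sqrt_one, qd, if_pos hdt]
    · rw [if_neg hdt] at h1
      have h2 : ((Complex.normSq (SS p d k g t) : ℝ) : ℂ) = (((p : ℝ)) : ℂ) := by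
        rw [h1]
        push_cast
        ring
      have h3 : Complex.normSq (SS p d k g t) = (p : ℝ) := by exact_mod_cast h2
      rw [Complex.norm_def, h3, qd, if_neg hdt]
  -- abbreviations
  set X : ℝ := ∑ s ∈ Finset.range d, ‖η s‖ ^ 4 with hX
  have hX0 : 0 ≤ X := Finset.sum_nonneg fun s _ => by positivity
  -- ============ LOWER BOUND ============
  set Y : ℝ := ∑ a ∈ Finset.range d, ‖η a‖ ^ 2 with hY
  have hYc : ((Y : ℝ) : ℂ) = ∑ a ∈ Finset.range d, η a * (starRingEnd ℂ) (η a) := by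
    rw [hY]
    push_cast
    refine Finset.sum_congr rfl fun a _ => ?_
    rw [Complex.mul_conj, ← Complex.sq_norm]
    push_cast
    ring
  have e1 : ∑ a ∈ Finset.range d, ((d : ℂ) * η a) * ((d : ℂ) * (starRingEnd ℂ) (η a))
      = ∑ a ∈ Finset.range d, ∑ t1 ∈ Finset.range d, ∑ t2 ∈ Finset.range d,
          Ek d (((t2 : ℤ) - t1) * a)
            * (SS p d k g (t1 : ℤ) * (starRingEnd ℂ) (SS p d k g (t2 : ℤ))) := by
    refine Finset.sum_congr rfl fun a ha => ?_
    rw [hinv a ha, hinvc a ha, Finset.sum_mul_sum]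
    refine Finset.sum_congr rfl fun t1 _ => Finset.sum_congr rfl fun t2 _ => ?_
    have hEk : Ek d (((t2 : ℤ) - t1) * a)
        = Ek d (-((a : ℤ) * t1)) * Ek d ((a : ℤ) * t2) := by
      rw [← Ek_add]
      congr 1
      ring
    rw [hEk]
    ring
  have e2 := pair_swap (d := d) hd0
    (fun t1 t2 => SS p d k g (t1 : ℤ) * (starRingEnd ℂ) (SS p d k g (t2 : ℤ)))
  have e3 : ∑ t1 ∈ Finset.range d, ∑ t2 ∈ Finset.range d,
      (if (d : ℤ) ∣ ((t2 : ℤ) - t1) then (d : ℂ) else 0)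
        * (SS p d k g (t1 : ℤ) * (starRingEnd ℂ) (SS p d k g (t2 : ℤ)))
      = ∑ t1 ∈ Finset.range d,
          (d : ℂ) * (SS p d k g (t1 : ℤ) * (starRingEnd ℂ) (SS p d k g (t1 : ℤ))) := by
    refine Finset.sum_congr rfl fun t1 h1 => ?_
    exact pair_collapse hd0 (Finset.mem_range.mp h1)
      (fun t2 => SS p d k g (t1 : ℤ) * (starRingEnd ℂ) (SS p d k g (t2 : ℤ)))
  have e4 : ∑ t1 ∈ Finset.range d,
      (d : ℂ) * (SS p d k g (t1 : ℤ) * (starRingEnd ℂ) (SS p d k g (t1 : ℤ)))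
      = (d : ℂ) * ((d : ℂ) * (p : ℂ) - ((d * k : ℕ) : ℂ)) := by
    rw [← Finset.mul_sum]
    congr 1
    have hterm : ∀ t1 ∈ Finset.range d,
        SS p d k g (t1 : ℤ) * (starRingEnd ℂ) (SS p d k g (t1 : ℤ))
          = (p : ℂ) - (if t1 = 0 then ((d * k : ℕ) : ℂ) else 0) := by
      intro t1 h1
      rw [SS_mul_conj hp hg hn hd0 hk]
      congr 1
      by_cases h0 : t1 = 0
      · subst h0
        rw [if_pos (by simp : (d : ℤ) ∣ ((0 : ℕ) : ℤ)), if_pos rfl]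
      · rw [if_neg (not_dvd_small h0 (Finset.mem_range.mp h1)), if_neg h0]
    rw [Finset.sum_congr rfl hterm, Finset.sum_sub_distrib, Finset.sum_const,
      Finset.card_range, Finset.sum_ite_eq' (Finset.range d) 0 (fun _ => ((d * k : ℕ) : ℂ)),
      if_pos (Finset.mem_range.mpr hd0), nsmul_eq_mul]
  have e0 : ∑ a ∈ Finset.range d, ((d : ℂ) * η a) * ((d : ℂ) * (starRingEnd ℂ) (η a))
      = (d : ℂ) * ((d : ℂ) * ((Y : ℝ) : ℂ)) := by
    rw [hYc, Finset.mul_sum, Finset.mul_sum]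
    refine Finset.sum_congr rfl fun a _ => ?_
    ring
  have hdY : (d : ℂ) * ((Y : ℝ) : ℂ) = (d : ℂ) * (p : ℂ) - ((d * k : ℕ) : ℂ) := by
    have hchain : (d : ℂ) * ((d : ℂ) * ((Y : ℝ) : ℂ))
        = (d : ℂ) * ((d : ℂ) * (p : ℂ) - ((d * k : ℕ) : ℂ)) := by
      rw [← e0, e1, e2, e3, e4]
    exact mul_left_cancel₀ (by exact_mod_cast hd0.ne' : (d : ℂ) ≠ 0) hchain
  have hdYr : (d : ℝ) * Y = ((d : ℝ) - 1) * p + 1 := by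
    have hcast : ((d * k : ℕ) : ℝ) = (p : ℝ) - 1 := by
      rw [hn, Nat.cast_sub hp.one_le]
      push_cast
      ring
    have h1 : (d : ℝ) * Y = (d : ℝ) * p - ((d * k : ℕ) : ℝ) := by
      exact_mod_cast hdY
    rw [h1, hcast]
    ring
  have hCS : Y ^ 2 ≤ (d : ℝ) * X := by
    have h1 := Finset.sum_mul_sq_le_sq_mul_sq (Finset.range d)
      (fun _ => (1 : ℝ)) (fun s => ‖η s‖ ^ 2)
    have h2 : ∑ s ∈ Finset.range d, (1 : ℝ) * ‖η s‖ ^ 2 = Y := by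
      rw [hY]
      exact Finset.sum_congr rfl fun s _ => one_mul _
    have h3 : ∑ s ∈ Finset.range d, ((1 : ℝ)) ^ 2 = (d : ℝ) := by
      simp
    have h4 : ∑ s ∈ Finset.range d, (‖η s‖ ^ 2) ^ 2 = X := by
      rw [hX]
      exact Finset.sum_congr rfl fun s _ => by ring
    rw [h2, h3, h4] at h1
    exact h1
  have lower : (((d : ℝ) - 1) * p + 1) ^ 2 / (d : ℝ) ^ 3 ≤ X := by
    rw [div_le_iff₀ (by positivity : (0 : ℝ) < (d : ℝ) ^ 3)]
    have h1 : (((d : ℝ) - 1) * p + 1) ^ 2 = (d : ℝ) ^ 2 * Y ^ 2 := by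
      rw [← hdYr]
      ring
    have h2 : (d : ℝ) ^ 2 * Y ^ 2 ≤ (d : ℝ) ^ 2 * ((d : ℝ) * X) :=
      mul_le_mul_of_nonneg_left hCS (by positivity)
    calc (((d : ℝ) - 1) * p + 1) ^ 2 = (d : ℝ) ^ 2 * Y ^ 2 := h1
      _ ≤ (d : ℝ) ^ 2 * ((d : ℝ) * X) := h2
      _ = X * (d : ℝ) ^ 3 := by ring
  -- ============ UPPER BOUND ============
  have stepA : ((X : ℝ) : ℂ)
      = ∑ a ∈ Finset.range d, (η a * (starRingEnd ℂ) (η a)) ^ 2 := by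
    rw [hX]
    push_cast
    refine Finset.sum_congr rfl fun a _ => ?_
    rw [Complex.mul_conj, ← Complex.sq_norm]
    push_cast
    ring
  have f1 : ∑ a ∈ Finset.range d,
      (((d : ℂ) * η a) * ((d : ℂ) * η a))
        * (((d : ℂ) * (starRingEnd ℂ) (η a)) * ((d : ℂ) * (starRingEnd ℂ) (η a)))
      = ∑ a ∈ Finset.range d, ∑ t1 ∈ Finset.range d, ∑ t2 ∈ Finset.range d,
          ∑ t3 ∈ Finset.range d, ∑ t4 ∈ Finset.range d,
          Ek d (((t1 : ℤ) + t2 - t3 - t4) * a)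
            * (SS p d k g (t4 : ℤ) * SS p d k g (t3 : ℤ)
              * (starRingEnd ℂ) (SS p d k g (t2 : ℤ))
              * (starRingEnd ℂ) (SS p d k g (t1 : ℤ))) := by
    refine Finset.sum_congr rfl fun a ha => ?_
    rw [hinv a ha, hinvc a ha]
    simp only [Finset.sum_mul, Finset.mul_sum]
    refine Finset.sum_congr rfl fun t1 _ => Finset.sum_congr rfl fun t2 _ =>
      Finset.sum_congr rfl fun t3 _ => Finset.sum_congr rfl fun t4 _ => ?_
    have hEk : Ek d (((t1 : ℤ) + t2 - t3 - t4) * a)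
        = Ek d (-((a : ℤ) * t4)) * Ek d (-((a : ℤ) * t3))
          * Ek d ((a : ℤ) * t2) * Ek d ((a : ℤ) * t1) := by
      rw [← Ek_add, ← Ek_add, ← Ek_add]
      congr 1
      ring
    rw [hEk]
    ring
  have f2 := quad_swap' (d := d) hd0
    (fun t1 t2 t3 t4 => SS p d k g (t4 : ℤ) * SS p d k g (t3 : ℤ)
      * (starRingEnd ℂ) (SS p d k g (t2 : ℤ)) * (starRingEnd ℂ) (SS p d k g (t1 : ℤ)))
  have f0 : ∑ a ∈ Finset.range d,
      (((d : ℂ) * η a) * ((d : ℂ) * η a))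
        * (((d : ℂ) * (starRingEnd ℂ) (η a)) * ((d : ℂ) * (starRingEnd ℂ) (η a)))
      = (d : ℂ) ^ 4 * ((X : ℝ) : ℂ) := by
    rw [stepA, Finset.mul_sum]
    refine Finset.sum_congr rfl fun a _ => ?_
    ring
  have hXT : (d : ℂ) ^ 4 * ((X : ℝ) : ℂ)
      = ∑ t1 ∈ Finset.range d, ∑ t2 ∈ Finset.range d, ∑ t3 ∈ Finset.range d,
          ∑ t4 ∈ Finset.range d,
          (if (d : ℤ) ∣ ((t1 : ℤ) + t2 - t3 - t4) then (d : ℂ) else 0)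
            * (SS p d k g (t4 : ℤ) * SS p d k g (t3 : ℤ)
              * (starRingEnd ℂ) (SS p d k g (t2 : ℤ))
              * (starRingEnd ℂ) (SS p d k g (t1 : ℤ))) := by
    rw [← f0, f1]
    exact f2
  -- take absolute values
  set r : ℝ := Real.sqrt p with hr
  have hr0 : 0 ≤ r := Real.sqrt_nonneg _
  have habsterm : ∀ t1 t2 t3 t4 : ℕ,
      ‖(if (d : ℤ) ∣ ((t1 : ℤ) + t2 - t3 - t4) then (d : ℂ) else 0)
        * (SS p d k g (t4 : ℤ) * SS p d k g (t3 : ℤ)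
          * (starRingEnd ℂ) (SS p d k g (t2 : ℤ))
          * (starRingEnd ℂ) (SS p d k g (t1 : ℤ)))‖
      = (if (d : ℤ) ∣ ((t1 : ℤ) + t2 - t3 - t4) then (d : ℝ) else 0)
          * (qd d r (t4 : ℤ) * qd d r (t3 : ℤ) * qd d r (t2 : ℤ) * qd d r (t1 : ℤ)) := by
    intro t1 t2 t3 t4
    rw [norm_mul, norm_mul, norm_mul, norm_mul, Complex.norm_conj, Complex.norm_conj,
      hq, hq, hq, hq]
    congr 1
    by_cases hcond : (d : ℤ) ∣ ((t1 : ℤ) + t2 - t3 - t4)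
    · rw [if_pos hcond, if_pos hcond, Complex.norm_natCast]
    · rw [if_neg hcond, if_neg hcond, norm_zero]
  have hTb : (d : ℝ) ^ 4 * X
      ≤ (d : ℝ) * (1 + 6 * ((d : ℝ) - 1) * (r * r)
          + 4 * ((d : ℝ) - 1) * ((d : ℝ) - 2) * (r * r * r)
          + ((d : ℝ) - 1) * ((d : ℝ) ^ 2 - 3 * d + 3) * (r * r * (r * r))) := by
    have hXabs : (d : ℝ) ^ 4 * X = ‖(d : ℂ) ^ 4 * ((X : ℝ) : ℂ)‖ := by
      rw [norm_mul, norm_pow, Complex.norm_natCast, Complex.norm_of_nonneg hX0]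
    rw [hXabs, hXT]
    -- triangle inequality down four levels, then exact computation
    calc ‖∑ t1 ∈ Finset.range d, ∑ t2 ∈ Finset.range d,
            ∑ t3 ∈ Finset.range d, ∑ t4 ∈ Finset.range d,
            (if (d : ℤ) ∣ ((t1 : ℤ) + t2 - t3 - t4) then (d : ℂ) else 0)
              * (SS p d k g (t4 : ℤ) * SS p d k g (t3 : ℤ)
                * (starRingEnd ℂ) (SS p d k g (t2 : ℤ))
                * (starRingEnd ℂ) (SS p d k g (t1 : ℤ)))‖
        ≤ ∑ t1 ∈ Finset.range d, ∑ t2 ∈ Finset.range d, ∑ t3 ∈ Finset.range d,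
            ∑ t4 ∈ Finset.range d,
            (if (d : ℤ) ∣ ((t1 : ℤ) + t2 - t3 - t4) then (d : ℝ) else 0)
              * (qd d r (t4 : ℤ) * qd d r (t3 : ℤ) * qd d r (t2 : ℤ) * qd d r (t1 : ℤ)) := by
          refine (norm_sum_le _ _).trans (Finset.sum_le_sum fun t1 _ => ?_)
          refine (norm_sum_le _ _).trans (Finset.sum_le_sum fun t2 _ => ?_)
          refine (norm_sum_le _ _).trans (Finset.sum_le_sum fun t3 _ => ?_)
          refine (norm_sum_le _ _).trans (Finset.sum_le_sum fun t4 _ => ?_)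
          rw [habsterm t1 t2 t3 t4]
      _ = ∑ t1 ∈ Finset.range d, ∑ t2 ∈ Finset.range d, ∑ t3 ∈ Finset.range d,
            (d : ℝ) * (qd d r (t1 : ℤ) * qd d r (t2 : ℤ) * qd d r (t3 : ℤ)
              * qd d r ((t1 : ℤ) + t2 - t3)) := by
          refine Finset.sum_congr rfl fun t1 _ => Finset.sum_congr rfl fun t2 _ =>
            Finset.sum_congr rfl fun t3 _ => ?_
          have hre : ∀ t4 ∈ Finset.range d,
              (if (d : ℤ) ∣ ((t1 : ℤ) + t2 - t3 - t4) then (d : ℝ) else 0)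
                * (qd d r (t4 : ℤ) * qd d r (t3 : ℤ) * qd d r (t2 : ℤ) * qd d r (t1 : ℤ))
              = if (d : ℤ) ∣ ((t4 : ℤ) - ((t1 : ℤ) + t2 - t3)) then
                  ((d : ℝ) * (qd d r (t1 : ℤ) * qd d r (t2 : ℤ) * qd d r (t3 : ℤ)))
                    * qd d r (t4 : ℤ) else 0 := by
            intro t4 _
            rw [ite_mul, zero_mul]
            refine if_congr ?_ (by ring) rfl
            constructor
            · intro h2
              have h3 : (d : ℤ) ∣ -((t1 : ℤ) + t2 - t3 - t4) := h2.neg_right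
              have h4 : -((t1 : ℤ) + t2 - t3 - t4) = (t4 : ℤ) - ((t1 : ℤ) + t2 - t3) := by ring
              rwa [h4] at h3
            · intro h2
              have h3 : (d : ℤ) ∣ -((t4 : ℤ) - ((t1 : ℤ) + t2 - t3)) := h2.neg_right
              have h4 : -((t4 : ℤ) - ((t1 : ℤ) + t2 - t3)) = (t1 : ℤ) + t2 - t3 - t4 := by ring
              rwa [h4] at h3
          rw [Finset.sum_congr rfl hre,
            quad_collapse_q hd0 ((t1 : ℤ) + t2 - t3) r
              ((d : ℝ) * (qd d r (t1 : ℤ) * qd d r (t2 : ℤ) * qd d r (t3 : ℤ)))]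
          ring
      _ = (d : ℝ) * ∑ t1 ∈ Finset.range d, ∑ t2 ∈ Finset.range d, ∑ t3 ∈ Finset.range d,
            qd d r (t1 : ℤ) * qd d r (t2 : ℤ) * qd d r (t3 : ℤ)
              * qd d r ((t1 : ℤ) + t2 - t3) := by
          rw [Finset.mul_sum]
          refine Finset.sum_congr rfl fun t1 _ => ?_
          rw [Finset.mul_sum]
          refine Finset.sum_congr rfl fun t2 _ => ?_
          rw [Finset.mul_sum]
      _ = (d : ℝ) * (1 + 6 * ((d : ℝ) - 1) * (r * r)
            + 4 * ((d : ℝ) - 1) * ((d : ℝ) - 2) * (r * r * r)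
            + ((d : ℝ) - 1) * ((d : ℝ) ^ 2 - 3 * d + 3) * (r * r * (r * r))) := by
          rw [counting_L3 hd r]
  have hrr : r * r = (p : ℝ) := Real.mul_self_sqrt (Nat.cast_nonneg p)
  have hp32 : (p : ℝ) ^ ((3 : ℝ) / 2) = (p : ℝ) * r := by
    have hppos : (0 : ℝ) < p := by exact_mod_cast hp.pos
    rw [show (3 : ℝ) / 2 = 1 + 1 / 2 by norm_num, Real.rpow_add hppos, Real.rpow_one,
      hr, Real.sqrt_eq_rpow]
  have upper : X ≤ (((d : ℝ) - 1) * ((d : ℝ) ^ 2 - 3 * d + 3) * (p : ℝ) ^ 2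
      + 4 * ((d : ℝ) - 1) * ((d : ℝ) - 2) * (p : ℝ) ^ ((3 : ℝ) / 2)
      + 6 * ((d : ℝ) - 1) * p + 1) / (d : ℝ) ^ 3 := by
    rw [le_div_iff₀ (by positivity : (0 : ℝ) < (d : ℝ) ^ 3)]
    have hE : (1 + 6 * ((d : ℝ) - 1) * (r * r)
        + 4 * ((d : ℝ) - 1) * ((d : ℝ) - 2) * (r * r * r)
        + ((d : ℝ) - 1) * ((d : ℝ) ^ 2 - 3 * d + 3) * (r * r * (r * r)))
        = (((d : ℝ) - 1) * ((d : ℝ) ^ 2 - 3 * d + 3) * (p : ℝ) ^ 2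
          + 4 * ((d : ℝ) - 1) * ((d : ℝ) - 2) * (p : ℝ) ^ ((3 : ℝ) / 2)
          + 6 * ((d : ℝ) - 1) * p + 1) := by
      rw [hp32]
      have h1 : r * r * r = (p : ℝ) * r := by rw [hrr]
      have h2 : r * r * (r * r) = (p : ℝ) ^ 2 := by rw [hrr]; ring
      rw [h1, h2, hrr]
      ring
    rw [← hE]
    have h5 : X * (d : ℝ) ^ 3 * (d : ℝ) ≤ (1 + 6 * ((d : ℝ) - 1) * (r * r)
        + 4 * ((d : ℝ) - 1) * ((d : ℝ) - 2) * (r * r * r)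
        + ((d : ℝ) - 1) * ((d : ℝ) ^ 2 - 3 * d + 3) * (r * r * (r * r))) * (d : ℝ) := by
      calc X * (d : ℝ) ^ 3 * (d : ℝ) = (d : ℝ) ^ 4 * X := by ring
        _ ≤ _ := hTb
        _ = _ := by ring
    exact le_of_mul_le_mul_right h5 hdR
  exact ⟨lower, upper⟩
end

section
/- If (p,k) is a circular pair with k even, then V_4(p) = 3p(k-1) − k³; if k is odd and both (p,k) and (p,2k) are circular, then V_4(p) = p(2k-1) − k³. -/
/-- The pair `(p, Φ)` (for `Φ ≤ F_p^×`) is *circular* if any two distinct translated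
"circles" `Φa + b` and `Φc + e` intersect in at most two points. -/
def IsCircular (p : ℕ) (Φ : Subgroup (ZMod p)ˣ) : Prop :=
  ∀ a c : (ZMod p)ˣ, ∀ b e : ZMod p,
    ((fun φ : (ZMod p)ˣ => (φ : ZMod p) * a) '' (Φ : Set (ZMod p)ˣ)
        ≠ (fun φ : (ZMod p)ˣ => (φ : ZMod p) * c) '' (Φ : Set (ZMod p)ˣ) ∨ b ≠ e) →
    Nat.card (((fun φ : (ZMod p)ˣ => (φ : ZMod p) * a + b) '' (Φ : Set (ZMod p)ˣ))
      ∩ ((fun φ : (ZMod p)ˣ => (φ : ZMod p) * c + e) '' (Φ : Set (ZMod p)ˣ)) : Set (ZMod p)) ≤ 2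

namespace GPV4

open Finset Complex

/-- The finite subset `{q^0, ..., q^{k-1}}` of `ZMod p`. -/
def circS (p : ℕ) (q : (ZMod p)ˣ) (k : ℕ) : Finset (ZMod p) :=
  (Finset.range k).image fun j => ((q ^ j : (ZMod p)ˣ) : ZMod p)

noncomputable def rfun (p : ℕ) (q : (ZMod p)ˣ) (k : ℕ) (x : ZMod p) : ℕ :=
  by classical exact ((circS p q k).filter fun b => x - b ∈ circS p q k).card

noncomputable def twoS (p : ℕ) (q : (ZMod p)ˣ) (k : ℕ) : Finset (ZMod p) :=
  (circS p q k).image fun a => a + a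

noncomputable def Nquad (p d k : ℕ) (g : (ZMod p)ˣ) : ℕ := by classical exact
  (((range k ×ˢ range k) ×ˢ (range k ×ˢ range k)).filter
    (fun j => ((g^(d*j.1.1) : (ZMod p)ˣ) : ZMod p) + ((g^(d*j.2.1) : (ZMod p)ˣ) : ZMod p)
      = ((g^(d*j.1.2) : (ZMod p)ˣ) : ZMod p) + ((g^(d*j.2.2) : (ZMod p)ˣ) : ZMod p))).card

noncomputable def psi (p : ℕ) [NeZero p] : AddChar (ZMod p) ℂ :=
  AddChar.zmodChar p (ζ := Complex.exp (2 * Real.pi * I / p))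
    ((Complex.isPrimitiveRoot_exp p (NeZero.ne p)).pow_eq_one)

section basic

variable {p d k : ℕ} [Fact p.Prime] {q g : (ZMod p)ˣ} (hq : orderOf q = k) (hk : 0 < k)
  (hodd : Odd p)

lemma mem_circS_iff {x : ZMod p} : x ∈ circS p q k ↔ ∃ j < k, ((q ^ j : (ZMod p)ˣ) : ZMod p) = x := by
  simp [circS, Finset.mem_image]

include hq hk in
lemma coe_circS : (circS p q k : Set (ZMod p)) =
    Units.val '' ((Subgroup.zpowers q : Subgroup (ZMod p)ˣ) : Set (ZMod p)ˣ) := by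
  ext x
  simp only [Finset.coe_image, Set.mem_image, mem_coe, mem_circS_iff, Subgroup.coe_toSubmonoid,
    SetLike.mem_coe, Subgroup.mem_zpowers_iff]
  constructor
  · rintro ⟨j, hj, rfl⟩
    exact ⟨q ^ j, ⟨j, by norm_cast⟩, rfl⟩
  · rintro ⟨u, ⟨m, rfl⟩, rfl⟩
    refine ⟨(m % (k : ℤ)).toNat, ?_, ?_⟩
    · have h0 : 0 ≤ m % (k : ℤ) := Int.emod_nonneg _ (by exact_mod_cast hk.ne')
      have h1 : m % (k : ℤ) < k := Int.emod_lt_of_pos _ (by exact_mod_cast hk)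
      omega
    · rw [← zpow_natCast]
      have h0 : 0 ≤ m % (k : ℤ) := Int.emod_nonneg _ (by exact_mod_cast hk.ne')
      rw [Int.toNat_of_nonneg h0, ← hq, zpow_mod_orderOf]

include hq hk in
lemma mem_circS_iff' {x : ZMod p} :
    x ∈ circS p q k ↔ ∃ u ∈ Subgroup.zpowers q, (u : ZMod p) = x := by
  constructor
  · intro hx
    have hx' : x ∈ (circS p q k : Set (ZMod p)) := hx
    rw [coe_circS hq hk] at hx'
    obtain ⟨u, hu, rfl⟩ := hx'
    exact ⟨u, hu, rfl⟩
  · rintro ⟨u, hu, rfl⟩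
    have : (u : ZMod p) ∈ (circS p q k : Set (ZMod p)) := by
      rw [coe_circS hq hk]; exact ⟨u, hu, rfl⟩
    exact this

include hq in
lemma card_circS : (circS p q k).card = k := by
  rw [circS, Finset.card_image_of_injOn, Finset.card_range]
  intro a ha b hb hab
  exact pow_injOn_Iio_orderOf (x := q) (by simpa [hq] using Finset.mem_range.mp ha)
    (by simpa [hq] using Finset.mem_range.mp hb) (Units.ext hab)

lemma zero_not_mem_circS : (0 : ZMod p) ∉ circS p q k := by
  rw [mem_circS_iff]
  rintro ⟨j, hj, h⟩
  exact (q ^ j).ne_zero h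

lemma sum_rfun : ∑ x : ZMod p, rfun p q k x = (circS p q k).card ^ 2 := by
  classical
  simp only [rfun, Finset.card_filter]
  rw [Finset.sum_comm]
  have h : ∀ b ∈ circS p q k, (∑ x : ZMod p, if x - b ∈ circS p q k then 1 else 0)
      = (circS p q k).card := by
    intro b _
    rw [← Finset.card_filter]
    apply Finset.card_nbij' (fun x => x - b) (fun y => y + b)
    · intro x hx; simpa using (Finset.mem_filter.mp hx).2
    · intro y hy; simp_all
    · intro x hx; simp
    · intro y hy; simp
  rw [Finset.sum_congr rfl h, Finset.sum_const, smul_eq_mul, sq]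

include hq hk in
lemma nat_card_inter (x : ZMod p) :
    Nat.card ((((fun φ : (ZMod p)ˣ => (φ : ZMod p) * ((1 : (ZMod p)ˣ)) + 0) ''
        ((Subgroup.zpowers q : Subgroup (ZMod p)ˣ) : Set (ZMod p)ˣ))
      ∩ ((fun φ : (ZMod p)ˣ => (φ : ZMod p) * ((-1 : (ZMod p)ˣ)) + x) ''
        ((Subgroup.zpowers q : Subgroup (ZMod p)ˣ) : Set (ZMod p)ˣ)) : Set (ZMod p)))
      = rfun p q k x := by
  classical
  have hset : (((fun φ : (ZMod p)ˣ => (φ : ZMod p) * ((1 : (ZMod p)ˣ)) + 0) ''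
        ((Subgroup.zpowers q : Subgroup (ZMod p)ˣ) : Set (ZMod p)ˣ))
      ∩ ((fun φ : (ZMod p)ˣ => (φ : ZMod p) * ((-1 : (ZMod p)ˣ)) + x) ''
        ((Subgroup.zpowers q : Subgroup (ZMod p)ˣ) : Set (ZMod p)ˣ)) : Set (ZMod p))
      = (((circS p q k).filter fun b => x - b ∈ circS p q k) : Finset (ZMod p)) := by
    ext b
    simp only [Set.mem_inter_iff, Set.mem_image, SetLike.mem_coe, Finset.coe_filter,
      Set.mem_setOf_eq, Finset.mem_coe, Units.val_one, Units.val_neg, mul_one, add_zero]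
    rw [mem_circS_iff' hq hk, mem_circS_iff' hq hk]
    constructor
    · rintro ⟨⟨u, hu, rfl⟩, ⟨v, hv, hvx⟩⟩
      refine ⟨⟨u, hu, rfl⟩, ⟨v, hv, ?_⟩⟩
      rw [← hvx]; ring
    · rintro ⟨⟨u, hu, rfl⟩, ⟨v, hv, hvx⟩⟩
      refine ⟨⟨u, hu, rfl⟩, ⟨v, hv, ?_⟩⟩
      rw [hvx]; ring
  rw [hset, rfun, Nat.card_coe_set_eq, Set.ncard_coe_finset]

include hq hk in
lemma rfun_le_two (hcirc : IsCircular p (Subgroup.zpowers q)) {x : ZMod p} (hx : x ≠ 0) :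
    rfun p q k x ≤ 2 := by
  rw [← nat_card_inter hq hk x]
  exact hcirc 1 (-1) 0 x (Or.inr (Ne.symm hx))

include hodd in
lemma p_ne_two : p ≠ 2 := by
  rintro rfl
  exact (Nat.not_odd_iff_even.mpr even_two) hodd

include hodd in
lemma two_lt_p : 2 < p := by
  have h2 := (Fact.out : p.Prime).two_le
  rcases Nat.lt_or_ge 2 p with h | h
  · exact h
  · interval_cases p
    · exact absurd rfl (p_ne_two hodd)

include hodd in
lemma neg_one_ne_one_units : (-1 : (ZMod p)ˣ) ≠ 1 := by
  have : Fact (2 < p) := ⟨two_lt_p hodd⟩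
  intro h
  exact ZMod.neg_one_ne_one (by
    have := congrArg (Units.val) h
    simpa using this)

include hodd in
lemma orderOf_neg_one_units : orderOf (-1 : (ZMod p)ˣ) = 2 := by
  apply orderOf_eq_prime
  · ext; simp
  · exact neg_one_ne_one_units hodd

include hq hk in
lemma neg_one_mem_of_even (he : Even k) : (-1 : (ZMod p)ˣ) ∈ Subgroup.zpowers q := by
  have hk2 : k / 2 < k := Nat.div_lt_self hk (by norm_num)
  have hx2 : (q ^ (k / 2)) ^ 2 = 1 := by
    rw [← pow_mul]
    have h2 : k / 2 * 2 = k := by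
      obtain ⟨m, rfl⟩ := he; omega
    rw [h2, ← hq, pow_orderOf_eq_one]
  have hx1 : q ^ (k / 2) ≠ 1 := by
    intro h
    have hdvd := orderOf_dvd_of_pow_eq_one h
    rw [hq] at hdvd
    have hk0 : k / 2 ≠ 0 := by
      obtain ⟨m, rfl⟩ := he
      rcases Nat.eq_zero_or_pos m with rfl | hm
      · omega
      · omega
    exact absurd (Nat.le_of_dvd (by omega) hdvd) (by omega)
  have hval : ((q ^ (k / 2) : (ZMod p)ˣ) : ZMod p) = -1 := by
    have h2 : ((q ^ (k / 2) : (ZMod p)ˣ) : ZMod p) * ((q ^ (k / 2) : (ZMod p)ˣ) : ZMod p) = 1 := by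
      rw [← Units.val_mul, ← sq, hx2, Units.val_one]
    rcases mul_self_eq_one_iff.mp h2 with h | h
    · exact absurd (Units.ext h) hx1
    · exact h
  have hfin : q ^ (k / 2) = -1 := Units.ext (by simpa using hval)
  exact hfin ▸ ⟨(k / 2 : ℤ), by norm_cast⟩

include hq hodd in
lemma neg_one_not_mem_of_odd (ho : Odd k) : (-1 : (ZMod p)ˣ) ∉ Subgroup.zpowers q := by
  intro h
  have hdvd := orderOf_dvd_of_mem_zpowers h
  rw [hq, orderOf_neg_one_units hodd] at hdvd
  exact (Nat.not_even_iff_odd.mpr ho) (even_iff_two_dvd.mpr hdvd)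

include hq hk in
lemma rfun_zero_even (he : Even k) : rfun p q k 0 = k := by
  classical
  have hneg : ∀ b ∈ circS p q k, -b ∈ circS p q k := by
    intro b hb
    rw [mem_circS_iff' hq hk] at hb ⊢
    obtain ⟨u, hu, rfl⟩ := hb
    refine ⟨-u, ?_, by simp⟩
    have := Subgroup.mul_mem _ (neg_one_mem_of_even hq hk he) hu
    simpa [neg_one_mul] using this
  rw [rfun]
  have hfil : (circS p q k).filter (fun b => (0:ZMod p) - b ∈ circS p q k) = circS p q k := by
    apply Finset.filter_true_of_mem
    intro b hb
    simpa using hneg b hb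
  rw [hfil, card_circS hq]

include hq hodd in
lemma rfun_zero_odd (ho : Odd k) : rfun p q k 0 = 0 := by
  classical
  rw [rfun, Finset.card_eq_zero, Finset.filter_eq_empty_iff]
  intro b hb hnb
  have hk' : 0 < k := by
    rcases ho with ⟨m, rfl⟩; omega
  rw [zero_sub, mem_circS_iff' hq hk'] at hnb
  rw [mem_circS_iff' hq hk'] at hb
  obtain ⟨u, hu, hub⟩ := hb
  obtain ⟨v, hv, hvb⟩ := hnb
  have hvu : v = -u := Units.ext (by rw [hvb, ← hub]; simp)
  subst hvu
  have hmem : (-1 : (ZMod p)ˣ) ∈ Subgroup.zpowers q := by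
    have := Subgroup.mul_mem _ hv (Subgroup.inv_mem _ hu)
    simpa [neg_mul] using this
  exact neg_one_not_mem_of_odd hq hodd ho hmem

include hodd in
lemma two_ne_zero' : (2 : ZMod p) ≠ 0 := by
  intro h
  have h2 : ((2 : ℕ) : ZMod p) = 0 := by exact_mod_cast h
  rw [ZMod.natCast_eq_zero_iff] at h2
  exact p_ne_two hodd ((Nat.prime_dvd_prime_iff_eq Fact.out Nat.prime_two).mp h2)

include hodd in
lemma double_inj : Function.Injective (fun a : ZMod p => a + a) := by
  intro a b hab
  simp only at hab
  have h2 : (2 : ZMod p) * a = 2 * b := by linear_combination hab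
  exact mul_left_cancel₀ (two_ne_zero' hodd) h2

include hq hodd in
lemma card_twoS : (twoS p q k).card = k := by
  rw [twoS, Finset.card_image_of_injective _ (double_inj hodd), card_circS hq]

include hodd in
lemma zero_not_mem_twoS : (0 : ZMod p) ∉ twoS p q k := by
  rw [twoS, Finset.mem_image]
  rintro ⟨a, ha, h⟩
  have h0 : a + a = 0 + 0 := by simpa using h
  have := double_inj hodd h0
  subst this
  exact zero_not_mem_circS ha

section parity
variable {x : ZMod p}

lemma mem_rfilter_symm {b : ZMod p}
    (hb : b ∈ (circS p q k).filter fun b => x - b ∈ circS p q k) :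
    x - b ∈ (circS p q k).filter fun b => x - b ∈ circS p q k := by
  classical
  rw [Finset.mem_filter] at hb ⊢
  exact ⟨hb.2, by simpa [sub_sub_cancel] using hb.1⟩

lemma rfun_ne_zero_of_mem (hx : x ∈ twoS p q k) : rfun p q k x ≠ 0 := by
  classical
  rw [twoS, Finset.mem_image] at hx
  obtain ⟨a, ha, rfl⟩ := hx
  rw [rfun]
  exact Finset.card_ne_zero_of_mem (Finset.mem_filter.mpr ⟨ha, by simpa using ha⟩)

include hodd in
lemma rfun_ne_two_of_mem (hx : x ∈ twoS p q k) : rfun p q k x ≠ 2 := by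
  classical
  rw [twoS, Finset.mem_image] at hx
  obtain ⟨a, ha, rfl⟩ := hx
  intro h2
  rw [rfun] at h2
  set F := (circS p q k).filter (fun b => a + a - b ∈ circS p q k) with hF
  have hamem : a ∈ F := Finset.mem_filter.mpr ⟨ha, by simpa using ha⟩
  have herase : (F.erase a).Nonempty := by
    rw [← Finset.card_pos, Finset.card_erase_of_mem hamem, h2]
    norm_num
  obtain ⟨w, hw⟩ := herase
  have hwa : w ≠ a := Finset.ne_of_mem_erase hw
  have hwF : w ∈ F := Finset.mem_of_mem_erase hw
  have hsub : ({a, w} : Finset (ZMod p)) ⊆ F := by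
    intro y hy
    rcases Finset.mem_insert.mp hy with rfl | hy
    · exact hamem
    · rw [Finset.mem_singleton] at hy; subst hy; exact hwF
  have hcard : ({a, w} : Finset (ZMod p)).card = 2 := Finset.card_pair (Ne.symm hwa)
  have heq : ({a, w} : Finset (ZMod p)) = F :=
    Finset.eq_of_subset_of_card_le hsub (by rw [h2, hcard])
  have hswap := mem_rfilter_symm (hF ▸ hwF)
  rw [← hF, ← heq, Finset.mem_insert, Finset.mem_singleton] at hswap
  rcases hswap with h | h
  · exact hwa (by linear_combination -h)
  · have hd : a + a = w + w := by linear_combination h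
    exact hwa (double_inj hodd hd).symm

lemma mem_twoS_of_rfun_one (h1 : rfun p q k x = 1) : x ∈ twoS p q k := by
  classical
  rw [rfun, Finset.card_eq_one] at h1
  obtain ⟨b, hb⟩ := h1
  have hbmem : b ∈ (circS p q k).filter (fun c => x - c ∈ circS p q k) := by rw [hb]; simp
  have h := mem_rfilter_symm hbmem
  rw [hb, Finset.mem_singleton] at h
  rw [twoS, Finset.mem_image]
  exact ⟨b, (Finset.mem_filter.mp hbmem).1, by linear_combination -h⟩

include hodd in
lemma rfun_sq_pointwise (hle : rfun p q k x ≤ 2) :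
    (rfun p q k x : ℤ) ^ 2 = 2 * (rfun p q k x : ℤ) - (if x ∈ twoS p q k then 1 else 0) := by
  classical
  by_cases hx : x ∈ twoS p q k
  · have h0 := rfun_ne_zero_of_mem hx
    have h2 := rfun_ne_two_of_mem hodd hx
    have h1 : rfun p q k x = 1 := by omega
    rw [h1]; simp [hx]
  · have h1 : rfun p q k x ≠ 1 := fun h => hx (mem_twoS_of_rfun_one h)
    have hc : rfun p q k x = 0 ∨ rfun p q k x = 2 := by omega
    rcases hc with h | h <;> rw [h] <;> simp [hx]

end parity

lemma sum_indicator_twoS :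
    (∑ x : ZMod p, (if x ∈ twoS p q k then (1 : ℤ) else 0)) = (twoS p q k).card := by
  classical
  rw [Finset.sum_ite_mem, Finset.univ_inter, Finset.sum_const]
  simp

include hq hk hodd in
lemma Nval_even (hcirc : IsCircular p (Subgroup.zpowers q)) (he : Even k) :
    (∑ x : ZMod p, (rfun p q k x : ℤ) ^ 2) = 3 * (k : ℤ) ^ 2 - 3 * k := by
  classical
  have h0 : rfun p q k 0 = k := rfun_zero_even hq hk he
  have hsum : (∑ x : ZMod p, (rfun p q k x : ℤ)) = (k : ℤ) ^ 2 := by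
    have hs := sum_rfun (p := p) (q := q) (k := k)
    rw [card_circS hq] at hs
    exact_mod_cast congrArg (Nat.cast : ℕ → ℤ) hs
  have hsplit := Finset.add_sum_erase Finset.univ (fun x => (rfun p q k x : ℤ) ^ 2)
    (Finset.mem_univ (0 : ZMod p))
  have hsplit1 := Finset.add_sum_erase Finset.univ (fun x => (rfun p q k x : ℤ))
    (Finset.mem_univ (0 : ZMod p))
  have hsplit2 := Finset.add_sum_erase Finset.univ
    (fun x => (if x ∈ twoS p q k then (1:ℤ) else 0)) (Finset.mem_univ (0 : ZMod p))
  have hpt : ∀ x ∈ Finset.univ.erase (0 : ZMod p),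
      (rfun p q k x : ℤ) ^ 2 = 2 * (rfun p q k x : ℤ) - (if x ∈ twoS p q k then 1 else 0) := by
    intro x hx
    exact rfun_sq_pointwise hodd (rfun_le_two hq hk hcirc (Finset.ne_of_mem_erase hx))
  rw [← hsplit, Finset.sum_congr rfl hpt, Finset.sum_sub_distrib, ← Finset.mul_sum]
  have e1 : (∑ x ∈ Finset.univ.erase (0 : ZMod p), (rfun p q k x : ℤ)) = (k:ℤ)^2 - k := by
    have hs := hsplit1
    rw [hsum, h0] at hs
    linarith
  have e2 : (∑ x ∈ Finset.univ.erase (0 : ZMod p), (if x ∈ twoS p q k then (1:ℤ) else 0)) = k := by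
    have hs := hsplit2
    rw [sum_indicator_twoS, card_twoS hq hodd] at hs
    simp only [zero_not_mem_twoS hodd, if_false] at hs
    linarith
  rw [e1, e2]
  rw [h0]
  push_cast
  ring

include hq hk hodd in
lemma Nval_odd (hcirc : IsCircular p (Subgroup.zpowers q)) (ho : Odd k) :
    (∑ x : ZMod p, (rfun p q k x : ℤ) ^ 2) = 2 * (k : ℤ) ^ 2 - k := by
  classical
  have h0 : rfun p q k 0 = 0 := rfun_zero_odd hq hodd ho
  have hsum : (∑ x : ZMod p, (rfun p q k x : ℤ)) = (k : ℤ) ^ 2 := by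
    have hs := sum_rfun (p := p) (q := q) (k := k)
    rw [card_circS hq] at hs
    exact_mod_cast congrArg (Nat.cast : ℕ → ℤ) hs
  have hpt : ∀ x ∈ (Finset.univ : Finset (ZMod p)),
      (rfun p q k x : ℤ) ^ 2 = 2 * (rfun p q k x : ℤ) - (if x ∈ twoS p q k then 1 else 0) := by
    intro x _
    rcases eq_or_ne x 0 with rfl | hx
    · rw [h0]
      simp [zero_not_mem_twoS hodd]
    · exact rfun_sq_pointwise hodd (rfun_le_two hq hk hcirc hx)
  rw [Finset.sum_congr rfl hpt, Finset.sum_sub_distrib, ← Finset.mul_sum, hsum,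
    sum_indicator_twoS, card_twoS hq hodd]

end basic

section analytic

variable {p d k : ℕ} [Fact p.Prime] [NeZero p] {g : (ZMod p)ˣ}

lemma horder (hg : ∀ x : (ZMod p)ˣ, x ∈ Subgroup.zpowers g) : orderOf g = p - 1 := by
  rw [orderOf_eq_card_of_forall_mem_zpowers hg, Nat.card_eq_fintype_card, ZMod.card_units]

lemma hd_ne_zero (hp3 : 2 < p) (hdk : p - 1 = d * k) : d ≠ 0 := by
  rintro rfl; omega

lemma hqorder (hg : ∀ x : (ZMod p)ˣ, x ∈ Subgroup.zpowers g) (hp3 : 2 < p)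
    (hdk : p - 1 = d * k) : orderOf (g ^ d) = k := by
  rw [orderOf_pow, horder hg, hdk, Nat.gcd_eq_right ⟨k, rfl⟩,
    Nat.mul_div_cancel_left _ (Nat.pos_of_ne_zero (hd_ne_zero hp3 hdk))]

lemma psi_prim : (psi p).IsPrimitive :=
  AddChar.zmodChar_primitive_of_primitive_root p (Complex.isPrimitiveRoot_exp p (NeZero.ne p))

lemma psi_apply (x : ZMod p) : psi p x = Complex.exp (2 * Real.pi * I / p) ^ x.val :=
  AddChar.zmodChar_apply _ _

lemma psi_apply_exp (x : ZMod p) :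
    psi p x = Complex.exp (2 * (Real.pi : ℂ) * I * (x.val : ℂ) / (p : ℂ)) := by
  rw [psi_apply, ← Complex.exp_nat_mul]
  congr 1
  ring

lemma psi_conj (x : ZMod p) : (starRingEnd ℂ) (psi p x) = psi p (-x) := by
  have hchar : 0 < ringChar (ZMod p) := by
    rw [ZMod.ringChar_zmod_n]; exact Nat.pos_of_ne_zero (NeZero.ne p)
  rw [AddChar.starComp_apply hchar, AddChar.inv_apply]

lemma sum_psi_mul (u : ZMod p) :
    ∑ y : ZMod p, psi p (y * u) = if u = 0 then (p : ℂ) else 0 := by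
  have hs := AddChar.sum_mulShift (ψ := psi p) u psi_prim
  rw [ZMod.card p] at hs
  simpa [apply_ite (Nat.cast : ℕ → ℂ)] using hs

lemma exists_pow_eq {G : Type*} [Group G] {h x : G} (hx : x ∈ Subgroup.zpowers h)
    (hn : 0 < orderOf h) : ∃ t < orderOf h, h ^ t = x := by
  obtain ⟨m, rfl⟩ := Subgroup.mem_zpowers_iff.mp hx
  refine ⟨(m % (orderOf h : ℤ)).toNat, ?_, ?_⟩
  · have h0 : 0 ≤ m % (orderOf h : ℤ) := Int.emod_nonneg _ (by exact_mod_cast hn.ne')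
    have h1 : m % (orderOf h : ℤ) < orderOf h := Int.emod_lt_of_pos _ (by exact_mod_cast hn)
    omega
  · rw [← zpow_natCast]
    have h0 : 0 ≤ m % (orderOf h : ℤ) := Int.emod_nonneg _ (by exact_mod_cast hn.ne')
    rw [Int.toNat_of_nonneg h0, zpow_mod_orderOf]

lemma sum_over_units (f : ZMod p → ℂ) :
    ∑ x : (ZMod p)ˣ, f (x : ZMod p) = (∑ y : ZMod p, f y) - f 0 := by
  classical
  have hsplit := Finset.add_sum_erase Finset.univ f (Finset.mem_univ (0 : ZMod p))
  have hbij : ∑ x : (ZMod p)ˣ, f (x : ZMod p) = ∑ y ∈ Finset.univ.erase (0 : ZMod p), f y := by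
    refine Finset.sum_bij' (fun (x : (ZMod p)ˣ) _ => (x : ZMod p))
      (fun y hy => Units.mk0 y (Finset.ne_of_mem_erase hy)) ?_ ?_ ?_ ?_ ?_
    · intro a _
      exact Finset.mem_erase.mpr ⟨a.ne_zero, Finset.mem_univ _⟩
    · intro y _; exact Finset.mem_univ _
    · intro a _
      exact Units.ext (by simp)
    · intro y _; simp
    · intro a _; rfl
  rw [hbij, ← hsplit]
  ring

lemma sum_pow_g (hg : ∀ x : (ZMod p)ˣ, x ∈ Subgroup.zpowers g) (hp3 : 2 < p) (u : ZMod p) :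
    ∑ t ∈ Finset.range (p - 1), psi p ((g ^ t : (ZMod p)ˣ) * u)
      = (if u = 0 then (p : ℂ) else 0) - 1 := by
  have hord := horder hg
  have h1 : ∑ t ∈ Finset.range (p - 1), psi p ((g ^ t : (ZMod p)ˣ) * u)
      = ∑ x : (ZMod p)ˣ, psi p ((x : ZMod p) * u) := by
    apply Finset.sum_nbij (fun t => g ^ t)
    · intro t _; exact Finset.mem_univ _
    · intro t1 h1 t2 h2 h
      exact pow_injOn_Iio_orderOf (by simpa [hord] using h1) (by simpa [hord] using h2) h
    · intro x _
      obtain ⟨t, ht, rfl⟩ := exists_pow_eq (hg x) (by rw [hord]; omega)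
      exact ⟨t, by simpa [hord] using ht, rfl⟩
    · intro t _; rfl
  rw [h1, sum_over_units (fun y => psi p (y * u)), sum_psi_mul u]
  simp

variable (η : ℕ → ℂ)
  (hη : ∀ a : ℕ, η a = ∑ j ∈ Finset.range k,
      Complex.exp (2 * (Real.pi : ℂ) * Complex.I *
        (((g ^ (d * j + a) : (ZMod p)ˣ) : ZMod p).val : ℂ) / (p : ℂ)))

include hη in
lemma eta_psi (a : ℕ) :
    η a = ∑ j ∈ Finset.range k, psi p ((g ^ (d * j + a) : (ZMod p)ˣ) : ZMod p) := by
  rw [hη a]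
  exact Finset.sum_congr rfl fun j _ => (psi_apply_exp _).symm

include hη in
lemma eta_period (hg : ∀ x : (ZMod p)ˣ, x ∈ Subgroup.zpowers g)
    (hdk : p - 1 = d * k) (a : ℕ) : η (a + d) = η a := by
  have hgp : g ^ (d * k + a) = g ^ (d * 0 + a) := by
    rw [← hdk]
    rw [pow_add, pow_add, ← horder hg, pow_orderOf_eq_one]
    simp
  rw [eta_psi η hη, eta_psi η hη]
  have h1 : ∀ j, d * j + (a + d) = d * (j + 1) + a := by intro j; ring
  calc ∑ j ∈ Finset.range k, psi p ((g ^ (d * j + (a + d)) : (ZMod p)ˣ) : ZMod p)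
      = ∑ j ∈ Finset.range k, psi p ((g ^ (d * (j + 1) + a) : (ZMod p)ˣ) : ZMod p) := by
        exact Finset.sum_congr rfl fun j _ => by rw [h1]
    _ = ∑ j ∈ Finset.range (k + 1), psi p ((g ^ (d * j + a) : (ZMod p)ˣ) : ZMod p)
          - psi p ((g ^ (d * 0 + a) : (ZMod p)ˣ) : ZMod p) := by
        rw [Finset.sum_range_succ']; ring
    _ = ∑ j ∈ Finset.range k, psi p ((g ^ (d * j + a) : (ZMod p)ˣ) : ZMod p) := by
        rw [Finset.sum_range_succ, hgp]; ring

include hη in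
lemma eta_period_mul (hg : ∀ x : (ZMod p)ˣ, x ∈ Subgroup.zpowers g)
    (hdk : p - 1 = d * k) (a t : ℕ) : η (a + d * t) = η a := by
  induction t with
  | zero => simp
  | succ n ih =>
      have h1 : a + d * (n + 1) = (a + d * n) + d := by ring
      rw [h1, eta_period η hη hg hdk, ih]

include hη in
lemma analytic_main (hg : ∀ x : (ZMod p)ˣ, x ∈ Subgroup.zpowers g) (hp3 : 2 < p)
    (hdk : p - 1 = d * k) (hk : 0 < k) :
    (k : ℂ) * ∑ s ∈ Finset.range d, (η s * (starRingEnd ℂ) (η s)) ^ 2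
      = (p : ℂ) * (Nquad p d k g : ℂ) - (k : ℂ) ^ 4 := by
  classical
  have hd : 0 < d := Nat.pos_of_ne_zero (by rintro rfl; omega)
  set F : ℕ → ℂ := fun t => (η t * (starRingEnd ℂ) (η t)) ^ 2 with hF
  set B : ℕ → ZMod p := fun i => ((g ^ (d * i) : (ZMod p)ˣ) : ZMod p) with hB
  set QI : Finset ((ℕ × ℕ) × (ℕ × ℕ)) :=
    (range k ×ˢ range k) ×ˢ (range k ×ˢ range k) with hQI
  set w : (ℕ × ℕ) × (ℕ × ℕ) → ZMod p :=
    fun j => B j.1.1 - B j.1.2 + B j.2.1 - B j.2.2 with hw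
  have step1 : ∑ t ∈ Finset.range (d * k), F t = (k : ℂ) * ∑ s ∈ Finset.range d, F s := by
    have hbij : ∑ t ∈ Finset.range (d * k), F t
        = ∑ x ∈ Finset.range d ×ˢ Finset.range k, F (x.1 + d * x.2) := by
      refine (Finset.sum_nbij' (fun x : ℕ × ℕ => x.1 + d * x.2) (fun t => (t % d, t / d))
        ?_ ?_ ?_ ?_ ?_).symm
      · intro x hx
        rw [Finset.mem_product, Finset.mem_range, Finset.mem_range] at hx
        rw [Finset.mem_range]
        calc x.1 + d * x.2 < d + d * x.2 := by omega
          _ ≤ d * k := by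
              have h2 : x.2 + 1 ≤ k := hx.2
              calc d + d * x.2 = d * (x.2 + 1) := by ring
                _ ≤ d * k := Nat.mul_le_mul_left d h2
      · intro t ht
        rw [Finset.mem_range] at ht
        rw [Finset.mem_product, Finset.mem_range, Finset.mem_range]
        exact ⟨Nat.mod_lt _ hd, Nat.div_lt_of_lt_mul ht⟩
      · intro x hx
        rw [Finset.mem_product, Finset.mem_range, Finset.mem_range] at hx
        have h1 : (x.1 + d * x.2) % d = x.1 := by
          rw [Nat.add_mul_mod_self_left, Nat.mod_eq_of_lt hx.1]
        have h2 : (x.1 + d * x.2) / d = x.2 := by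
          rw [Nat.add_mul_div_left _ _ hd, Nat.div_eq_of_lt hx.1, zero_add]
        show ((x.1 + d * x.2) % d, (x.1 + d * x.2) / d) = x
        rw [h1, h2]
      · intro t _
        show t % d + d * (t / d) = t
        exact Nat.mod_add_div t d
      · intro x _; rfl
    rw [hbij]
    rw [Finset.sum_product]
    have hcon : ∀ s ∈ Finset.range d, ∀ j ∈ Finset.range k, F (s + d * j) = F s := by
      intro s _ j _
      simp only [hF]
      rw [eta_period_mul η hη hg hdk]
    calc ∑ s ∈ Finset.range d, ∑ j ∈ Finset.range k, F (s + d * j)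
        = ∑ s ∈ Finset.range d, ∑ j ∈ Finset.range k, F s :=
          Finset.sum_congr rfl fun s hs => Finset.sum_congr rfl fun j hj => hcon s hs j hj
      _ = (k : ℂ) * ∑ s ∈ Finset.range d, F s := by
          simp only [Finset.sum_const, Finset.card_range, nsmul_eq_mul]
          rw [← Finset.mul_sum]
  have step2 : ∀ t, F t = ∑ q ∈ QI, psi p (((g ^ t : (ZMod p)ˣ) : ZMod p) * w q) := by
    intro t
    have hA : ∀ i, ((g ^ (d * i + t) : (ZMod p)ˣ) : ZMod p)
        = B i * ((g ^ t : (ZMod p)ˣ) : ZMod p) := by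
      intro i; rw [pow_add, Units.val_mul]
    have hη1 : η t = ∑ j ∈ Finset.range k, psi p (B j * ((g ^ t : (ZMod p)ˣ) : ZMod p)) := by
      rw [eta_psi η hη]
      exact Finset.sum_congr rfl fun j _ => by rw [hA]
    have hη2 : (starRingEnd ℂ) (η t)
        = ∑ j ∈ Finset.range k, psi p (-(B j * ((g ^ t : (ZMod p)ˣ) : ZMod p))) := by
      rw [hη1, map_sum]
      exact Finset.sum_congr rfl fun j _ => psi_conj _
    set gt : ZMod p := ((g ^ t : (ZMod p)ˣ) : ZMod p) with hgt
    have hprod : η t * (starRingEnd ℂ) (η t)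
        = ∑ pr ∈ Finset.range k ×ˢ Finset.range k, psi p (B pr.1 * gt - B pr.2 * gt) := by
      rw [hη2, hη1, Finset.sum_mul_sum, ← Finset.sum_product']
      refine Finset.sum_congr rfl fun pr _ => ?_
      rw [← AddChar.map_add_eq_mul, sub_eq_add_neg]
    show (η t * (starRingEnd ℂ) (η t)) ^ 2 = _
    have hRHS : ∑ q ∈ QI, psi p (gt * w q)
        = ∑ p1 ∈ Finset.range k ×ˢ Finset.range k, ∑ p2 ∈ Finset.range k ×ˢ Finset.range k,
            psi p (gt * w (p1, p2)) := by
      rw [hQI, Finset.sum_product]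
    rw [hprod, sq, Finset.sum_mul_sum, hRHS]
    refine Finset.sum_congr rfl fun p1 _ => Finset.sum_congr rfl fun p2 _ => ?_
    rw [← AddChar.map_add_eq_mul]
    congr 1
    simp only [hw]
    ring
  have step34 : ∑ t ∈ Finset.range (p - 1), F t
      = (p : ℂ) * (Nquad p d k g : ℂ) - (k : ℂ) ^ 4 := by
    have hswap : ∑ t ∈ Finset.range (p - 1), F t
        = ∑ q ∈ QI, ∑ t ∈ Finset.range (p - 1), psi p (((g ^ t : (ZMod p)ˣ) : ZMod p) * w q) := by
      rw [Finset.sum_congr rfl fun t _ => step2 t, Finset.sum_comm]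
    rw [hswap]
    have hinner : ∀ q ∈ QI, ∑ t ∈ Finset.range (p - 1),
        psi p (((g ^ t : (ZMod p)ˣ) : ZMod p) * w q)
        = (if w q = 0 then (p : ℂ) else 0) - 1 := by
      intro q _
      exact sum_pow_g hg hp3 (w q)
    rw [Finset.sum_congr rfl hinner, Finset.sum_sub_distrib, Finset.sum_ite, Finset.sum_const,
      Finset.sum_const_zero, Finset.sum_const, add_zero]
    have hcard : QI.card = k ^ 4 := by
      rw [hQI]
      simp only [Finset.card_product, Finset.card_range]
      ring
    have hfilt : (QI.filter fun q => w q = 0).card = Nquad p d k g := by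
      rw [Nquad]
      congr 1
      apply Finset.filter_congr
      intro q _
      simp only [hw, hB]
      constructor
      · intro h; linear_combination h
      · intro h; linear_combination h
    rw [hcard, hfilt]
    simp only [nsmul_eq_mul]
    push_cast
    ring
  have hp1 : p - 1 = d * k := hdk
  rw [← step1, ← hp1, step34]

end analytic

section quad

variable {p d k : ℕ} [Fact p.Prime] {g : (ZMod p)ˣ}

lemma r2_eq_rfun (q : (ZMod p)ˣ) (x : ZMod p) :
    (((circS p q k ×ˢ circS p q k).filter fun be => be.1 + be.2 = x)).card
      = rfun p q k x := by
  classical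
  rw [rfun]
  apply Finset.card_nbij' (fun be => be.1) (fun b => (b, x - b))
  · rintro ⟨b, e⟩ hbe
    rw [Finset.mem_coe, Finset.mem_filter, Finset.mem_product] at hbe
    rw [Finset.mem_coe, Finset.mem_filter]
    refine ⟨hbe.1.1, ?_⟩
    have h : x - b = e := by rw [← hbe.2]; ring
    rw [h]; exact hbe.1.2
  · intro b hb
    rw [Finset.mem_coe, Finset.mem_filter] at hb
    rw [Finset.mem_coe, Finset.mem_filter, Finset.mem_product]
    exact ⟨⟨hb.1, hb.2⟩, by ring⟩
  · rintro ⟨b, e⟩ hbe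
    rw [Finset.mem_coe, Finset.mem_filter] at hbe
    have h : x - b = e := by rw [← hbe.2]; ring
    simp [h]
  · intro b hb; rfl

lemma B_injOn (hq : orderOf (g ^ d) = k) :
    ∀ i < k, ∀ j < k, ((g ^ (d * i) : (ZMod p)ˣ) : ZMod p) = ((g ^ (d * j) : (ZMod p)ˣ) : ZMod p)
      → i = j := by
  intro i hi j hj h
  have h' : (g ^ d) ^ i = (g ^ d) ^ j := Units.ext (by
    rw [← pow_mul, ← pow_mul] at *
    simpa [mul_comm] using h)
  exact pow_injOn_Iio_orderOf (by simpa [hq] using hi) (by simpa [hq] using hj) h'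

lemma B_mem (i : ℕ) (hi : i < k) :
    ((g ^ (d * i) : (ZMod p)ˣ) : ZMod p) ∈ circS p (g ^ d) k := by
  rw [mem_circS_iff]
  exact ⟨i, hi, by rw [← pow_mul, mul_comm]⟩

lemma circS_mem_B {x : ZMod p} (hx : x ∈ circS p (g ^ d) k) :
    ∃ i < k, ((g ^ (d * i) : (ZMod p)ˣ) : ZMod p) = x := by
  rw [mem_circS_iff] at hx
  obtain ⟨j, hj, hjx⟩ := hx
  exact ⟨j, hj, by rw [← hjx, ← pow_mul, mul_comm]⟩

lemma Nquad_eq_cardP (hq : orderOf (g ^ d) = k) :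
    Nquad p d k g = ((((circS p (g^d) k) ×ˢ (circS p (g^d) k)) ×ˢ
        ((circS p (g^d) k) ×ˢ (circS p (g^d) k))).filter
          fun q => q.1.1 + q.1.2 = q.2.1 + q.2.2).card := by
  classical
  rw [Nquad]
  set B : ℕ → ZMod p := fun i => ((g ^ (d * i) : (ZMod p)ˣ) : ZMod p) with hB
  apply Finset.card_nbij (fun j => ((B j.1.1, B j.2.1), (B j.1.2, B j.2.2)))
  · rintro ⟨⟨j11, j12⟩, ⟨j21, j22⟩⟩ hj
    rw [Finset.mem_coe, Finset.mem_filter, Finset.mem_product] at hj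
    obtain ⟨⟨hj1, hj2⟩, hcond⟩ := hj
    rw [Finset.mem_product] at hj1 hj2
    rw [Finset.mem_range, Finset.mem_range] at hj1 hj2
    rw [Finset.mem_coe, Finset.mem_filter, Finset.mem_product]
    refine ⟨⟨?_, ?_⟩, hcond⟩
    · rw [Finset.mem_product]
      exact ⟨B_mem _ hj1.1, B_mem _ hj2.1⟩
    · rw [Finset.mem_product]
      exact ⟨B_mem _ hj1.2, B_mem _ hj2.2⟩
  · rintro ⟨⟨j11, j12⟩, ⟨j21, j22⟩⟩ hj ⟨⟨i11, i12⟩, ⟨i21, i22⟩⟩ hi heq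
    simp only [Finset.coe_filter, Set.mem_setOf_eq, Finset.mem_product, Finset.mem_range] at hj hi
    simp only [Prod.mk.injEq] at heq
    obtain ⟨⟨h1, h2⟩, ⟨h3, h4⟩⟩ := heq
    have e1 := B_injOn hq _ hj.1.1.1 _ hi.1.1.1 h1
    have e2 := B_injOn hq _ hj.1.2.1 _ hi.1.2.1 h2
    have e3 := B_injOn hq _ hj.1.1.2 _ hi.1.1.2 h3
    have e4 := B_injOn hq _ hj.1.2.2 _ hi.1.2.2 h4
    simp [e1, e2, e3, e4]
  · rintro ⟨⟨b1, b2⟩, ⟨e1, e2⟩⟩ hq'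
    simp only [Finset.coe_filter, Set.mem_setOf_eq, Finset.mem_product] at hq'
    obtain ⟨⟨⟨hb1, hb2⟩, he1, he2⟩, hcond⟩ := hq'
    obtain ⟨i11, hi11, rfl⟩ := circS_mem_B hb1
    obtain ⟨i21, hi21, rfl⟩ := circS_mem_B hb2
    obtain ⟨i12, hi12, rfl⟩ := circS_mem_B he1
    obtain ⟨i22, hi22, rfl⟩ := circS_mem_B he2
    refine ⟨((i11, i12), (i21, i22)), ?_, by simp only [hB]⟩
    simp only [Finset.coe_filter, Set.mem_setOf_eq, Finset.mem_product, Finset.mem_range]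
    exact ⟨⟨⟨hi11, hi12⟩, hi21, hi22⟩, hcond⟩

lemma cardP_eq_sum [NeZero p] (q : (ZMod p)ˣ) :
    (((((circS p q k) ×ˢ (circS p q k)) ×ˢ ((circS p q k) ×ˢ (circS p q k))).filter
        fun z => z.1.1 + z.1.2 = z.2.1 + z.2.2).card)
      = ∑ x : ZMod p, (rfun p q k x) ^ 2 := by
  classical
  set S2 := (circS p q k) ×ˢ (circS p q k) with hS2
  rw [Finset.card_eq_sum_card_fiberwise
    (f := fun z : (ZMod p × ZMod p) × (ZMod p × ZMod p) => z.1.1 + z.1.2)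
    (t := Finset.univ) (fun _ _ => Finset.mem_univ _)]
  apply Finset.sum_congr rfl
  intro x _
  have hff : ((S2 ×ˢ S2).filter fun z => z.1.1 + z.1.2 = z.2.1 + z.2.2).filter
      (fun z => z.1.1 + z.1.2 = x)
      = (S2 ×ˢ S2).filter fun z => (z.1.1 + z.1.2 = x) ∧ (z.2.1 + z.2.2 = x) := by
    rw [Finset.filter_filter]
    apply Finset.filter_congr
    intro z _
    constructor
    · rintro ⟨h1, h2⟩; exact ⟨h2, by rw [← h1, h2]⟩
    · rintro ⟨h1, h2⟩; exact ⟨by rw [h1, h2], h1⟩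
  have hfp := Finset.filter_product (s := S2) (t := S2)
    (fun y : ZMod p × ZMod p => y.1 + y.2 = x) (fun y : ZMod p × ZMod p => y.1 + y.2 = x)
  rw [hff, hfp, Finset.card_product, r2_eq_rfun, sq]

lemma Nquad_eq [NeZero p] (hq : orderOf (g ^ d) = k) :
    Nquad p d k g = ∑ x : ZMod p, (rfun p (g ^ d) k x) ^ 2 := by
  rw [Nquad_eq_cardP hq, cardP_eq_sum]

end quad

lemma abs4 (z : ℂ) :
    ((‖z‖ ^ 4 : ℝ) : ℂ) = (z * (starRingEnd ℂ) z) ^ 2 := by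
  rw [Complex.mul_conj, ← Complex.ofReal_pow]
  congr 1
  rw [← Complex.sq_norm]
  ring

end GPV4

/-- If `(p,k)` is a circular pair with `k` even, then `V₄(p) = 3p(k-1) − k³`;
if `k` is odd and both `(p,k)` and `(p,2k)` are circular, then `V₄(p) = p(2k-1) − k³`.
Here `Φ = ⟨g^d⟩` has order `k` and, when `k` is odd (so `d` is even), `⟨g^(d/2)⟩` has
order `2k`. -/
theorem gaussian_periods_V4_fixed_k (p d k : ℕ) (hp : p.Prime) (hodd : Odd p)
    (hk : 0 < k) (hdk : p - 1 = d * k)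
    (g : (ZMod p)ˣ) (hg : ∀ x : (ZMod p)ˣ, x ∈ Subgroup.zpowers g)
    (η : ℕ → ℂ)
    (hη : ∀ a : ℕ, η a = ∑ j ∈ Finset.range k,
      Complex.exp (2 * (Real.pi : ℂ) * Complex.I *
        (((g ^ (d * j + a) : (ZMod p)ˣ) : ZMod p).val : ℂ) / (p : ℂ))) :
    (Even k → IsCircular p (Subgroup.zpowers (g ^ d)) →
      ∑ s ∈ Finset.range d, ‖η s‖ ^ 4
        = 3 * (p : ℝ) * ((k : ℝ) - 1) - (k : ℝ) ^ 3) ∧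
    (Odd k → IsCircular p (Subgroup.zpowers (g ^ d)) →
      IsCircular p (Subgroup.zpowers (g ^ (d / 2))) →
      ∑ s ∈ Finset.range d, ‖η s‖ ^ 4
        = (p : ℝ) * (2 * (k : ℝ) - 1) - (k : ℝ) ^ 3) := by
  haveI : Fact p.Prime := ⟨hp⟩
  haveI : NeZero p := ⟨hp.ne_zero⟩
  have hp3 : 2 < p := GPV4.two_lt_p hodd
  have hq : orderOf (g ^ d) = k := GPV4.hqorder hg hp3 hdk
  have hmain := GPV4.analytic_main η hη hg hp3 hdk hk
  have hNq := GPV4.Nquad_eq hq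
  have habs : ((∑ s ∈ Finset.range d, ‖η s‖ ^ 4 : ℝ) : ℂ)
      = ∑ s ∈ Finset.range d, (η s * (starRingEnd ℂ) (η s)) ^ 2 := by
    push_cast
    exact Finset.sum_congr rfl fun s _ => by
      rw [← GPV4.abs4]
      push_cast
      ring
  have hk0 : (k : ℝ) ≠ 0 := by exact_mod_cast hk.ne'
  constructor
  · intro he hcirc
    have hNval := GPV4.Nval_even hq hk hodd hcirc he
    have hNc : (GPV4.Nquad p d k g : ℂ) = 3 * (k : ℂ) ^ 2 - 3 * k := by
      have h1 : ((GPV4.Nquad p d k g : ℤ) : ℂ) = ((3 * (k : ℤ) ^ 2 - 3 * k : ℤ) : ℂ) := by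
        rw [← hNval, hNq]
        push_cast
        ring
      exact_mod_cast h1
    have hC : ((k : ℝ) * ∑ s ∈ Finset.range d, ‖η s‖ ^ 4 : ℝ)
        = ((p : ℝ) * (3 * (k : ℝ) ^ 2 - 3 * k) - (k : ℝ) ^ 4 : ℝ) := by
      have h2 : (((k : ℝ) * ∑ s ∈ Finset.range d, ‖η s‖ ^ 4 : ℝ) : ℂ)
          = (((p : ℝ) * (3 * (k : ℝ) ^ 2 - 3 * k) - (k : ℝ) ^ 4 : ℝ) : ℂ) := by
        rw [Complex.ofReal_mul, habs]
        push_cast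
        rw [hmain, hNc]
      exact_mod_cast h2
    apply mul_left_cancel₀ hk0
    rw [hC]
    ring
  · intro ho hcirc _
    have hNval := GPV4.Nval_odd hq hk hodd hcirc ho
    have hNc : (GPV4.Nquad p d k g : ℂ) = 2 * (k : ℂ) ^ 2 - k := by
      have h1 : ((GPV4.Nquad p d k g : ℤ) : ℂ) = ((2 * (k : ℤ) ^ 2 - k : ℤ) : ℂ) := by
        rw [← hNval, hNq]
        push_cast
        ring
      exact_mod_cast h1
    have hC : ((k : ℝ) * ∑ s ∈ Finset.range d, ‖η s‖ ^ 4 : ℝ)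
        = ((p : ℝ) * (2 * (k : ℝ) ^ 2 - k) - (k : ℝ) ^ 4 : ℝ) := by
      have h2 : (((k : ℝ) * ∑ s ∈ Finset.range d, ‖η s‖ ^ 4 : ℝ) : ℂ)
          = (((p : ℝ) * (2 * (k : ℝ) ^ 2 - k) - (k : ℝ) ^ 4 : ℝ) : ℂ) := by
        rw [Complex.ofReal_mul, habs]
        push_cast
        rw [hmain, hNc]
      exact_mod_cast h2
    apply mul_left_cancel₀ hk0
    rw [hC]
    ring
end
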